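/- arXiv:1103.3281 — 4 statements merged into one kernel-verified Lean document; each statement's English description precedes it below -/
import Mathlib

section
/- The cavity equation at infinite activity: let G = (V,E) be a finite cavity-monotone network and for each t > 0 let x(t) be the unique globally attractive solution of the cavity equation x = tΓ_G(x). Then the coordinatewise limit x̄ := lim_{t→∞} x(t) exists in (0,∞]^{Ē} (the map t ↦ x(t) is coordinatewise nondecreasing), and x̄ is the smallest solution in (0,∞]^{Ē} of the equation x̄ = (Γ̄_G ∘ Γ_G)(x̄): it satisfies this equation, and every y ∈ (0,∞]^{Ē} with y = (Γ̄_G ∘ Γ_G)(y) satisfies x̄ ≤ y coordinatewise. -/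
open Finset Filter
open scoped Classical ENNReal

section LocalDefs

variable {V : Type*} [DecidableEq V]

/-- Generating polynomial `Z(w) = Σ_{S ⊆ A} ν(S) ∏_{k∈S} w_k` of a measure `ν`
on the subsets of the ground set `A`. -/
noncomputable def lZ (A : Finset V) (ν : Finset V → ℝ) (w : V → ℝ) : ℝ :=
  ∑ S ∈ A.powerset, ν S * ∏ k ∈ S, w k

/-- Gibbs--Boltzmann probability of the event `p` under external field `w`. -/
noncomputable def lProb (A : Finset V) (ν : Finset V → ℝ) (w : V → ℝ)
    (p : Finset V → Prop) : ℝ :=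
  (∑ S ∈ A.powerset.filter p, ν S * ∏ k ∈ S, w k) / lZ A ν w

/-- The energy `U_ν(w)`, i.e. the expected cardinality of the random subset. -/
noncomputable def lEnergy (A : Finset V) (ν : Finset V → ℝ) (w : V → ℝ) : ℝ :=
  (∑ S ∈ A.powerset, (S.card : ℝ) * ν S * ∏ k ∈ S, w k) / lZ A ν w

/-- `E^w_ν[|𝓕|·1_{e∈𝓕}]`. -/
noncomputable def lEnergyIn (A : Finset V) (ν : Finset V → ℝ) (e : V) (w : V → ℝ) : ℝ :=
  (∑ S ∈ A.powerset.filter (fun S => e ∈ S), (S.card : ℝ) * ν S * ∏ k ∈ S, w k) / lZ A ν w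

/-- The cavity ratio `Γ^e_ν(w') = Z^{/e}(w') / Z^{∖e}(w')`; it only depends on the
coordinates of `w` different from `e`. -/
noncomputable def lGamma (A : Finset V) (ν : Finset V → ℝ) (e : V) (w : V → ℝ) : ℝ :=
  (∑ S ∈ (A.erase e).powerset, ν (insert e S) * ∏ k ∈ S, w k) /
  (∑ S ∈ (A.erase e).powerset, ν S * ∏ k ∈ S, w k)

/-- Rayleigh property: pairwise negative correlation under every positive external field. -/
def lRayleigh (A : Finset V) (ν : Finset V → ℝ) : Prop :=
  ∀ w : V → ℝ, (∀ k ∈ A, 0 < w k) → ∀ e ∈ A, ∀ f ∈ A, e ≠ f →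
    lProb A ν w (fun S => e ∈ S ∧ f ∈ S) ≤
      lProb A ν w (fun S => e ∈ S) * lProb A ν w (fun S => f ∈ S)

/-- Size-increasing property: every ground element positively influences the total size. -/
def lSizeInc (A : Finset V) (ν : Finset V → ℝ) : Prop :=
  ∀ w : V → ℝ, (∀ k ∈ A, 0 < w k) → ∀ e ∈ A,
    lEnergy A ν w * lProb A ν w (fun S => e ∈ S) < lEnergyIn A ν e w

/-- Cavity-monotone: nonnegative, `ν(∅) > 0`, Rayleigh and size-increasing. -/
def lCavityMonotone (A : Finset V) (ν : Finset V → ℝ) : Prop :=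
  (∀ S ∈ A.powerset, 0 ≤ ν S) ∧ 0 < ν ∅ ∧ lRayleigh A ν ∧ lSizeInc A ν

end LocalDefs

namespace CavAux
open Topology
section Abstract

variable {V : Type*} [DecidableEq V]

lemma sum_split (s : Finset V) {f : V} (hf : f ∈ s) (g : Finset V → ℝ) (v : V → ℝ) :
    ∑ S ∈ s.powerset, g S * ∏ k ∈ S, v k
      = (∑ S ∈ (s.erase f).powerset, g S * ∏ k ∈ S, v k)
        + v f * ∑ S ∈ (s.erase f).powerset, g (insert f S) * ∏ k ∈ S, v k := by
  conv_lhs => rw [← Finset.insert_erase hf]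
  rw [Finset.sum_powerset_insert (Finset.notMem_erase f s)]
  congr 1
  rw [Finset.mul_sum]
  refine Finset.sum_congr rfl fun S hS => ?_
  have hfS : f ∉ S := fun h => Finset.notMem_erase f s (Finset.mem_powerset.1 hS h)
  rw [Finset.prod_insert hfS]; ring

lemma sum_powerset_filter_mem {s : Finset V} {a : V} (ha : a ∈ s)
    {p : Finset V → Prop} [DecidablePred p]
    {inst : DecidablePred (fun T : Finset V => a ∈ T ∧ p T)} (g : Finset V → ℝ) :
    ∑ T ∈ @Finset.filter _ _ inst s.powerset, g T
      = ∑ S ∈ (s.erase a).powerset.filter (fun S => p (insert a S)), g (insert a S) := by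
  refine Finset.sum_nbij' (fun T => T.erase a) (fun S => insert a S) ?_ ?_ ?_ ?_ ?_
  · intro T hT
    simp only [Finset.mem_filter, Finset.mem_powerset] at hT ⊢
    refine ⟨Finset.erase_subset_erase a hT.1, ?_⟩
    rw [Finset.insert_erase hT.2.1]; exact hT.2.2
  · intro S hS
    simp only [Finset.mem_filter, Finset.mem_powerset] at hS ⊢
    exact ⟨Finset.insert_subset ha ((hS.1).trans (Finset.erase_subset a s)),
      Finset.mem_insert_self a S, hS.2⟩
  · intro T hT
    simp only [Finset.mem_filter, Finset.mem_powerset] at hT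
    exact Finset.insert_erase hT.2.1
  · intro S hS
    simp only [Finset.mem_filter, Finset.mem_powerset] at hS
    exact Finset.erase_insert (fun h => Finset.notMem_erase a s (hS.1 h))
  · intro T hT
    simp only [Finset.mem_filter, Finset.mem_powerset] at hT
    rw [Finset.insert_erase hT.2.1]

lemma sum_powerset_filter_mem' {s : Finset V} {a : V} (ha : a ∈ s)
    {inst : DecidablePred (fun T : Finset V => a ∈ T)} (g : Finset V → ℝ) :
    ∑ T ∈ @Finset.filter _ _ inst s.powerset, g T
      = ∑ S ∈ (s.erase a).powerset, g (insert a S) := by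
  have h1 : @Finset.filter _ _ inst s.powerset
      = s.powerset.filter (fun T => a ∈ T ∧ True) := by
    refine Finset.filter_congr fun T _ => by simp
  rw [h1, sum_powerset_filter_mem ha g]
  apply Finset.sum_congr _ (fun _ _ => rfl)
  simp

noncomputable def nF (A : Finset V) (ν : Finset V → ℝ) (j : V) (w : V → ℝ) : ℝ :=
  ∑ S ∈ (A.erase j).powerset, ν (insert j S) * ∏ k ∈ S, w k

noncomputable def dF (A : Finset V) (ν : Finset V → ℝ) (j : V) (w : V → ℝ) : ℝ :=
  ∑ S ∈ (A.erase j).powerset, ν S * ∏ k ∈ S, w k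

variable {A : Finset V} {ν : Finset V → ℝ} {j : V} {w : V → ℝ}

lemma dF_pos (hnn : ∀ S ∈ A.powerset, 0 ≤ ν S) (h0 : 0 < ν ∅)
    (hw : ∀ k ∈ A.erase j, 0 ≤ w k) : 0 < dF A ν j w := by
  have h1 : ∀ S ∈ (A.erase j).powerset, 0 ≤ ν S * ∏ k ∈ S, w k := by
    intro S hS
    rw [Finset.mem_powerset] at hS
    refine mul_nonneg (hnn S (Finset.mem_powerset.2 (hS.trans (Finset.erase_subset j A)))) ?_
    exact Finset.prod_nonneg fun k hk => hw k (hS hk)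
  have h2 : ν ∅ * ∏ k ∈ (∅ : Finset V), w k ≤ dF A ν j w := by
    refine Finset.single_le_sum h1 ?_
    simp
  simp only [Finset.prod_empty, mul_one] at h2
  linarith

lemma nF_nonneg (hnn : ∀ S ∈ A.powerset, 0 ≤ ν S) (hj : j ∈ A)
    (hw : ∀ k ∈ A.erase j, 0 ≤ w k) : 0 ≤ nF A ν j w := by
  refine Finset.sum_nonneg fun S hS => ?_
  rw [Finset.mem_powerset] at hS
  refine mul_nonneg (hnn _ ?_) (Finset.prod_nonneg fun k hk => hw k (hS hk))
  rw [Finset.mem_powerset]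
  exact Finset.insert_subset hj (hS.trans (Finset.erase_subset j A))

lemma single_le_nF (hnn : ∀ S ∈ A.powerset, 0 ≤ ν S) (hj : j ∈ A)
    (hw : ∀ k ∈ A.erase j, 0 ≤ w k) : ν {j} ≤ nF A ν j w := by
  have h1 : ∀ S ∈ (A.erase j).powerset, 0 ≤ ν (insert j S) * ∏ k ∈ S, w k := by
    intro S hS
    rw [Finset.mem_powerset] at hS
    refine mul_nonneg (hnn _ ?_) (Finset.prod_nonneg fun k hk => hw k (hS hk))
    rw [Finset.mem_powerset]
    exact Finset.insert_subset hj (hS.trans (Finset.erase_subset j A))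
  have h2 : ν (insert j ∅) * ∏ k ∈ (∅ : Finset V), w k ≤ nF A ν j w := by
    refine Finset.single_le_sum h1 ?_
    simp
  simpa using h2

lemma nF_congr {w' : V → ℝ} (h : ∀ k ∈ A.erase j, w k = w' k) : nF A ν j w = nF A ν j w' := by
  refine Finset.sum_congr rfl fun S hS => ?_
  rw [Finset.mem_powerset] at hS
  rw [Finset.prod_congr rfl fun k hk => h k (hS hk)]

lemma dF_congr {w' : V → ℝ} (h : ∀ k ∈ A.erase j, w k = w' k) : dF A ν j w = dF A ν j w' := by
  refine Finset.sum_congr rfl fun S hS => ?_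
  rw [Finset.mem_powerset] at hS
  rw [Finset.prod_congr rfl fun k hk => h k (hS hk)]


variable {V : Type*} [DecidableEq V] {A : Finset V} {ν : Finset V → ℝ} {j : V} {w : V → ℝ}

lemma rayleigh_key_pos (hnn : ∀ S ∈ A.powerset, 0 ≤ ν S) (h0 : 0 < ν ∅)
    (hray : lRayleigh A ν) {f : V} (hj : j ∈ A) (hf : f ∈ A.erase j)
    (hw : ∀ k ∈ (A.erase j).erase f, 0 < w k) :
    (∑ S ∈ ((A.erase j).erase f).powerset, ν (insert j (insert f S)) * ∏ k ∈ S, w k) *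
      (∑ S ∈ ((A.erase j).erase f).powerset, ν S * ∏ k ∈ S, w k) ≤
    (∑ S ∈ ((A.erase j).erase f).powerset, ν (insert j S) * ∏ k ∈ S, w k) *
      (∑ S ∈ ((A.erase j).erase f).powerset, ν (insert f S) * ∏ k ∈ S, w k) := by
  classical
  set C : Finset V := (A.erase j).erase f with hC
  have hfA : f ∈ A := Finset.mem_of_mem_erase hf
  have hfj : f ≠ j := Finset.ne_of_mem_erase hf
  have hjf : j ≠ f := hfj.symm
  have hjC : j ∉ C := fun h => Finset.notMem_erase j (A.erase f)
    (Finset.erase_right_comm (a := j) (b := f) ▸ h)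
  have hfC : f ∉ C := Finset.notMem_erase f (A.erase j)
  set u : V → ℝ := fun k => if k = j ∨ k = f then 1 else w k with hu
  have hupos : ∀ k ∈ A, 0 < u k := by
    intro k hk
    by_cases h : k = j ∨ k = f
    · simp only [hu, if_pos h]; norm_num
    · push_neg at h
      simp only [hu, if_neg (by tauto : ¬(k = j ∨ k = f))]
      exact hw k (by simp [hC, Finset.mem_erase, h.1, h.2, hk])
  have huj : u j = 1 := by simp [hu]
  have huf : u f = 1 := by simp [hu]
  have hprodC : ∀ S ∈ C.powerset, ∏ k ∈ S, u k = ∏ k ∈ S, w k := by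
    intro S hS
    rw [Finset.mem_powerset] at hS
    refine Finset.prod_congr rfl fun k hk => ?_
    have hk' := hS hk
    have h1 : k ≠ j := fun h => hjC (h ▸ hk')
    have h2 : k ≠ f := fun h => hfC (h ▸ hk')
    simp [hu, h1, h2]
  -- the four coefficient sums
  set N0 : ℝ := ∑ S ∈ C.powerset, ν (insert j S) * ∏ k ∈ S, w k with hN0
  set N1 : ℝ := ∑ S ∈ C.powerset, ν (insert j (insert f S)) * ∏ k ∈ S, w k with hN1
  set D0 : ℝ := ∑ S ∈ C.powerset, ν S * ∏ k ∈ S, w k with hD0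
  set D1 : ℝ := ∑ S ∈ C.powerset, ν (insert f S) * ∏ k ∈ S, w k with hD1
  -- Z and its positivity
  have hZterm : ∀ T ∈ A.powerset, 0 ≤ ν T * ∏ k ∈ T, u k := by
    intro T hT
    rw [Finset.mem_powerset] at hT
    exact mul_nonneg (hnn T (Finset.mem_powerset.2 hT))
      (Finset.prod_nonneg fun k hk => (hupos k (hT hk)).le)
  have hZ : 0 < lZ A ν u := by
    have h2 : ν ∅ * ∏ k ∈ (∅ : Finset V), u k ≤ lZ A ν u := by
      refine Finset.single_le_sum hZterm ?_
      simp
    simp only [Finset.prod_empty, mul_one] at h2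
    linarith
  -- decompositions
  have hAej : f ∈ A.erase j := hf
  have hAef : j ∈ A.erase f := Finset.mem_erase.2 ⟨hjf, hj⟩
  have eSj : ∀ (inst : DecidablePred (fun T : Finset V => j ∈ T)),
      ∑ T ∈ @Finset.filter _ _ inst A.powerset, ν T * ∏ k ∈ T, u k = N0 + N1 := by
    intro inst
    rw [sum_powerset_filter_mem' hj]
    have e1 : ∀ S ∈ (A.erase j).powerset,
        ν (insert j S) * ∏ k ∈ insert j S, u k = ν (insert j S) * ∏ k ∈ S, u k := by
      intro S hS
      rw [Finset.mem_powerset] at hS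
      have : j ∉ S := fun h => Finset.notMem_erase j A (hS h)
      rw [Finset.prod_insert this, huj, one_mul]
    rw [Finset.sum_congr rfl e1, sum_split (A.erase j) hAej (fun S => ν (insert j S)) u, huf,
      one_mul, hN0, hN1]
    congr 1
    · exact Finset.sum_congr rfl fun S hS => by rw [hprodC S hS]
    · exact Finset.sum_congr rfl fun S hS => by rw [hprodC S hS]
  have eSf : ∀ (inst : DecidablePred (fun T : Finset V => f ∈ T)),
      ∑ T ∈ @Finset.filter _ _ inst A.powerset, ν T * ∏ k ∈ T, u k = D1 + N1 := by
    intro inst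
    rw [sum_powerset_filter_mem' hfA]
    have e1 : ∀ S ∈ (A.erase f).powerset,
        ν (insert f S) * ∏ k ∈ insert f S, u k = ν (insert f S) * ∏ k ∈ S, u k := by
      intro S hS
      rw [Finset.mem_powerset] at hS
      have : f ∉ S := fun h => Finset.notMem_erase f A (hS h)
      rw [Finset.prod_insert this, huf, one_mul]
    rw [Finset.sum_congr rfl e1, sum_split (A.erase f) hAef (fun S => ν (insert f S)) u, huj,
      one_mul]
    have hCE : (A.erase f).erase j = C := by rw [hC, Finset.erase_right_comm]
    rw [hCE, hD1, hN1]
    congr 1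
    · exact Finset.sum_congr rfl fun S hS => by rw [hprodC S hS]
    · refine Finset.sum_congr rfl fun S hS => by rw [Finset.insert_comm, hprodC S hS]
  have eSjf : ∀ (inst : DecidablePred (fun T : Finset V => j ∈ T ∧ f ∈ T)),
      ∑ T ∈ @Finset.filter _ _ inst A.powerset, ν T * ∏ k ∈ T, u k = N1 := by
    intro inst
    rw [sum_powerset_filter_mem hj (fun T => ν T * ∏ k ∈ T, u k)]
    have e0 : (A.erase j).powerset.filter (fun S => f ∈ insert j S)
        = (A.erase j).powerset.filter (fun S => f ∈ S) := by
      refine Finset.filter_congr fun S hS => ?_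
      simp [Finset.mem_insert, hfj]
    rw [e0, sum_powerset_filter_mem' hf]
    refine Finset.sum_congr rfl fun S hS => ?_
    rw [Finset.mem_powerset] at hS
    have hfS : f ∉ S := fun h => hfC (hS h)
    have hjS : j ∉ insert f S := by
      simp only [Finset.mem_insert]
      rintro (h | h)
      · exact hjf h
      · exact hjC (hS h)
    rw [Finset.prod_insert hjS, Finset.prod_insert hfS, huj, huf, one_mul, one_mul]
    rw [hprodC S (Finset.mem_powerset.2 hS)]
  have eZ : lZ A ν u = D0 + D1 + (N0 + N1) := by
    rw [lZ, sum_split A hj ν u, huj, one_mul]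
    congr 1
    · rw [sum_split (A.erase j) hAej ν u, huf, one_mul, hD0, hD1]
      congr 1
      · exact Finset.sum_congr rfl fun S hS => by rw [hprodC S hS]
      · exact Finset.sum_congr rfl fun S hS => by rw [hprodC S hS]
    · rw [sum_split (A.erase j) hAej (fun S => ν (insert j S)) u, huf, one_mul, hN0, hN1]
      congr 1
      · exact Finset.sum_congr rfl fun S hS => by rw [hprodC S hS]
      · exact Finset.sum_congr rfl fun S hS => by rw [hprodC S hS]
  have h1 := hray u hupos j hj f hfA hjf
  rw [lProb, lProb, lProb] at h1
  rw [eSjf _, eSj _, eSf _, eZ] at h1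
  have hZ' : (0:ℝ) < D0 + D1 + (N0 + N1) := by rw [eZ] at hZ; exact hZ
  rw [div_mul_div_comm, div_le_div_iff₀ hZ' (by positivity)] at h1
  nlinarith [h1, hZ']

lemma tendsto_coeff_sum (C : Finset V) (g : Finset V → ℝ) (w : V → ℝ) :
    Tendsto (fun n : ℕ => ∑ S ∈ C.powerset, g S * ∏ k ∈ S, (w k + (n + 1 : ℝ)⁻¹))
      atTop (𝓝 (∑ S ∈ C.powerset, g S * ∏ k ∈ S, w k)) := by
  refine tendsto_finset_sum _ fun S _ => ?_
  refine Tendsto.const_mul _ ?_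
  refine tendsto_finset_prod _ fun k _ => ?_
  have h1 : Tendsto (fun n : ℕ => ((n : ℝ) + 1)⁻¹) atTop (𝓝 0) :=
    tendsto_one_div_add_atTop_nhds_zero_nat.congr (by intro n; rw [one_div])
  simpa using tendsto_const_nhds.add h1

lemma rayleigh_key (hnn : ∀ S ∈ A.powerset, 0 ≤ ν S) (h0 : 0 < ν ∅)
    (hray : lRayleigh A ν) {f : V} (hj : j ∈ A) (hf : f ∈ A.erase j)
    (hw : ∀ k ∈ (A.erase j).erase f, 0 ≤ w k) :
    (∑ S ∈ ((A.erase j).erase f).powerset, ν (insert j (insert f S)) * ∏ k ∈ S, w k) *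
      (∑ S ∈ ((A.erase j).erase f).powerset, ν S * ∏ k ∈ S, w k) ≤
    (∑ S ∈ ((A.erase j).erase f).powerset, ν (insert j S) * ∏ k ∈ S, w k) *
      (∑ S ∈ ((A.erase j).erase f).powerset, ν (insert f S) * ∏ k ∈ S, w k) := by
  set C : Finset V := (A.erase j).erase f with hC
  have hstep : ∀ n : ℕ,
      (∑ S ∈ C.powerset, ν (insert j (insert f S)) * ∏ k ∈ S, (w k + (n + 1 : ℝ)⁻¹)) *
        (∑ S ∈ C.powerset, ν S * ∏ k ∈ S, (w k + (n + 1 : ℝ)⁻¹)) ≤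
      (∑ S ∈ C.powerset, ν (insert j S) * ∏ k ∈ S, (w k + (n + 1 : ℝ)⁻¹)) *
        (∑ S ∈ C.powerset, ν (insert f S) * ∏ k ∈ S, (w k + (n + 1 : ℝ)⁻¹)) := by
    intro n
    refine rayleigh_key_pos hnn h0 hray hj hf ?_
    intro k hk
    have : (0:ℝ) < (n + 1 : ℝ)⁻¹ := by positivity
    have := hw k hk
    linarith
  exact le_of_tendsto_of_tendsto'
    ((tendsto_coeff_sum C _ w).mul (tendsto_coeff_sum C _ w))
    ((tendsto_coeff_sum C _ w).mul (tendsto_coeff_sum C _ w)) hstep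

lemma ratio_antitone_single (hnn : ∀ S ∈ A.powerset, 0 ≤ ν S) (h0 : 0 < ν ∅)
    (hray : lRayleigh A ν) {f : V} (hj : j ∈ A) (hf : f ∈ A.erase j)
    (hw : ∀ k ∈ A.erase j, 0 ≤ w k) {c : ℝ} (hc : w f ≤ c) :
    nF A ν j (Function.update w f c) / dF A ν j (Function.update w f c)
      ≤ nF A ν j w / dF A ν j w := by
  set C : Finset V := (A.erase j).erase f with hC
  have hfC : f ∉ C := Finset.notMem_erase f (A.erase j)
  have hwC : ∀ k ∈ C, 0 ≤ w k := fun k hk => hw k (Finset.mem_of_mem_erase hk)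
  have hcnn : 0 ≤ c := le_trans (hw f hf) hc
  -- identify the coefficient sums
  set N0 : ℝ := ∑ S ∈ C.powerset, ν (insert j S) * ∏ k ∈ S, w k with hN0
  set N1 : ℝ := ∑ S ∈ C.powerset, ν (insert j (insert f S)) * ∏ k ∈ S, w k with hN1
  set D0 : ℝ := ∑ S ∈ C.powerset, ν S * ∏ k ∈ S, w k with hD0
  set D1 : ℝ := ∑ S ∈ C.powerset, ν (insert f S) * ∏ k ∈ S, w k with hD1
  have hprodC : ∀ (v : V → ℝ), (∀ k ∈ A.erase j, v k = w k ∨ k = f) → ∀ S ∈ C.powerset,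
      ∏ k ∈ S, v k = ∏ k ∈ S, w k := by
    intro v hv S hS
    rw [Finset.mem_powerset] at hS
    refine Finset.prod_congr rfl fun k hk => ?_
    have hk' := hS hk
    rcases hv k (Finset.mem_of_mem_erase hk') with h | h
    · exact h
    · exact absurd (h ▸ hk') hfC
  have split : ∀ (v : V → ℝ), (∀ k ∈ A.erase j, k ≠ f → v k = w k) →
      nF A ν j v = N0 + v f * N1 ∧ dF A ν j v = D0 + v f * D1 := by
    intro v hv
    have hv' : ∀ S ∈ C.powerset, ∏ k ∈ S, v k = ∏ k ∈ S, w k := by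
      intro S hS
      rw [Finset.mem_powerset] at hS
      refine Finset.prod_congr rfl fun k hk => ?_
      have hk' := hS hk
      exact hv k (Finset.mem_of_mem_erase hk') (fun h => hfC (h ▸ hk'))
    constructor
    · rw [nF, sum_split (A.erase j) hf (fun S => ν (insert j S)) v, hN0, hN1]
      congr 1
      · exact Finset.sum_congr rfl fun S hS => by rw [hv' S hS]
      · congr 1; exact Finset.sum_congr rfl fun S hS => by rw [hv' S hS]
    · rw [dF, sum_split (A.erase j) hf ν v, hD0, hD1]
      congr 1
      · exact Finset.sum_congr rfl fun S hS => by rw [hv' S hS]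
      · congr 1; exact Finset.sum_congr rfl fun S hS => by rw [hv' S hS]
  obtain ⟨en, ed⟩ := split (Function.update w f c) (fun k _ hk => Function.update_of_ne hk c w)
  obtain ⟨en', ed'⟩ := split w (fun _ _ _ => rfl)
  rw [en, ed, en', ed', Function.update_self]
  -- positivity of denominators
  have hDnn : ∀ S ∈ C.powerset, 0 ≤ ν S * ∏ k ∈ S, w k := by
    intro S hS
    rw [Finset.mem_powerset] at hS
    refine mul_nonneg (hnn S (Finset.mem_powerset.2 ((hS.trans (Finset.erase_subset f _)).trans
      (Finset.erase_subset j A)))) (Finset.prod_nonneg fun k hk => hwC k (hS hk))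
  have hD0pos : 0 < D0 := by
    have h2 : ν ∅ * ∏ k ∈ (∅ : Finset V), w k ≤ D0 := Finset.single_le_sum hDnn (by simp)
    simp only [Finset.prod_empty, mul_one] at h2
    linarith
  have hD1nn : 0 ≤ D1 := by
    refine Finset.sum_nonneg fun S hS => ?_
    rw [Finset.mem_powerset] at hS
    refine mul_nonneg (hnn _ ?_) (Finset.prod_nonneg fun k hk => hwC k (hS hk))
    rw [Finset.mem_powerset]
    exact Finset.insert_subset (Finset.mem_of_mem_erase hf)
      ((hS.trans (Finset.erase_subset f _)).trans (Finset.erase_subset j A))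
  have hKI : N1 * D0 ≤ N0 * D1 := rayleigh_key hnn h0 hray hj hf hwC
  have hd1 : 0 < D0 + c * D1 := by nlinarith
  have hd2 : 0 < D0 + w f * D1 := by nlinarith [hw f hf]
  rw [div_le_div_iff₀ hd1 hd2]
  nlinarith [mul_le_mul_of_nonneg_left hKI (sub_nonneg.2 hc)]

lemma ratio_antitone (hnn : ∀ S ∈ A.powerset, 0 ≤ ν S) (h0 : 0 < ν ∅)
    (hray : lRayleigh A ν) (hj : j ∈ A) {w' : V → ℝ}
    (hw : ∀ k ∈ A.erase j, 0 ≤ w k) (hle : ∀ k ∈ A.erase j, w k ≤ w' k) :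
    nF A ν j w' / dF A ν j w' ≤ nF A ν j w / dF A ν j w := by
  classical
  have key : ∀ s : Finset V, ∀ v v' : V → ℝ, (∀ k ∈ A.erase j, 0 ≤ v k) →
      (∀ k ∈ A.erase j, v k ≤ v' k) → (∀ k ∈ A.erase j, k ∉ s → v' k = v k) →
      nF A ν j v' / dF A ν j v' ≤ nF A ν j v / dF A ν j v := by
    intro s
    induction s using Finset.induction_on with
    | empty =>
      intro v v' hv hle' hoff
      have h1 : ∀ k ∈ A.erase j, v k = v' k := fun k hk => (hoff k hk (by simp)).symm
      rw [nF_congr h1, dF_congr h1]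
    | @insert f s hf ih =>
      intro v v' hv hle' hoff
      by_cases hfA : f ∈ A.erase j
      · set mid : V → ℝ := Function.update v' f (v f) with hmid
        have hmid_eq : ∀ k ∈ A.erase j, k ∉ s → mid k = v k := by
          intro k hk hks
          by_cases hkf : k = f
          · rw [hkf, hmid, Function.update_self]
          · rw [hmid, Function.update_of_ne hkf]
            exact hoff k hk (by simp [hkf, hks])
        have hmid_le : ∀ k ∈ A.erase j, v k ≤ mid k := by
          intro k hk
          by_cases hkf : k = f
          · rw [hkf, hmid, Function.update_self]
          · rw [hmid, Function.update_of_ne hkf]; exact hle' k hk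
        have h1 : nF A ν j mid / dF A ν j mid ≤ nF A ν j v / dF A ν j v :=
          ih v mid hv hmid_le hmid_eq
        have hmidw : ∀ k ∈ A.erase j, 0 ≤ mid k := fun k hk =>
          le_trans (hv k hk) (hmid_le k hk)
        have h2 : nF A ν j v' / dF A ν j v' ≤ nF A ν j mid / dF A ν j mid := by
          have hv'eq : v' = Function.update mid f (v' f) := by
            funext k
            by_cases hkf : k = f
            · rw [hkf, Function.update_self]
            · rw [Function.update_of_ne hkf, hmid, Function.update_of_ne hkf]
          rw [hv'eq]
          refine ratio_antitone_single hnn h0 hray hj hfA hmidw ?_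
          rw [hmid, Function.update_self]
          exact hle' f hfA
        exact h2.trans h1
      · refine ih v v' hv hle' ?_
        intro k hk hks
        refine hoff k hk ?_
        simp only [Finset.mem_insert]
        rintro (h | h)
        · exact hfA (h ▸ hk)
        · exact hks h
  exact key (A.erase j) w w' hw hle (fun k hk hk' => absurd hk hk')

lemma sizeinc_key_pos (hnn : ∀ S ∈ A.powerset, 0 ≤ ν S) (h0 : 0 < ν ∅)
    (hsi : lSizeInc A ν) (hj : j ∈ A) {u : ℝ} (hu : 0 < u)
    (hw : ∀ k ∈ A.erase j, 0 < w k) :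
    (∑ S ∈ (A.erase j).powerset, ((S.card : ℝ) * ν S * u ^ (S.card - 1)) * ∏ k ∈ S, w k) *
      (∑ S ∈ (A.erase j).powerset, (ν (insert j S) * u ^ (S.card + 1)) * ∏ k ∈ S, w k) ≤
    (∑ S ∈ (A.erase j).powerset, (((S.card : ℝ) + 1) * ν (insert j S) * u ^ S.card) * ∏ k ∈ S, w k) *
      (∑ S ∈ (A.erase j).powerset, (ν S * u ^ S.card) * ∏ k ∈ S, w k) := by
  classical
  set B : Finset V := A.erase j with hB
  set v : V → ℝ := fun k => if k = j then u else u * w k with hv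
  have hjB : j ∉ B := Finset.notMem_erase j A
  have hvpos : ∀ k ∈ A, 0 < v k := by
    intro k hk
    by_cases h : k = j
    · simp [hv, h, hu]
    · simp only [hv, if_neg h]
      exact mul_pos hu (hw k (Finset.mem_erase.2 ⟨h, hk⟩))
  have hQ : ∀ S ∈ B.powerset, ∏ k ∈ S, v k = u ^ S.card * ∏ k ∈ S, w k := by
    intro S hS
    rw [Finset.mem_powerset] at hS
    have h1 : ∏ k ∈ S, v k = ∏ k ∈ S, (u * w k) := by
      refine Finset.prod_congr rfl fun k hk => ?_
      have : k ≠ j := fun h => hjB (h ▸ hS hk)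
      simp [hv, this]
    rw [h1, Finset.prod_mul_distrib, Finset.prod_const]
  -- abbreviations for the four coefficient sums
  set Dd : ℝ := ∑ S ∈ B.powerset, ((S.card : ℝ) * ν S * u ^ (S.card - 1)) * ∏ k ∈ S, w k with hDd
  set Nf : ℝ := ∑ S ∈ B.powerset, (ν (insert j S) * u ^ (S.card + 1)) * ∏ k ∈ S, w k with hNf
  set Np : ℝ := ∑ S ∈ B.powerset, (((S.card : ℝ) + 1) * ν (insert j S) * u ^ S.card) * ∏ k ∈ S, w k with hNp
  set Df : ℝ := ∑ S ∈ B.powerset, (ν S * u ^ S.card) * ∏ k ∈ S, w k with hDf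
  have hpow : ∀ n : ℕ, (n : ℝ) * u ^ n = u * ((n : ℝ) * u ^ (n - 1)) := by
    intro n
    cases n with
    | zero => simp
    | succ m => rw [Nat.add_sub_cancel, pow_succ]; push_cast; ring
  -- Z and positivity
  have hvTnn : ∀ T ∈ A.powerset, 0 ≤ ∏ k ∈ T, v k := by
    intro T hT
    rw [Finset.mem_powerset] at hT
    exact Finset.prod_nonneg fun k hk => (hvpos k (hT hk)).le
  have hZ : 0 < lZ A ν v := by
    have h2 : ν ∅ * ∏ k ∈ (∅ : Finset V), v k ≤ lZ A ν v := by
      refine Finset.single_le_sum (fun T hT => mul_nonneg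
        (hnn T hT) (hvTnn T hT)) ?_
      simp
    simp only [Finset.prod_empty, mul_one] at h2
    linarith
  -- decompositions
  have eZ : lZ A ν v = Df + Nf := by
    rw [lZ, sum_split A hj ν v]
    have hvj : v j = u := by simp [hv]
    congr 1
    · refine Finset.sum_congr rfl fun S hS => ?_
      rw [hQ S hS]; ring
    · rw [hvj, Finset.mul_sum, hNf]
      refine Finset.sum_congr rfl fun S hS => ?_
      rw [hQ S hS, pow_succ]; ring
  have eSU : (∑ T ∈ A.powerset, (T.card : ℝ) * ν T * ∏ k ∈ T, v k) = u * Dd + u * Np := by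
    have e1 := sum_split A hj (fun T => (T.card : ℝ) * ν T) v
    rw [e1]
    have hvj : v j = u := by simp [hv]
    congr 1
    · rw [hDd, Finset.mul_sum]
      refine Finset.sum_congr rfl fun S hS => ?_
      rw [hQ S hS]
      linear_combination (ν S * ∏ k ∈ S, w k) * hpow S.card
    · rw [hvj, hNp, Finset.mul_sum, Finset.mul_sum]
      refine Finset.sum_congr rfl fun S hS => ?_
      have hjS : j ∉ S := fun h => hjB (Finset.mem_powerset.1 hS h)
      rw [hQ S hS, Finset.card_insert_of_notMem hjS]
      push_cast
      ring
  have eSj : ∀ (inst : DecidablePred (fun T : Finset V => j ∈ T)),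
      ∑ T ∈ @Finset.filter _ _ inst A.powerset, ν T * ∏ k ∈ T, v k = Nf := by
    intro inst
    rw [sum_powerset_filter_mem' hj, hNf]
    refine Finset.sum_congr rfl fun S hS => ?_
    have hjS : j ∉ S := fun h => hjB (Finset.mem_powerset.1 hS h)
    rw [Finset.prod_insert hjS, hQ S hS]
    have hvj : v j = u := by simp [hv]
    rw [hvj, pow_succ]; ring
  have eSUj : ∀ (inst : DecidablePred (fun T : Finset V => j ∈ T)),
      ∑ T ∈ @Finset.filter _ _ inst A.powerset, (T.card : ℝ) * ν T * ∏ k ∈ T, v k = u * Np := by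
    intro inst
    rw [sum_powerset_filter_mem' hj, hNp, Finset.mul_sum]
    refine Finset.sum_congr rfl fun S hS => ?_
    have hjS : j ∉ S := fun h => hjB (Finset.mem_powerset.1 hS h)
    rw [Finset.prod_insert hjS, hQ S hS, Finset.card_insert_of_notMem hjS]
    have hvj : v j = u := by simp [hv]
    rw [hvj]
    push_cast
    ring
  have h1 := hsi v hvpos j hj
  rw [lEnergy, lProb, lEnergyIn, eSj _, eSUj _, eSU, eZ] at h1
  have hZ' : (0:ℝ) < Df + Nf := by rw [eZ] at hZ; exact hZ
  rw [div_mul_div_comm, div_lt_div_iff₀ (by positivity) hZ'] at h1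
  have h2 : ((u * Dd + u * Np) * Nf) * (Df + Nf) < (u * Np * (Df + Nf)) * (Df + Nf) := by
    calc ((u * Dd + u * Np) * Nf) * (Df + Nf)
        = (u * Dd + u * Np) * Nf * (Df + Nf) := by ring
      _ < u * Np * ((Df + Nf) * (Df + Nf)) := h1
      _ = (u * Np * (Df + Nf)) * (Df + Nf) := by ring
  have h3 := lt_of_mul_lt_mul_right h2 hZ'.le
  have h4 : u * (Dd * Nf) < u * (Np * Df) := by nlinarith [h3]
  exact le_of_lt (lt_of_mul_lt_mul_left h4 hu.le)

lemma sizeinc_key (hnn : ∀ S ∈ A.powerset, 0 ≤ ν S) (h0 : 0 < ν ∅)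
    (hsi : lSizeInc A ν) (hj : j ∈ A) {u : ℝ} (hu : 0 < u)
    (hw : ∀ k ∈ A.erase j, 0 ≤ w k) :
    (∑ S ∈ (A.erase j).powerset, ((S.card : ℝ) * ν S * u ^ (S.card - 1)) * ∏ k ∈ S, w k) *
      (∑ S ∈ (A.erase j).powerset, (ν (insert j S) * u ^ (S.card + 1)) * ∏ k ∈ S, w k) ≤
    (∑ S ∈ (A.erase j).powerset, (((S.card : ℝ) + 1) * ν (insert j S) * u ^ S.card) * ∏ k ∈ S, w k) *
      (∑ S ∈ (A.erase j).powerset, (ν S * u ^ S.card) * ∏ k ∈ S, w k) := by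
  have hstep : ∀ n : ℕ,
      (∑ S ∈ (A.erase j).powerset, ((S.card : ℝ) * ν S * u ^ (S.card - 1)) * ∏ k ∈ S, (w k + (n + 1 : ℝ)⁻¹)) *
        (∑ S ∈ (A.erase j).powerset, (ν (insert j S) * u ^ (S.card + 1)) * ∏ k ∈ S, (w k + (n + 1 : ℝ)⁻¹)) ≤
      (∑ S ∈ (A.erase j).powerset, (((S.card : ℝ) + 1) * ν (insert j S) * u ^ S.card) * ∏ k ∈ S, (w k + (n + 1 : ℝ)⁻¹)) *
        (∑ S ∈ (A.erase j).powerset, (ν S * u ^ S.card) * ∏ k ∈ S, (w k + (n + 1 : ℝ)⁻¹)) := by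
    intro n
    refine sizeinc_key_pos hnn h0 hsi hj hu ?_
    intro k hk
    have h1 : (0:ℝ) < (n + 1 : ℝ)⁻¹ := by positivity
    have := hw k hk
    linarith
  exact le_of_tendsto_of_tendsto'
    ((tendsto_coeff_sum _ _ w).mul (tendsto_coeff_sum _ _ w))
    ((tendsto_coeff_sum _ _ w).mul (tendsto_coeff_sum _ _ w)) hstep

lemma ratio_scaled_mono (hnn : ∀ S ∈ A.powerset, 0 ≤ ν S) (h0 : 0 < ν ∅)
    (hsi : lSizeInc A ν) (hj : j ∈ A) (hw : ∀ k ∈ A.erase j, 0 ≤ w k)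
    {s t : ℝ} (hs : 0 < s) (hst : s ≤ t) :
    s * (nF A ν j (fun k => s * w k) / dF A ν j (fun k => s * w k))
      ≤ t * (nF A ν j (fun k => t * w k) / dF A ν j (fun k => t * w k)) := by
  classical
  set B : Finset V := A.erase j with hB
  set P : Finset V → ℝ := fun S => ∏ k ∈ S, w k with hP
  set Nf : ℝ → ℝ := fun u => ∑ S ∈ B.powerset, (ν (insert j S) * P S) * u ^ (S.card + 1) with hNf
  set Df : ℝ → ℝ := fun u => ∑ S ∈ B.powerset, (ν S * P S) * u ^ S.card with hDf
  have identify : ∀ u : ℝ,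
      u * (nF A ν j (fun k => u * w k) / dF A ν j (fun k => u * w k)) = Nf u / Df u := by
    intro u
    have hn : u * nF A ν j (fun k => u * w k) = Nf u := by
      rw [nF, Finset.mul_sum, hNf]
      refine Finset.sum_congr rfl fun S hS => ?_
      rw [Finset.prod_mul_distrib, Finset.prod_const, pow_succ, hP]
      ring
    have hd : dF A ν j (fun k => u * w k) = Df u := by
      rw [dF, hDf]
      refine Finset.sum_congr rfl fun S hS => ?_
      rw [Finset.prod_mul_distrib, Finset.prod_const, hP]
      ring
    rw [← mul_div_assoc, hn, hd]
  rw [identify s, identify t]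
  have hPnn : ∀ S ∈ B.powerset, 0 ≤ P S := by
    intro S hS
    rw [Finset.mem_powerset] at hS
    exact Finset.prod_nonneg fun k hk => hw k (hS hk)
  have hDfpos : ∀ u : ℝ, 0 ≤ u → 0 < Df u := by
    intro u hu
    have hterm : ∀ S ∈ B.powerset, 0 ≤ (ν S * P S) * u ^ S.card := by
      intro S hS
      refine mul_nonneg (mul_nonneg (hnn S ?_) (hPnn S hS)) (pow_nonneg hu _)
      rw [Finset.mem_powerset] at hS ⊢
      exact hS.trans (Finset.erase_subset j A)
    have h2 : (ν ∅ * P ∅) * u ^ (∅ : Finset V).card ≤ Df u :=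
      Finset.single_le_sum hterm (by simp)
    simp only [hP, Finset.prod_empty, mul_one, Finset.card_empty, pow_zero] at h2
    linarith
  set Np : ℝ → ℝ := fun u => ∑ S ∈ B.powerset,
    (((S.card : ℝ) + 1) * ν (insert j S) * u ^ S.card) * P S with hNp
  set Dd : ℝ → ℝ := fun u => ∑ S ∈ B.powerset,
    ((S.card : ℝ) * ν S * u ^ (S.card - 1)) * P S with hDd
  have hNderiv : ∀ u : ℝ, HasDerivAt Nf (Np u) u := by
    intro u
    refine HasDerivAt.fun_sum fun S hS => ?_
    have h := (hasDerivAt_pow (S.card + 1) u).const_mul (ν (insert j S) * P S)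
    convert h using 1
    any_goals rfl
    rw [Nat.add_sub_cancel]
    push_cast
    ring
  have hDderiv : ∀ u : ℝ, HasDerivAt Df (Dd u) u := by
    intro u
    refine HasDerivAt.fun_sum fun S hS => ?_
    have h := (hasDerivAt_pow S.card u).const_mul (ν S * P S)
    convert h using 1
    any_goals rfl
    ring
  have hQderiv : ∀ u : ℝ, 0 < u →
      HasDerivAt (fun x => Nf x / Df x) ((Np u * Df u - Nf u * Dd u) / (Df u) ^ 2) u :=
    fun u hu => (hNderiv u).div (hDderiv u) (ne_of_gt (hDfpos u hu.le))
  have hkey : ∀ u : ℝ, 0 < u → 0 ≤ (Np u * Df u - Nf u * Dd u) / (Df u) ^ 2 := by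
    intro u hu
    refine div_nonneg (sub_nonneg.2 ?_) (sq_nonneg _)
    have h := sizeinc_key hnn h0 hsi hj hu hw
    have e1 : ∀ (gp : ℝ → Finset V → ℝ),
        (∑ S ∈ B.powerset, gp u S * ∏ k ∈ S, w k) = ∑ S ∈ B.powerset, gp u S * P S :=
      fun gp => rfl
    calc Nf u * Dd u
        = (∑ S ∈ (A.erase j).powerset, (ν (insert j S) * u ^ (S.card + 1)) * ∏ k ∈ S, w k) *
          (∑ S ∈ (A.erase j).powerset, ((S.card : ℝ) * ν S * u ^ (S.card - 1)) * ∏ k ∈ S, w k) := by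
          rw [hNf, hDd]
          congr 1 <;> exact Finset.sum_congr rfl fun S hS => by rw [hP]; ring
      _ ≤ (∑ S ∈ (A.erase j).powerset, (((S.card : ℝ) + 1) * ν (insert j S) * u ^ S.card) * ∏ k ∈ S, w k) *
          (∑ S ∈ (A.erase j).powerset, (ν S * u ^ S.card) * ∏ k ∈ S, w k) := by
          rw [mul_comm]
          exact h
      _ = Np u * Df u := by
          rw [hNp, hDf]
          congr 1 <;> exact Finset.sum_congr rfl fun S hS => by rw [hP]; ring
  have hmono : MonotoneOn (fun x => Nf x / Df x) (Set.Icc s t) := by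
    refine monotoneOn_of_deriv_nonneg (convex_Icc s t) ?_ ?_ ?_
    · intro u hu
      have hu' : 0 < u := lt_of_lt_of_le hs hu.1
      exact ((hQderiv u hu').differentiableAt).continuousAt.continuousWithinAt
    · intro u hu
      rw [interior_Icc] at hu
      have hu' : 0 < u := lt_of_lt_of_le hs hu.1.le
      exact ((hQderiv u hu').differentiableAt).differentiableWithinAt
    · intro u hu
      rw [interior_Icc] at hu
      have hu' : 0 < u := lt_of_lt_of_le hs hu.1.le
      rw [(hQderiv u hu').deriv]
      exact hkey u hu'
  exact hmono ⟨le_rfl, hst⟩ ⟨hst, le_rfl⟩ hst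

lemma K_pos (hnn : ∀ S ∈ A.powerset, 0 ≤ ν S) (h0 : 0 < ν ∅) :
    0 < ∑ T ∈ A.powerset, ν T := by
  have h2 : ν ∅ ≤ ∑ T ∈ A.powerset, ν T := Finset.single_le_sum hnn (by simp)
  linarith

lemma support_single (hnn : ∀ S ∈ A.powerset, 0 ≤ ν S) (h0 : 0 < ν ∅)
    (hray : lRayleigh A ν) (hsi : lSizeInc A ν) (hj : j ∈ A) : 0 < ν {j} := by
  classical
  -- Step 1: some superset of {j} has positive weight
  have hex : ∃ T, T ∈ A.powerset.filter (fun T => j ∈ T ∧ 0 < ν T) := by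
    by_contra hcon
    push_neg at hcon
    have hzero : ∀ T ∈ A.powerset, j ∈ T → ν T = 0 := by
      intro T hT hjT
      rcases lt_or_ge 0 (ν T) with h | h
      · exact absurd (Finset.mem_filter.2 ⟨hT, hjT, h⟩) (hcon T)
      · exact le_antisymm h (hnn T hT)
    have h1 := hsi (fun _ => 1) (fun _ _ => one_pos) j hj
    rw [lEnergyIn, lProb] at h1
    have e1 : ∀ (inst : DecidablePred (fun T : Finset V => j ∈ T)),
        ∑ T ∈ @Finset.filter _ _ inst A.powerset,
          (T.card : ℝ) * ν T * ∏ k ∈ T, (fun _ => (1:ℝ)) k = 0 := by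
      intro inst
      refine Finset.sum_eq_zero fun T hT => ?_
      rw [Finset.mem_filter] at hT
      rw [hzero T hT.1 hT.2]; ring
    have e2 : ∀ (inst : DecidablePred (fun T : Finset V => j ∈ T)),
        ∑ T ∈ @Finset.filter _ _ inst A.powerset,
          ν T * ∏ k ∈ T, (fun _ => (1:ℝ)) k = 0 := by
      intro inst
      refine Finset.sum_eq_zero fun T hT => ?_
      rw [Finset.mem_filter] at hT
      rw [hzero T hT.1 hT.2]; ring
    rw [e1 _, e2 _] at h1
    simp at h1
  -- Step 2: a minimal such superset
  obtain ⟨S, hS, hmin⟩ := Finset.exists_min_image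
    (A.powerset.filter (fun T => j ∈ T ∧ 0 < ν T)) Finset.card hex
  rw [Finset.mem_filter, Finset.mem_powerset] at hS
  obtain ⟨hSA, hjS, hSpos⟩ := hS
  by_cases hSj : S = {j}
  · rw [← hSj]; exact hSpos
  exfalso
  have hf : ∃ f ∈ S, f ≠ j := by
    by_contra hcon
    push_neg at hcon
    exact hSj (Finset.eq_singleton_iff_unique_mem.2 ⟨hjS, fun x hx => hcon x hx⟩)
  obtain ⟨f, hfS, hfj⟩ := hf
  have hfA : f ∈ A := hSA hfS
  have hfej : f ∈ A.erase j := Finset.mem_erase.2 ⟨hfj, hfA⟩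
  set K : ℝ := ∑ T ∈ A.powerset, ν T with hK
  have hKpos : 0 < K := K_pos hnn h0
  set m : ℕ := S.card with hm
  -- main estimate
  have main : ∀ ε : ℝ, 0 < ε → ε ≤ 1 → ν ∅ * ν S ≤ K ^ 2 * ε := by
    intro ε hε hε1
    have h := hray (fun _ => ε) (fun _ _ => hε) j hj f hfA (Ne.symm hfj)
    rw [lProb, lProb, lProb] at h
    set Z : ℝ := lZ A ν (fun _ => ε) with hZdef
    have hZterm : ∀ T ∈ A.powerset, 0 ≤ ν T * ∏ k ∈ T, (fun _ => ε) k := by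
      intro T hT
      exact mul_nonneg (hnn T hT) (Finset.prod_nonneg fun _ _ => hε.le)
    have hZpos : 0 < Z := by
      have h2 : ν ∅ * ∏ k ∈ (∅ : Finset V), (fun _ => ε) k ≤ Z :=
        Finset.single_le_sum hZterm (by simp)
      simp only [Finset.prod_empty, mul_one] at h2
      linarith
    -- rewrite the three numerators
    have ejf : ∀ (inst : DecidablePred (fun T : Finset V => j ∈ T ∧ f ∈ T)),
        ∑ T ∈ @Finset.filter _ _ inst A.powerset, ν T * ∏ k ∈ T, (fun _ => ε) k
          = ∑ T ∈ ((A.erase j).erase f).powerset,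
              ν (insert j (insert f T)) * ε ^ (T.card + 2) := by
      intro inst
      rw [sum_powerset_filter_mem hj (fun T => ν T * ∏ k ∈ T, (fun _ => ε) k)]
      have e0 : (A.erase j).powerset.filter (fun T => f ∈ insert j T)
          = (A.erase j).powerset.filter (fun T => f ∈ T) := by
        refine Finset.filter_congr fun T _ => by simp [Finset.mem_insert, hfj]
      rw [e0, sum_powerset_filter_mem' hfej]
      refine Finset.sum_congr rfl fun T hT => ?_
      rw [Finset.mem_powerset] at hT
      have hfT : f ∉ T := fun hh => Finset.notMem_erase f (A.erase j) (hT hh)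
      have hjT : j ∉ insert f T := by
        simp only [Finset.mem_insert]
        rintro (hh | hh)
        · exact hfj hh.symm
        · exact Finset.notMem_erase j A (Finset.mem_of_mem_erase (hT hh))
      rw [Finset.prod_const, Finset.card_insert_of_notMem hjT,
        Finset.card_insert_of_notMem hfT]
    have ej : ∀ (inst : DecidablePred (fun T : Finset V => j ∈ T)),
        ∑ T ∈ @Finset.filter _ _ inst A.powerset, ν T * ∏ k ∈ T, (fun _ => ε) k
          = ∑ T ∈ (A.erase j).powerset, ν (insert j T) * ε ^ (T.card + 1) := by
      intro inst
      rw [sum_powerset_filter_mem' hj]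
      refine Finset.sum_congr rfl fun T hT => ?_
      rw [Finset.mem_powerset] at hT
      have hjT : j ∉ T := fun hh => Finset.notMem_erase j A (hT hh)
      rw [Finset.prod_const, Finset.card_insert_of_notMem hjT]
    have ef : ∀ (inst : DecidablePred (fun T : Finset V => f ∈ T)),
        ∑ T ∈ @Finset.filter _ _ inst A.powerset, ν T * ∏ k ∈ T, (fun _ => ε) k
          = ∑ T ∈ (A.erase f).powerset, ν (insert f T) * ε ^ (T.card + 1) := by
      intro inst
      rw [sum_powerset_filter_mem' hfA]
      refine Finset.sum_congr rfl fun T hT => ?_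
      rw [Finset.mem_powerset] at hT
      have hfT : f ∉ T := fun hh => Finset.notMem_erase f A (hT hh)
      rw [Finset.prod_const, Finset.card_insert_of_notMem hfT]
    rw [ejf _, ej _, ef _] at h
    rw [div_mul_div_comm, div_le_div_iff₀ hZpos (by positivity)] at h
    -- lower bound for the joint sum
    set T0 : Finset V := (S.erase j).erase f with hT0
    have hT0mem : T0 ∈ ((A.erase j).erase f).powerset := by
      rw [Finset.mem_powerset, hT0]
      exact Finset.erase_subset_erase f (Finset.erase_subset_erase j hSA)
    have hins : insert j (insert f T0) = S := by
      rw [hT0, Finset.insert_erase (Finset.mem_erase.2 ⟨hfj, hfS⟩), Finset.insert_erase hjS]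
    have hcard : T0.card + 2 = m := by
      rw [hT0, hm]
      have h1 : ((S.erase j).erase f).card = (S.erase j).card - 1 :=
        Finset.card_erase_of_mem (Finset.mem_erase.2 ⟨hfj, hfS⟩)
      have h2 : (S.erase j).card = S.card - 1 := Finset.card_erase_of_mem hjS
      have hc2 : 2 ≤ S.card := by
        have := Finset.one_lt_card.2 ⟨f, hfS, j, hjS, hfj⟩
        omega
      omega
    have hjfnn : ∀ T ∈ ((A.erase j).erase f).powerset,
        0 ≤ ν (insert j (insert f T)) * ε ^ (T.card + 2) := by
      intro T hT
      rw [Finset.mem_powerset] at hT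
      refine mul_nonneg (hnn _ ?_) (by positivity)
      rw [Finset.mem_powerset]
      refine Finset.insert_subset hj (Finset.insert_subset hfA ?_)
      exact (hT.trans (Finset.erase_subset f _)).trans (Finset.erase_subset j A)
    have hb1 : ν S * ε ^ m ≤ ∑ T ∈ ((A.erase j).erase f).powerset,
        ν (insert j (insert f T)) * ε ^ (T.card + 2) := by
      have := Finset.single_le_sum hjfnn hT0mem
      rwa [hins, hcard] at this
    -- upper bound for the j-sum
    have hb2 : (∑ T ∈ (A.erase j).powerset, ν (insert j T) * ε ^ (T.card + 1)) ≤ K * ε ^ m := by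
      have step1 : ∀ T ∈ (A.erase j).powerset,
          ν (insert j T) * ε ^ (T.card + 1) ≤ ν (insert j T) * ε ^ m := by
        intro T hT
        rw [Finset.mem_powerset] at hT
        have hsub : insert j T ∈ A.powerset := by
          rw [Finset.mem_powerset]
          exact Finset.insert_subset hj (hT.trans (Finset.erase_subset j A))
        rcases lt_or_ge 0 (ν (insert j T)) with hpos | hneg
        · have hmem : insert j T ∈ A.powerset.filter (fun T => j ∈ T ∧ 0 < ν T) :=
            Finset.mem_filter.2 ⟨hsub, Finset.mem_insert_self j T, hpos⟩
          have hge : m ≤ T.card + 1 := by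
            have := hmin _ hmem
            have hjT : j ∉ T := fun hh => Finset.notMem_erase j A (hT hh)
            rw [Finset.card_insert_of_notMem hjT] at this
            exact this
          exact mul_le_mul_of_nonneg_left (pow_le_pow_of_le_one hε.le hε1 hge) hpos.le
        · have h1 : ν (insert j T) = 0 := le_antisymm hneg (hnn _ hsub)
          rw [h1]; simp
      have step2 : (∑ T ∈ (A.erase j).powerset, ν (insert j T) * ε ^ m)
          = (∑ T ∈ (A.erase j).powerset, ν (insert j T)) * ε ^ m := by
        rw [Finset.sum_mul]
      have step3 : (∑ T ∈ (A.erase j).powerset, ν (insert j T)) ≤ K := by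
        have e1 := sum_powerset_filter_mem' (s := A) (a := j) (inst := fun _ => inferInstance) hj (fun T => ν T)
        rw [← e1, hK]
        refine Finset.sum_le_sum_of_subset_of_nonneg (Finset.filter_subset _ _) ?_
        intro T hT _
        exact hnn T hT
      calc ∑ T ∈ (A.erase j).powerset, ν (insert j T) * ε ^ (T.card + 1)
          ≤ ∑ T ∈ (A.erase j).powerset, ν (insert j T) * ε ^ m := Finset.sum_le_sum step1
        _ = (∑ T ∈ (A.erase j).powerset, ν (insert j T)) * ε ^ m := step2
        _ ≤ K * ε ^ m := by
            refine mul_le_mul_of_nonneg_right step3 (by positivity)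
    -- upper bound for the f-sum
    have hb3 : (∑ T ∈ (A.erase f).powerset, ν (insert f T) * ε ^ (T.card + 1)) ≤ K * ε := by
      have step1 : ∀ T ∈ (A.erase f).powerset,
          ν (insert f T) * ε ^ (T.card + 1) ≤ ν (insert f T) * ε := by
        intro T hT
        rw [Finset.mem_powerset] at hT
        have hsub : insert f T ∈ A.powerset := by
          rw [Finset.mem_powerset]
          exact Finset.insert_subset hfA (hT.trans (Finset.erase_subset f A))
        have hpow : ε ^ (T.card + 1) ≤ ε ^ 1 :=
          pow_le_pow_of_le_one hε.le hε1 (by omega)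
        rw [pow_one] at hpow
        exact mul_le_mul_of_nonneg_left hpow (hnn _ hsub)
      have step3 : (∑ T ∈ (A.erase f).powerset, ν (insert f T)) ≤ K := by
        have e1 := sum_powerset_filter_mem' (s := A) (a := f) (inst := fun _ => inferInstance) hfA (fun T => ν T)
        rw [← e1, hK]
        refine Finset.sum_le_sum_of_subset_of_nonneg (Finset.filter_subset _ _) ?_
        intro T hT _
        exact hnn T hT
      calc ∑ T ∈ (A.erase f).powerset, ν (insert f T) * ε ^ (T.card + 1)
          ≤ ∑ T ∈ (A.erase f).powerset, ν (insert f T) * ε := Finset.sum_le_sum step1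
        _ = (∑ T ∈ (A.erase f).powerset, ν (insert f T)) * ε := by rw [Finset.sum_mul]
        _ ≤ K * ε := mul_le_mul_of_nonneg_right step3 hε.le
    -- nonnegativity facts
    have hjnn : 0 ≤ ∑ T ∈ (A.erase j).powerset, ν (insert j T) * ε ^ (T.card + 1) := by
      refine Finset.sum_nonneg fun T hT => ?_
      rw [Finset.mem_powerset] at hT
      refine mul_nonneg (hnn _ ?_) (by positivity)
      rw [Finset.mem_powerset]
      exact Finset.insert_subset hj (hT.trans (Finset.erase_subset j A))
    have hZle : ν ∅ ≤ Z := by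
      have h2 : ν ∅ * ∏ k ∈ (∅ : Finset V), (fun _ => ε) k ≤ Z :=
        Finset.single_le_sum hZterm (by simp)
      simpa using h2
    -- chain everything
    have hchain1 : (ν S * ε ^ m) * ν ∅
        ≤ (∑ T ∈ ((A.erase j).erase f).powerset,
            ν (insert j (insert f T)) * ε ^ (T.card + 2)) * Z := by
      refine mul_le_mul hb1 hZle h0.le ?_
      exact Finset.sum_nonneg hjfnn
    have hchain2 : (∑ T ∈ ((A.erase j).erase f).powerset,
            ν (insert j (insert f T)) * ε ^ (T.card + 2)) * Z
        ≤ (K * ε ^ m) * (K * ε) := by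
      calc (∑ T ∈ ((A.erase j).erase f).powerset,
            ν (insert j (insert f T)) * ε ^ (T.card + 2)) * Z
          ≤ (∑ T ∈ (A.erase j).powerset, ν (insert j T) * ε ^ (T.card + 1)) *
            (∑ T ∈ (A.erase f).powerset, ν (insert f T) * ε ^ (T.card + 1)) := by
            nlinarith [h, hZpos]
        _ ≤ (K * ε ^ m) * (K * ε) := by
            refine mul_le_mul hb2 hb3 ?_ (by positivity)
            refine Finset.sum_nonneg fun T hT => ?_
            rw [Finset.mem_powerset] at hT
            refine mul_nonneg (hnn _ ?_) (by positivity)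
            rw [Finset.mem_powerset]
            exact Finset.insert_subset hfA (hT.trans (Finset.erase_subset f A))
    have hfinal : (ν ∅ * ν S) * ε ^ m ≤ (K ^ 2 * ε) * ε ^ m := by
      calc (ν ∅ * ν S) * ε ^ m = (ν S * ε ^ m) * ν ∅ := by ring
        _ ≤ (K * ε ^ m) * (K * ε) := le_trans hchain1 hchain2
        _ = (K ^ 2 * ε) * ε ^ m := by ring
    exact le_of_mul_le_mul_right hfinal (by positivity)
  -- conclude
  have hKp2 : (0:ℝ) < K ^ 2 := by positivity
  set ε : ℝ := min 1 (ν ∅ * ν S / (2 * K ^ 2)) with hε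
  have hεpos : 0 < ε := by
    refine lt_min one_pos ?_
    positivity
  have hε1 : ε ≤ 1 := min_le_left _ _
  have h5 := main ε hεpos hε1
  have h6 : K ^ 2 * ε ≤ K ^ 2 * (ν ∅ * ν S / (2 * K ^ 2)) :=
    mul_le_mul_of_nonneg_left (min_le_right _ _) hKp2.le
  have h7 : K ^ 2 * (ν ∅ * ν S / (2 * K ^ 2)) = ν ∅ * ν S / 2 := by
    field_simp
  nlinarith [h5, h6, h7, mul_pos h0 hSpos]

lemma ratio_tendsto {ι : Type*} {l : Filter ι} (A : Finset V) (ν : Finset V → ℝ) (j : V)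
    {wn : ι → V → ℝ} {w : V → ℝ} (hd : dF A ν j w ≠ 0)
    (hcv : ∀ k ∈ A.erase j, Tendsto (fun n => wn n k) l (𝓝 (w k))) :
    Tendsto (fun n => nF A ν j (wn n) / dF A ν j (wn n)) l
      (𝓝 (nF A ν j w / dF A ν j w)) := by
  have hsum : ∀ g : Finset V → ℝ,
      Tendsto (fun n => ∑ S ∈ (A.erase j).powerset, g S * ∏ k ∈ S, wn n k) l
        (𝓝 (∑ S ∈ (A.erase j).powerset, g S * ∏ k ∈ S, w k)) := by
    intro g
    refine tendsto_finset_sum _ fun S hS => ?_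
    rw [Finset.mem_powerset] at hS
    exact Tendsto.const_mul _ (tendsto_finset_prod _ fun k hk => hcv k (hS hk))
  exact Tendsto.div (hsum _) (hsum _) hd

end Abstract
end CavAux

section NetworkDefs

variable {V : Type*} [DecidableEq V]

/-- The cavity operator: `(Γ_G x)_{i→j}` is the cavity ratio of the local measure `μ i`
at the edge `ij`, with external field `(x_{k→i} : k ∈ ∂i ∖ {j})`.  Local measures are
encoded as functions of the set of neighbours selected. -/
noncomputable def cavOp (G : SimpleGraph V) [G.LocallyFinite]
    (μ : V → Finset V → ℝ) (x : V → V → ℝ) (i j : V) : ℝ :=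
  (∑ S ∈ ((G.neighborFinset i).erase j).powerset, μ i (insert j S) * ∏ k ∈ S, x k i) /
  (∑ S ∈ ((G.neighborFinset i).erase j).powerset, μ i S * ∏ k ∈ S, x k i)

/-- One step of the cavity iteration at activity `t` : `x ↦ t Γ_G(x)`. -/
noncomputable def cavStep (G : SimpleGraph V) [G.LocallyFinite]
    (μ : V → Finset V → ℝ) (t : ℝ) (x : V → V → ℝ) : V → V → ℝ :=
  fun i j => t * cavOp G μ x i j

/-- The neighbours `k` of `i` such that the edge `ik` belongs to the spanning subgraph `F`;
this encodes `F ∩ E_i` as a set of neighbours. -/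
noncomputable def nbrsIn (G : SimpleGraph V) [G.LocallyFinite]
    (F : Finset (Sym2 V)) (i : V) : Finset V :=
  (G.neighborFinset i).filter (fun k => s(i, k) ∈ F)

variable [Fintype V]

/-- Global measure `μ(F) = ∏_i μ_i(F ∩ E_i)` of a spanning subgraph `F`. -/
noncomputable def gWeight (G : SimpleGraph V) [DecidableRel G.Adj]
    (μ : V → Finset V → ℝ) (F : Finset (Sym2 V)) : ℝ :=
  ∏ i : V, μ i (nbrsIn G F i)

/-- Partition function `Z(G;t) = Σ_{F ⊆ E} μ(F) t^{|F|}`. -/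
noncomputable def ZG (G : SimpleGraph V) [DecidableRel G.Adj]
    (μ : V → Finset V → ℝ) (t : ℝ) : ℝ :=
  ∑ F ∈ G.edgeFinset.powerset, gWeight G μ F * t ^ F.card

/-- Gibbs--Boltzmann probability of the event `p` at activity `t`. -/
noncomputable def gProb (G : SimpleGraph V) [DecidableRel G.Adj]
    (μ : V → Finset V → ℝ) (t : ℝ) (p : Finset (Sym2 V) → Prop) : ℝ :=
  (∑ F ∈ G.edgeFinset.powerset.filter p, gWeight G μ F * t ^ F.card) / ZG G μ t

/-- Energy `U(G;t)`, the expected size of the random spanning subgraph. -/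
noncomputable def UG (G : SimpleGraph V) [DecidableRel G.Adj]
    (μ : V → Finset V → ℝ) (t : ℝ) : ℝ :=
  (∑ F ∈ G.edgeFinset.powerset, (F.card : ℝ) * gWeight G μ F * t ^ F.card) / ZG G μ t

/-- `M(G)`, the maximum size of a spanning subgraph with positive weight. -/
noncomputable def MG (G : SimpleGraph V) [DecidableRel G.Adj]
    (μ : V → Finset V → ℝ) : ℕ :=
  (G.edgeFinset.powerset.filter (fun F => 0 < gWeight G μ F)).sup Finset.card

end NetworkDefs

section InfiniteActivity

variable {V : Type*} [DecidableEq V]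

/-- Extension of the cavity operator `Γ_G` to configurations with values in `(0,∞]`
(encoded in `ℝ≥0∞`), obtained as the monotone (decreasing) limit along truncations of
the infinite coordinates; it takes finite nonnegative values. -/
noncomputable def cavOpExt (G : SimpleGraph V) [G.LocallyFinite]
    (μ : V → Finset V → ℝ) (x : V → V → ℝ≥0∞) : V → V → ℝ :=
  fun i j => ⨅ M : ℕ, cavOp G μ (fun k l => (x k l ⊓ (M : ℝ≥0∞)).toReal) i j

/-- The limiting cavity operator at infinite activity,
`Γ̄_G(x) = lim_{t→∞} t Γ_G(t x)`, an increasing limit realised as the supremum over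
`t ≥ 1`; it takes values in `(0,∞]` (encoded in `ℝ≥0∞`). -/
noncomputable def cavOpBar (G : SimpleGraph V) [G.LocallyFinite]
    (μ : V → Finset V → ℝ) (x : V → V → ℝ) : V → V → ℝ≥0∞ :=
  fun i j => ⨆ (t : ℝ) (_ : 1 ≤ t),
    ENNReal.ofReal (t * cavOp G μ (fun k l => t * x k l) i j)


namespace CavAux
open Topology

section Graph

variable {V : Type*} [DecidableEq V] (G : SimpleGraph V) [G.LocallyFinite]
  (μ : V → Finset V → ℝ) {i j : V}

lemma cavOp_eq (x : V → V → ℝ) (i j : V) :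
    cavOp G μ x i j
      = nF (G.neighborFinset i) (μ i) j (fun k => x k i)
        / dF (G.neighborFinset i) (μ i) j (fun k => x k i) := rfl

/-- relevant coordinates are adjacent -/
lemma mem_erase_adj {i j k : V} (hk : k ∈ (G.neighborFinset i).erase j) : G.Adj k i :=
  ((SimpleGraph.mem_neighborFinset G i k).1 (Finset.mem_of_mem_erase hk)).symm

variable {G μ}

lemma cavOp_nonneg (hcm : lCavityMonotone (G.neighborFinset i) (μ i))
    (hij : G.Adj i j) {x : V → V → ℝ} (hx : ∀ k l, G.Adj k l → 0 ≤ x k l) :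
    0 ≤ cavOp G μ x i j := by
  obtain ⟨hnn, h0, _, _⟩ := hcm
  rw [cavOp_eq]
  have hw : ∀ k ∈ (G.neighborFinset i).erase j, 0 ≤ x k i :=
    fun k hk => hx k i (mem_erase_adj G hk)
  exact div_nonneg (nF_nonneg hnn ((SimpleGraph.mem_neighborFinset G i j).2 hij) hw)
    (dF_pos hnn h0 hw).le

lemma cavOp_pos (hcm : lCavityMonotone (G.neighborFinset i) (μ i))
    (hij : G.Adj i j) {x : V → V → ℝ} (hx : ∀ k l, G.Adj k l → 0 ≤ x k l) :
    0 < cavOp G μ x i j := by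
  obtain ⟨hnn, h0, hray, hsi⟩ := hcm
  have hjA : j ∈ G.neighborFinset i := (SimpleGraph.mem_neighborFinset G i j).2 hij
  rw [cavOp_eq]
  have hw : ∀ k ∈ (G.neighborFinset i).erase j, 0 ≤ x k i :=
    fun k hk => hx k i (mem_erase_adj G hk)
  refine div_pos (lt_of_lt_of_le ?_ (single_le_nF hnn hjA hw)) (dF_pos hnn h0 hw)
  exact support_single hnn h0 hray hsi hjA

lemma cavOp_congr {x y : V → V → ℝ} (h : ∀ k l, G.Adj k l → x k l = y k l) (i j : V) :
    cavOp G μ x i j = cavOp G μ y i j := by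
  rw [cavOp_eq, cavOp_eq]
  have h1 : ∀ k ∈ (G.neighborFinset i).erase j, x k i = y k i :=
    fun k hk => h k i (mem_erase_adj G hk)
  rw [nF_congr h1, dF_congr h1]

lemma cavOp_antitone (hcm : lCavityMonotone (G.neighborFinset i) (μ i))
    (hij : G.Adj i j) {x y : V → V → ℝ} (hx : ∀ k l, G.Adj k l → 0 ≤ x k l)
    (hle : ∀ k l, G.Adj k l → x k l ≤ y k l) :
    cavOp G μ y i j ≤ cavOp G μ x i j := by
  obtain ⟨hnn, h0, hray, _⟩ := hcm
  rw [cavOp_eq, cavOp_eq]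
  exact ratio_antitone hnn h0 hray ((SimpleGraph.mem_neighborFinset G i j).2 hij)
    (fun k hk => hx k i (mem_erase_adj G hk))
    (fun k hk => hle k i (mem_erase_adj G hk))

lemma cavOp_scaled_mono (hcm : lCavityMonotone (G.neighborFinset i) (μ i))
    (hij : G.Adj i j) {w : V → V → ℝ} (hw : ∀ k l, G.Adj k l → 0 ≤ w k l)
    {s t : ℝ} (hs : 0 < s) (hst : s ≤ t) :
    s * cavOp G μ (fun k l => s * w k l) i j ≤ t * cavOp G μ (fun k l => t * w k l) i j := by
  obtain ⟨hnn, h0, _, hsi⟩ := hcm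
  rw [cavOp_eq, cavOp_eq]
  exact ratio_scaled_mono hnn h0 hsi ((SimpleGraph.mem_neighborFinset G i j).2 hij)
    (fun k hk => hw k i (mem_erase_adj G hk)) hs hst

lemma cavOp_tendsto {ι : Type*} {lf : Filter ι} (hcm : lCavityMonotone (G.neighborFinset i) (μ i))
    (hij : G.Adj i j) {xn : ι → V → V → ℝ} {x : V → V → ℝ}
    (hx : ∀ k l, G.Adj k l → 0 ≤ x k l)
    (hcv : ∀ k l, G.Adj k l → Tendsto (fun n => xn n k l) lf (𝓝 (x k l))) :
    Tendsto (fun n => cavOp G μ (xn n) i j) lf (𝓝 (cavOp G μ x i j)) := by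
  obtain ⟨hnn, h0, _, _⟩ := hcm
  simp only [cavOp_eq]
  refine ratio_tendsto _ _ _ ?_ ?_
  · exact (dF_pos hnn h0 (fun k hk => hx k i (mem_erase_adj G hk))).ne'
  · exact fun k hk => hcv k i (mem_erase_adj G hk)

/-- a uniform `ℕ`-bound on the values of a configuration -/
lemma exists_nat_bound [Fintype V] (v : V → V → ℝ) : ∃ M : ℕ, ∀ k l, v k l ≤ M := by
  obtain ⟨C, hC⟩ := Finite.exists_le (fun p : V × V => v p.1 p.2)
  obtain ⟨M, hM⟩ := exists_nat_ge C
  exact ⟨M, fun k l => le_trans (hC (k, l)) hM⟩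

lemma cavOpExt_nonneg [Fintype V] (hcm : lCavityMonotone (G.neighborFinset i) (μ i))
    (hij : G.Adj i j) (y : V → V → ℝ≥0∞) : 0 ≤ cavOpExt G μ y i j := by
  rw [cavOpExt]
  refine Real.iInf_nonneg fun M => ?_
  exact cavOp_nonneg hcm hij (fun k l _ => ENNReal.toReal_nonneg)

lemma cavOpExt_le [Fintype V] (hcm : lCavityMonotone (G.neighborFinset i) (μ i))
    (hij : G.Adj i j) {y : V → V → ℝ≥0∞} {v : V → V → ℝ}
    (hv : ∀ k l, G.Adj k l → 0 ≤ v k l)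
    (hle : ∀ k l, G.Adj k l → ENNReal.ofReal (v k l) ≤ y k l) :
    cavOpExt G μ y i j ≤ cavOp G μ v i j := by
  obtain ⟨M, hM⟩ := exists_nat_bound v
  have hbdd : BddBelow (Set.range fun M : ℕ =>
      cavOp G μ (fun k l => (y k l ⊓ (M : ℝ≥0∞)).toReal) i j) := by
    refine ⟨0, fun r hr => ?_⟩
    obtain ⟨M', rfl⟩ := hr
    exact cavOp_nonneg hcm hij (fun k l _ => ENNReal.toReal_nonneg)
  rw [cavOpExt]
  refine ciInf_le_of_le hbdd M ?_
  refine cavOp_antitone hcm hij hv ?_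
  intro k l hkl
  have h1 : ENNReal.ofReal (v k l) ≤ y k l ⊓ (M : ℝ≥0∞) := by
    refine le_inf (hle k l hkl) ?_
    rw [← ENNReal.ofReal_natCast]
    exact ENNReal.ofReal_le_ofReal (hM k l)
  have h2 : y k l ⊓ (M : ℝ≥0∞) ≠ ⊤ :=
    ne_top_of_le_ne_top (ENNReal.natCast_ne_top M) inf_le_right
  calc v k l = (ENNReal.ofReal (v k l)).toReal := by
        rw [ENNReal.toReal_ofReal (hv k l hkl)]
    _ ≤ (y k l ⊓ (M : ℝ≥0∞)).toReal := ENNReal.toReal_mono h2 h1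

end Graph

end CavAux
open CavAux
open Topology

/-- on a finite cavity-monotone network, the solutions `x(t)` of the cavity
equations increase, as `t → ∞`, to a limit `x̄ ∈ (0,∞]^{Ē}` which is the smallest
solution of the cavity equation at infinite activity `x̄ = (Γ̄_G ∘ Γ_G)(x̄)`. -/
theorem stmt16 {V : Type*} [Fintype V] [DecidableEq V] (G : SimpleGraph V)
    [DecidableRel G.Adj] (μ : V → Finset V → ℝ)
    (hcm : ∀ i : V, lCavityMonotone (G.neighborFinset i) (μ i))
    (x : ℝ → V → V → ℝ)
    (hxnn : ∀ t : ℝ, 0 < t → ∀ i j, 0 ≤ x t i j)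
    (hxfix : ∀ t : ℝ, 0 < t → ∀ i j, G.Adj i j → x t i j = t * cavOp G μ (x t) i j)
    (hxuniq : ∀ t : ℝ, 0 < t → ∀ y : V → V → ℝ, (∀ i j, 0 ≤ y i j) →
      (∀ i j, G.Adj i j → y i j = t * cavOp G μ y i j) →
      ∀ i j, G.Adj i j → y i j = x t i j)
    (hattr : ∀ t : ℝ, 0 < t → ∀ x0 : V → V → ℝ, (∀ i j, 0 ≤ x0 i j) →
      ∀ i j, G.Adj i j →
        Tendsto (fun k : ℕ => (cavStep G μ t)^[k] x0 i j) atTop (nhds (x t i j))) :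
    ∃ xbar : V → V → ℝ≥0∞,
      (∀ i j, G.Adj i j → MonotoneOn (fun t : ℝ => x t i j) (Set.Ioi 0)) ∧
      (∀ i j, G.Adj i j →
        Tendsto (fun t : ℝ => ENNReal.ofReal (x t i j)) atTop (nhds (xbar i j))) ∧
      (∀ i j, G.Adj i j → 0 < xbar i j) ∧
      (∀ i j, G.Adj i j → xbar i j = cavOpBar G μ (cavOpExt G μ xbar) i j) ∧
      (∀ y : V → V → ℝ≥0∞, (∀ i j, G.Adj i j → 0 < y i j) →
        (∀ i j, G.Adj i j → y i j = cavOpBar G μ (cavOpExt G μ y) i j) →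
        ∀ i j, G.Adj i j → xbar i j ≤ y i j) := by
  classical
  -- STEP 1: monotonicity of x in t
  have hmono : ∀ i j, G.Adj i j → ∀ s t : ℝ, 0 < s → s ≤ t → x s i j ≤ x t i j := by
    intro i j hij s t hs hst
    have ht : 0 < t := lt_of_lt_of_le hs hst
    have hts : 1 ≤ t / s := (one_le_div hs).2 hst
    have inv : ∀ n : ℕ, ∀ k l, G.Adj k l →
        x s k l ≤ (cavStep G μ t)^[n] (x s) k l ∧
        (cavStep G μ t)^[n] (x s) k l ≤ (t / s) * x s k l := by
      intro n
      induction n with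
      | zero =>
        intro k l _
        refine ⟨le_rfl, ?_⟩
        simpa using le_mul_of_one_le_left (hxnn s hs k l) hts
      | succ n ih =>
        intro k l hkl
        rw [Function.iterate_succ_apply']
        set v := (cavStep G μ t)^[n] (x s) with hv
        have hvnn : ∀ a b, G.Adj a b → 0 ≤ v a b := fun a b hab =>
          le_trans (hxnn s hs a b) (ih a b hab).1
        have hxsnn : ∀ a b, G.Adj a b → 0 ≤ x s a b := fun a b _ => hxnn s hs a b
        constructor
        · have h1 : cavOp G μ (fun a b => (t/s) * x s a b) k l ≤ cavOp G μ v k l :=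
            cavOp_antitone (hcm k) hkl hvnn (fun a b hab => (ih a b hab).2)
          have h2 : s * cavOp G μ (x s) k l
              ≤ t * cavOp G μ (fun a b => (t/s) * x s a b) k l := by
            have h3 := cavOp_scaled_mono (hcm k) hkl (w := fun a b => s⁻¹ * x s a b)
              (fun a b _ => mul_nonneg (inv_nonneg.2 hs.le) (hxnn s hs a b)) hs hst
            have e1 : (fun a b => s * (s⁻¹ * x s a b)) = x s := by
              funext a b; field_simp
            have e2 : (fun a b => t * (s⁻¹ * x s a b)) = fun a b => (t/s) * x s a b := by
              funext a b; ring
            rw [e1, e2] at h3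
            exact h3
          calc x s k l = s * cavOp G μ (x s) k l := hxfix s hs k l hkl
            _ ≤ t * cavOp G μ (fun a b => (t/s) * x s a b) k l := h2
            _ ≤ t * cavOp G μ v k l := mul_le_mul_of_nonneg_left h1 ht.le
            _ = cavStep G μ t v k l := rfl
        · have h1 : cavOp G μ v k l ≤ cavOp G μ (x s) k l :=
            cavOp_antitone (hcm k) hkl hxsnn (fun a b hab => (ih a b hab).1)
          calc cavStep G μ t v k l = t * cavOp G μ v k l := rfl
            _ ≤ t * cavOp G μ (x s) k l := mul_le_mul_of_nonneg_left h1 ht.le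
            _ = (t/s) * (s * cavOp G μ (x s) k l) := by field_simp
            _ = (t/s) * x s k l := by rw [← hxfix s hs k l hkl]
    have htt := hattr t ht (x s) (fun a b => hxnn s hs a b) i j hij
    exact ge_of_tendsto htt (Filter.Eventually.of_forall fun n => (inv n i j hij).1)
  -- the candidate limit
  set xbar : V → V → ℝ≥0∞ := fun i j => ⨆ t : ℝ, ENNReal.ofReal (x (max t 1) i j) with hxbar
  have hmono1 : ∀ i j, G.Adj i j →
      Monotone fun t : ℝ => ENNReal.ofReal (x (max t 1) i j) := by
    intro i j hij a b hab
    exact ENNReal.ofReal_le_ofReal (hmono i j hij _ _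
      (lt_of_lt_of_le one_pos (le_max_right a 1)) (max_le_max hab le_rfl))
  have htendsto : ∀ i j, G.Adj i j →
      Tendsto (fun t : ℝ => ENNReal.ofReal (x t i j)) atTop (𝓝 (xbar i j)) := by
    intro i j hij
    have h1 : Tendsto (fun t : ℝ => ENNReal.ofReal (x (max t 1) i j)) atTop (𝓝 (xbar i j)) :=
      tendsto_atTop_iSup (hmono1 i j hij)
    refine h1.congr' ?_
    filter_upwards [eventually_ge_atTop (1:ℝ)] with t ht
    rw [max_eq_left ht]
  have hle_xbar : ∀ s : ℝ, 0 < s → ∀ i j, G.Adj i j →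
      ENNReal.ofReal (x s i j) ≤ xbar i j := by
    intro s hs i j hij
    refine le_trans ?_ (le_iSup (fun t : ℝ => ENNReal.ofReal (x (max t 1) i j)) s)
    exact ENNReal.ofReal_le_ofReal (hmono i j hij s (max s 1) hs (le_max_left s 1))
  have hpos : ∀ i j, G.Adj i j → 0 < xbar i j := by
    intro i j hij
    have h1 : 0 < x 1 i j := by
      rw [hxfix 1 one_pos i j hij, one_mul]
      exact cavOp_pos (hcm i) hij (fun a b _ => hxnn 1 one_pos a b)
    exact lt_of_lt_of_le (ENNReal.ofReal_pos.2 h1) (hle_xbar 1 one_pos i j hij)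
  -- the cavity field and its limit
  set zf : ℝ → V → V → ℝ := fun s k l => cavOp G μ (x s) k l with hzf
  set zb : V → V → ℝ := cavOpExt G μ xbar with hzb
  have hzf_nonneg : ∀ s : ℝ, 0 < s → ∀ k l, G.Adj k l → 0 ≤ zf s k l :=
    fun s hs k l hkl => cavOp_nonneg (hcm k) hkl (fun a b _ => hxnn s hs a b)
  have hzb_nonneg : ∀ k l, G.Adj k l → 0 ≤ zb k l :=
    fun k l hkl => cavOpExt_nonneg (hcm k) hkl xbar
  have hxz : ∀ t : ℝ, 0 < t → ∀ k l, G.Adj k l → x t k l = t * zf t k l :=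
    fun t ht k l hkl => hxfix t ht k l hkl
  have hclaimA : ∀ s : ℝ, 0 < s → ∀ k l, G.Adj k l → zb k l ≤ zf s k l := by
    intro s hs k l hkl
    exact cavOpExt_le (hcm k) hkl (fun a b _ => hxnn s hs a b)
      (fun a b hab => hle_xbar s hs a b hab)
  have hzf_anti : ∀ k l, G.Adj k l → ∀ s t : ℝ, 0 < s → s ≤ t → zf t k l ≤ zf s k l := by
    intro k l hkl s t hs hst
    exact cavOp_antitone (hcm k) hkl (fun a b _ => hxnn s hs a b)
      (fun a b hab => hmono a b hab s t hs hst)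
  have hclaimB : ∀ k l, G.Adj k l → Tendsto (fun s : ℝ => zf s k l) atTop (𝓝 (zb k l)) := by
    intro k l hkl
    set g : ℝ → ℝ := fun s => zf (max s 1) k l with hg
    have hganti : Antitone g := fun a b hab =>
      hzf_anti k l hkl (max a 1) (max b 1)
        (lt_of_lt_of_le one_pos (le_max_right a 1)) (max_le_max hab le_rfl)
    have hgbdd : BddBelow (Set.range g) := by
      refine ⟨0, fun r hr => ?_⟩
      obtain ⟨s, rfl⟩ := hr
      exact hzf_nonneg (max s 1) (lt_of_lt_of_le one_pos (le_max_right s 1)) k l hkl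
    have hgtend : Tendsto g atTop (𝓝 (⨅ s : ℝ, g s)) := tendsto_atTop_ciInf hganti hgbdd
    have hub : zb k l ≤ ⨅ s : ℝ, g s :=
      le_ciInf fun s => hclaimA (max s 1) (lt_of_lt_of_le one_pos (le_max_right s 1)) k l hkl
    have hlb : ∀ M : ℕ, (⨅ s : ℝ, g s)
        ≤ cavOp G μ (fun a b => (xbar a b ⊓ (M:ℝ≥0∞)).toReal) k l := by
      intro M
      have htr : ∀ a b, G.Adj a b → Tendsto (fun s : ℝ => min (x s a b) (M:ℝ)) atTop
          (𝓝 ((xbar a b ⊓ (M:ℝ≥0∞)).toReal)) := by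
        intro a b hab
        have h1 : Tendsto (fun s : ℝ => min (ENNReal.ofReal (x s a b)) ((M:ℝ≥0∞))) atTop
            (𝓝 (min (xbar a b) ((M:ℝ≥0∞)))) := (htendsto a b hab).min tendsto_const_nhds
        have hne : min (xbar a b) ((M:ℝ≥0∞)) ≠ ⊤ :=
          ne_top_of_le_ne_top (ENNReal.natCast_ne_top M) (min_le_right _ _)
        have h2 := (ENNReal.tendsto_toReal hne).comp h1
        have h3 : Tendsto (fun s : ℝ => (min (ENNReal.ofReal (x s a b)) ((M:ℝ≥0∞))).toReal)
            atTop (𝓝 ((min (xbar a b) ((M:ℝ≥0∞))).toReal)) := h2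
        have heq : (fun s : ℝ => (min (ENNReal.ofReal (x s a b)) ((M:ℝ≥0∞))).toReal)
            =ᶠ[atTop] fun s : ℝ => min (x s a b) (M:ℝ) := by
          filter_upwards [eventually_ge_atTop (1:ℝ)] with s hs
          have hxs : 0 ≤ x s a b := hxnn s (lt_of_lt_of_le one_pos hs) a b
          have hm : Monotone ENNReal.ofReal := fun _ _ h => ENNReal.ofReal_le_ofReal h
          rw [← ENNReal.ofReal_natCast M, ← hm.map_min,
            ENNReal.toReal_ofReal (le_min hxs (Nat.cast_nonneg M))]
        have h4 := h3.congr' heq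
        exact h4
      have hcont := cavOp_tendsto (hcm k) hkl
        (x := fun a b => (xbar a b ⊓ (M:ℝ≥0∞)).toReal)
        (xn := fun s a b => min (x s a b) (M:ℝ))
        (fun a b _ => ENNReal.toReal_nonneg) htr
      refine le_of_tendsto_of_tendsto hgtend hcont ?_
      filter_upwards [eventually_ge_atTop (1:ℝ)] with s hs
      have hs0 : (0:ℝ) < s := lt_of_lt_of_le one_pos hs
      have : g s = zf s k l := by rw [hg]; simp only [max_eq_left hs]
      rw [this]
      refine cavOp_antitone (hcm k) hkl (x := fun a b => min (x s a b) (M:ℝ)) ?_ ?_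
      · exact fun a b _ => le_min (hxnn s hs0 a b) (Nat.cast_nonneg M)
      · exact fun a b _ => min_le_left _ _
    have hlb' : (⨅ s : ℝ, g s) ≤ zb k l := by
      rw [hzb]
      simp only [cavOpExt]
      exact le_ciInf hlb
    have heq2 : (⨅ s : ℝ, g s) = zb k l := le_antisymm hlb' hub
    rw [← heq2]
    refine hgtend.congr' ?_
    filter_upwards [eventually_ge_atTop (1:ℝ)] with s hs
    rw [hg]; simp only [max_eq_left hs]
  -- the fixed-point equation at infinity
  have hBar_le : ∀ i j, G.Adj i j → xbar i j ≤ cavOpBar G μ zb i j := by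
    intro i j hij
    rw [hxbar]
    refine iSup_le fun t => ?_
    set t' : ℝ := max t 1 with ht'def
    have ht'1 : (1:ℝ) ≤ t' := le_max_right t 1
    have ht'0 : (0:ℝ) < t' := lt_of_lt_of_le one_pos ht'1
    have e1 : cavOp G μ (x t') i j = cavOp G μ (fun k l => t' * zf t' k l) i j :=
      cavOp_congr (fun k l hkl => hxz t' ht'0 k l hkl) i j
    have h2 : cavOp G μ (fun k l => t' * zf t' k l) i j
        ≤ cavOp G μ (fun k l => t' * zb k l) i j := by
      refine cavOp_antitone (hcm i) hij (x := fun k l => t' * zb k l) ?_ ?_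
      · exact fun k l hkl => mul_nonneg ht'0.le (hzb_nonneg k l hkl)
      · exact fun k l hkl => mul_le_mul_of_nonneg_left (hclaimA t' ht'0 k l hkl) ht'0.le
    have step1 : x t' i j ≤ t' * cavOp G μ (fun k l => t' * zb k l) i j := by
      calc x t' i j = t' * cavOp G μ (x t') i j := hxfix t' ht'0 i j hij
        _ = t' * cavOp G μ (fun k l => t' * zf t' k l) i j := by rw [e1]
        _ ≤ t' * cavOp G μ (fun k l => t' * zb k l) i j :=
            mul_le_mul_of_nonneg_left h2 ht'0.le
    calc ENNReal.ofReal (x t' i j)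
        ≤ ENNReal.ofReal (t' * cavOp G μ (fun k l => t' * zb k l) i j) :=
          ENNReal.ofReal_le_ofReal step1
      _ ≤ ⨆ (u : ℝ) (_ : 1 ≤ u),
            ENNReal.ofReal (u * cavOp G μ (fun k l => u * zb k l) i j) :=
          le_iSup₂ (f := fun (u : ℝ) (_ : 1 ≤ u) =>
            ENNReal.ofReal (u * cavOp G μ (fun k l => u * zb k l) i j)) t' ht'1
      _ = cavOpBar G μ zb i j := rfl
  have hBar_ge : ∀ i j, G.Adj i j → cavOpBar G μ zb i j ≤ xbar i j := by
    intro i j hij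
    simp only [cavOpBar]
    refine iSup₂_le fun t ht => ?_
    by_cases hT : xbar i j = ⊤
    · rw [hT]; exact le_top
    have ht0 : (0:ℝ) < t := lt_of_lt_of_le one_pos ht
    have hxle : ∀ s : ℝ, 0 < s → x s i j ≤ (xbar i j).toReal := by
      intro s hs
      have h2 := ENNReal.toReal_mono hT (hle_xbar s hs i j hij)
      rwa [ENNReal.toReal_ofReal (hxnn s hs i j)] at h2
    have hbound : ∀ s : ℝ, max t 1 ≤ s →
        t * cavOp G μ (fun k l => t * zf s k l) i j ≤ (xbar i j).toReal := by
      intro s hsc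
      have hs0 : (0:ℝ) < s := lt_of_lt_of_le (lt_of_lt_of_le one_pos (le_max_right t 1)) hsc
      have hts : t ≤ s := le_trans (le_max_left t 1) hsc
      have h1 := cavOp_scaled_mono (hcm i) hij (w := zf s)
        (fun a b hab => hzf_nonneg s hs0 a b hab) ht0 hts
      have e1 : cavOp G μ (fun k l => s * zf s k l) i j = cavOp G μ (x s) i j :=
        (cavOp_congr (fun k l hkl => hxz s hs0 k l hkl) i j).symm
      calc t * cavOp G μ (fun k l => t * zf s k l) i j
          ≤ s * cavOp G μ (fun k l => s * zf s k l) i j := h1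
        _ = s * cavOp G μ (x s) i j := by rw [e1]
        _ = x s i j := (hxfix s hs0 i j hij).symm
        _ ≤ (xbar i j).toReal := hxle s hs0
    have hlim : Tendsto (fun s : ℝ => t * cavOp G μ (fun k l => t * zf s k l) i j) atTop
        (𝓝 (t * cavOp G μ (fun k l => t * zb k l) i j)) := by
      refine Tendsto.const_mul t ?_
      refine cavOp_tendsto (hcm i) hij (xn := fun s k l => t * zf s k l)
        (x := fun k l => t * zb k l) ?_ ?_
      · exact fun k l hkl => mul_nonneg ht0.le (hzb_nonneg k l hkl)
      · exact fun k l hkl => (hclaimB k l hkl).const_mul t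
    have h2 : t * cavOp G μ (fun k l => t * zb k l) i j ≤ (xbar i j).toReal :=
      le_of_tendsto hlim (eventually_atTop.2 ⟨max t 1, hbound⟩)
    calc ENNReal.ofReal (t * cavOp G μ (fun k l => t * zb k l) i j)
        ≤ ENNReal.ofReal (xbar i j).toReal := ENNReal.ofReal_le_ofReal h2
      _ = xbar i j := ENNReal.ofReal_toReal hT
  -- minimality
  have hmin : ∀ y : V → V → ℝ≥0∞, (∀ i j, G.Adj i j → 0 < y i j) →
      (∀ i j, G.Adj i j → y i j = cavOpBar G μ (cavOpExt G μ y) i j) →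
      ∀ i j, G.Adj i j → xbar i j ≤ y i j := by
    intro y hy hyfix i j hij
    set zy : V → V → ℝ := cavOpExt G μ y with hzy
    have hzy_nonneg : ∀ k l, G.Adj k l → 0 ≤ zy k l :=
      fun k l hkl => cavOpExt_nonneg (hcm k) hkl y
    have key : ∀ t : ℝ, 1 ≤ t → ∀ i' j', G.Adj i' j' →
        ENNReal.ofReal (x t i' j') ≤ y i' j' := by
      intro t ht i' j' hij'
      have ht0 : (0:ℝ) < t := lt_of_lt_of_le one_pos ht
      have hstep : ∀ v : V → V → ℝ, (∀ k l, G.Adj k l → 0 ≤ v k l) →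
          (∀ k l, G.Adj k l → ENNReal.ofReal (v k l) ≤ y k l) →
          (∀ k l, G.Adj k l → 0 ≤ cavStep G μ t (cavStep G μ t v) k l) ∧
          (∀ k l, G.Adj k l → ENNReal.ofReal (cavStep G μ t (cavStep G μ t v) k l) ≤ y k l) := by
        intro v hvnn hvle
        have hph_nn : ∀ k l, G.Adj k l → 0 ≤ cavStep G μ t v k l := fun k l hkl =>
          mul_nonneg ht0.le (cavOp_nonneg (hcm k) hkl hvnn)
        have hph_ge : ∀ k l, G.Adj k l → t * zy k l ≤ cavStep G μ t v k l := by
          intro k l hkl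
          have h1 : zy k l ≤ cavOp G μ v k l := cavOpExt_le (hcm k) hkl hvnn hvle
          exact mul_le_mul_of_nonneg_left h1 ht0.le
        constructor
        · intro k l hkl
          exact mul_nonneg ht0.le (cavOp_nonneg (hcm k) hkl hph_nn)
        · intro k l hkl
          have h3 : cavOp G μ (cavStep G μ t v) k l
              ≤ cavOp G μ (fun a b => t * zy a b) k l := by
            refine cavOp_antitone (hcm k) hkl (x := fun a b => t * zy a b) ?_ ?_
            · exact fun a b hab => mul_nonneg ht0.le (hzy_nonneg a b hab)
            · exact fun a b hab => hph_ge a b hab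
          have h2 : cavStep G μ t (cavStep G μ t v) k l
              ≤ t * cavOp G μ (fun a b => t * zy a b) k l :=
            mul_le_mul_of_nonneg_left h3 ht0.le
          calc ENNReal.ofReal (cavStep G μ t (cavStep G μ t v) k l)
              ≤ ENNReal.ofReal (t * cavOp G μ (fun a b => t * zy a b) k l) :=
                ENNReal.ofReal_le_ofReal h2
            _ ≤ ⨆ (u : ℝ) (_ : 1 ≤ u),
                  ENNReal.ofReal (u * cavOp G μ (fun a b => u * zy a b) k l) :=
                le_iSup₂ (f := fun (u : ℝ) (_ : 1 ≤ u) =>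
                  ENNReal.ofReal (u * cavOp G μ (fun a b => u * zy a b) k l)) t ht
            _ = cavOpBar G μ zy k l := rfl
            _ = y k l := (hyfix k l hkl).symm
      have hiter : ∀ n : ℕ,
          (∀ k l, G.Adj k l → 0 ≤ (cavStep G μ t)^[2*n] (fun _ _ => (0:ℝ)) k l) ∧
          (∀ k l, G.Adj k l →
            ENNReal.ofReal ((cavStep G μ t)^[2*n] (fun _ _ => (0:ℝ)) k l) ≤ y k l) := by
        intro n
        induction n with
        | zero => exact ⟨fun k l _ => le_rfl, fun k l _ => by simp⟩
        | succ n ih =>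
          have e1 : 2*(n+1) = (2*n) + 1 + 1 := by ring
          rw [e1, Function.iterate_succ_apply', Function.iterate_succ_apply']
          exact hstep _ ih.1 ih.2
      have h2n : Tendsto (fun n : ℕ => (cavStep G μ t)^[2*n] (fun _ _ => (0:ℝ)) i' j')
          atTop (𝓝 (x t i' j')) := by
        have h1 := hattr t ht0 (fun _ _ => (0:ℝ)) (fun _ _ => le_rfl) i' j' hij'
        exact h1.comp (tendsto_atTop_mono (fun n : ℕ => by omega : ∀ n : ℕ, n ≤ 2*n) tendsto_id)
      have h3 : Tendsto (fun n : ℕ =>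
          ENNReal.ofReal ((cavStep G μ t)^[2*n] (fun _ _ => (0:ℝ)) i' j'))
          atTop (𝓝 (ENNReal.ofReal (x t i' j'))) :=
        (ENNReal.continuous_ofReal.tendsto _).comp h2n
      exact le_of_tendsto h3 (Filter.Eventually.of_forall fun n => (hiter n).2 i' j' hij')
    rw [hxbar]
    exact iSup_le fun t => key (max t 1) (le_max_right t 1) i j hij
  exact ⟨xbar,
    fun i j hij s hs t ht hst => hmono i j hij s t hs hst,
    htendsto, hpos,
    fun i j hij => le_antisymm (hBar_le i j hij) (hBar_ge i j hij),
    hmin⟩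


end InfiniteActivity
end

section
/- Let G = (V,E) be a finite cavity-monotone network and for each t > 0 let x(t) be the unique solution of the cavity equation x = tΓ_G(x). Then t ↦ x(t) is coordinatewise nondecreasing and t ↦ x(t)/t is coordinatewise nonincreasing on (0,∞); consequently, for 0 < s ≤ t one has (s/t)·x(t) ≤ x(s) ≤ x(t) coordinatewise, and the map t ↦ x(t) is continuous on (0,∞). -/
open Finset Filter
open scoped Classical ENNReal

set_option linter.unusedSectionVars false

set_option maxHeartbeats 1000000

section Aux
variable {V : Type*} [DecidableEq V]

lemma sum_powerset_filter_split {B : Finset V} {e : V} (he : e ∉ B)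
    (p : Finset V → Prop) [DecidablePred p] (g : Finset V → ℝ) :
    ∑ S ∈ (insert e B).powerset.filter p, g S
      = ∑ S ∈ B.powerset.filter p, g S
        + ∑ S ∈ B.powerset.filter (fun S => p (insert e S)), g (insert e S) := by
  rw [Finset.sum_filter, Finset.sum_filter, Finset.sum_filter,
    Finset.sum_powerset_insert he]

/-- sums of nonneg terms over powersets with `∅`-term positive -/
lemma sum_powerset_pos {B : Finset V} {g : Finset V → ℝ}
    (hg : ∀ S ∈ B.powerset, 0 ≤ g S) (h0 : 0 < g ∅) :
    0 < ∑ S ∈ B.powerset, g S := by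
  have hmem : (∅ : Finset V) ∈ B.powerset := Finset.mem_powerset.2 (Finset.empty_subset _)
  calc 0 < g ∅ := h0
    _ ≤ ∑ S ∈ B.powerset, g S := Finset.single_le_sum hg hmem

end Aux

set_option linter.unusedSectionVars false

section Aux2
variable {V : Type*} [DecidableEq V] {A : Finset V} {ν : Finset V → ℝ}

lemma sum_pair_split {C : Finset V} {e f : V} (he : e ∉ C) (hf : f ∉ C) (hef : e ≠ f)
    (g : Finset V → ℝ) :
    ∑ S ∈ (insert e (insert f C)).powerset, g S
      = (∑ S ∈ C.powerset, g S + ∑ S ∈ C.powerset, g (insert f S))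
        + (∑ S ∈ C.powerset, g (insert e S)
          + ∑ S ∈ C.powerset, g (insert e (insert f S))) := by
  rw [Finset.sum_powerset_insert (by simp [hef, he]), Finset.sum_powerset_insert hf,
    Finset.sum_powerset_insert hf]

lemma sum_pair_split_filter {C : Finset V} {e f : V} (he : e ∉ C) (hf : f ∉ C) (hef : e ≠ f)
    (p : Finset V → Prop) [DecidablePred p] (g : Finset V → ℝ) :
    ∑ S ∈ (insert e (insert f C)).powerset.filter p, g S
      = (∑ S ∈ C.powerset.filter p, g S
          + ∑ S ∈ C.powerset.filter (fun S => p (insert f S)), g (insert f S))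
        + (∑ S ∈ C.powerset.filter (fun S => p (insert e S)), g (insert e S)
          + ∑ S ∈ C.powerset.filter (fun S => p (insert e (insert f S))),
              g (insert e (insert f S))) := by
  rw [sum_powerset_filter_split (by simp [hef, he]) p g, sum_powerset_filter_split hf,
    sum_powerset_filter_split hf]

lemma lZ_pos (hν0 : ∀ S ∈ A.powerset, 0 ≤ ν S) (h0 : 0 < ν ∅) (w : V → ℝ)
    (hw : ∀ k ∈ A, 0 ≤ w k) : 0 < lZ A ν w := by
  refine sum_powerset_pos (fun S hS => ?_) (by simpa using h0)
  exact mul_nonneg (hν0 S hS)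
    (Finset.prod_nonneg fun k hk => hw k (Finset.mem_powerset.1 hS hk))

end Aux2

section Aux3
variable {V : Type*} [DecidableEq V] {A : Finset V} {ν : Finset V → ℝ}

lemma rayleigh_coeff (hν0 : ∀ S ∈ A.powerset, 0 ≤ ν S) (h0 : 0 < ν ∅)
    (hR : lRayleigh A ν) {e f : V} (he : e ∈ A) (hf : f ∈ A.erase e)
    (w : V → ℝ) (hw : ∀ k ∈ A.erase e, 0 < w k) :
    (∑ S ∈ ((A.erase e).erase f).powerset, ν (insert e (insert f S)) * ∏ k ∈ S, w k) *
      (∑ S ∈ ((A.erase e).erase f).powerset, ν S * ∏ k ∈ S, w k)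
    ≤ (∑ S ∈ ((A.erase e).erase f).powerset, ν (insert e S) * ∏ k ∈ S, w k) *
      (∑ S ∈ ((A.erase e).erase f).powerset, ν (insert f S) * ∏ k ∈ S, w k) := by
  classical
  set C := (A.erase e).erase f with hC
  have hfA : f ∈ A := Finset.mem_of_mem_erase hf
  have hfe : f ≠ e := Finset.ne_of_mem_erase hf
  have hef : e ≠ f := hfe.symm
  have heC : e ∉ C := by
    intro h
    exact (Finset.mem_erase.1 (Finset.mem_of_mem_erase h)).1 rfl
  have hfC : f ∉ C := Finset.notMem_erase f _
  have hBe : A.erase e = insert f C := (Finset.insert_erase hf).symm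
  have hAe : A = insert e (insert f C) := by
    rw [← hBe]; exact (Finset.insert_erase he).symm
  set u : V → ℝ := fun k => if k = e then 1 else if k = f then 1 else w k with hu
  have huA : ∀ k ∈ A, 0 < u k := by
    intro k hk
    by_cases h1 : k = e
    · simp [hu, h1]
    · by_cases h2 : k = f
      · simp [hu, h1, h2]
      · simpa [hu, h1, h2] using hw k (Finset.mem_erase.2 ⟨h1, hk⟩)
  -- products over sets built from S ⊆ C
  have hp1 : ∀ S ∈ C.powerset, ∏ k ∈ S, u k = ∏ k ∈ S, w k := by
    intro S hS
    refine Finset.prod_congr rfl fun k hk => ?_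
    have hkC : k ∈ C := Finset.mem_powerset.1 hS hk
    have h1 : k ≠ f := Finset.ne_of_mem_erase hkC
    have h2 : k ≠ e := Finset.ne_of_mem_erase (Finset.mem_of_mem_erase hkC)
    simp [hu, h1, h2]
  have hnSf : ∀ S ∈ C.powerset, f ∉ S :=
    fun S hS h => hfC (Finset.mem_powerset.1 hS h)
  have hnSe : ∀ S ∈ C.powerset, e ∉ S :=
    fun S hS h => heC (Finset.mem_powerset.1 hS h)
  have hp2 : ∀ S ∈ C.powerset, ∏ k ∈ insert f S, u k = ∏ k ∈ S, w k := by
    intro S hS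
    rw [Finset.prod_insert (hnSf S hS), hp1 S hS]
    simp [hu]
  have hp3 : ∀ S ∈ C.powerset, ∏ k ∈ insert e S, u k = ∏ k ∈ S, w k := by
    intro S hS
    rw [Finset.prod_insert (hnSe S hS), hp1 S hS]
    simp [hu]
  have hp4 : ∀ S ∈ C.powerset, ∏ k ∈ insert e (insert f S), u k = ∏ k ∈ S, w k := by
    intro S hS
    rw [Finset.prod_insert (by simp [hef, hnSe S hS]), hp2 S hS]
    simp [hu]
  set a := ∑ S ∈ C.powerset, ν (insert e S) * ∏ k ∈ S, w k with ha
  set b := ∑ S ∈ C.powerset, ν (insert e (insert f S)) * ∏ k ∈ S, w k with hb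
  set c := ∑ S ∈ C.powerset, ν S * ∏ k ∈ S, w k with hc2
  set d := ∑ S ∈ C.powerset, ν (insert f S) * ∏ k ∈ S, w k with hd
  have hZval : lZ A ν u = (c + d) + (a + b) := by
    rw [lZ, hAe, sum_pair_split heC hfC hef]
    congr 1
    · congr 1
      · exact Finset.sum_congr rfl fun S hS => by rw [hp1 S hS]
      · exact Finset.sum_congr rfl fun S hS => by rw [hp2 S hS]
    · congr 1
      · exact Finset.sum_congr rfl fun S hS => by rw [hp3 S hS]
      · exact Finset.sum_congr rfl fun S hS => by rw [hp4 S hS]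
  have hZpos : 0 < lZ A ν u := lZ_pos hν0 h0 u fun k hk => (huA k hk).le
  have hnef : lProb A ν u (fun S => e ∈ S ∧ f ∈ S) = b / lZ A ν u := by
    rw [lProb]
    congr 1
    rw [hAe, sum_pair_split_filter heC hfC hef]
    rw [@Finset.filter_false_of_mem _ _ (fun _ => Classical.propDecidable _) _ (fun S hS => by
        simp [hnSe S hS, hnSf S hS] : ∀ S ∈ C.powerset, ¬(e ∈ S ∧ f ∈ S))]
    rw [@Finset.filter_false_of_mem _ _ (fun _ => Classical.propDecidable _) _ (fun S hS => by
        simp [hnSe S hS, hef] : ∀ S ∈ C.powerset, ¬(e ∈ insert f S ∧ f ∈ insert f S))]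
    rw [@Finset.filter_false_of_mem _ _ (fun _ => Classical.propDecidable _) _ (fun S hS => by
        simp [hnSf S hS, hfe] : ∀ S ∈ C.powerset, ¬(e ∈ insert e S ∧ f ∈ insert e S))]
    rw [@Finset.filter_true_of_mem _ _ (fun _ => Classical.propDecidable _) _ (fun S hS => by
        simp : ∀ S ∈ C.powerset, e ∈ insert e (insert f S) ∧ f ∈ insert e (insert f S))]
    simp only [Finset.sum_empty, zero_add, add_zero]
    exact Finset.sum_congr rfl fun S hS => by rw [hp4 S hS]
  have hne : lProb A ν u (fun S => e ∈ S) = (a + b) / lZ A ν u := by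
    rw [lProb]
    congr 1
    rw [hAe, sum_pair_split_filter heC hfC hef]
    rw [@Finset.filter_false_of_mem _ _ (fun _ => Classical.propDecidable _) _ (fun S hS => by simp [hnSe S hS]
        : ∀ S ∈ C.powerset, ¬ e ∈ S)]
    rw [@Finset.filter_false_of_mem _ _ (fun _ => Classical.propDecidable _) _ (fun S hS => by simp [hnSe S hS, hef]
        : ∀ S ∈ C.powerset, ¬ e ∈ insert f S)]
    rw [@Finset.filter_true_of_mem _ _ (fun _ => Classical.propDecidable _) _ (fun S hS => by simp
        : ∀ S ∈ C.powerset, e ∈ insert e S)]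
    rw [@Finset.filter_true_of_mem _ _ (fun _ => Classical.propDecidable _) _ (fun S hS => by simp
        : ∀ S ∈ C.powerset, e ∈ insert e (insert f S))]
    simp only [Finset.sum_empty, zero_add, add_zero]
    congr 1
    · exact Finset.sum_congr rfl fun S hS => by rw [hp3 S hS]
    · exact Finset.sum_congr rfl fun S hS => by rw [hp4 S hS]
  have hnf : lProb A ν u (fun S => f ∈ S) = (d + b) / lZ A ν u := by
    rw [lProb]
    congr 1
    rw [hAe, sum_pair_split_filter heC hfC hef]
    rw [@Finset.filter_false_of_mem _ _ (fun _ => Classical.propDecidable _) _ (fun S hS => by simp [hnSf S hS]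
        : ∀ S ∈ C.powerset, ¬ f ∈ S)]
    rw [@Finset.filter_false_of_mem _ _ (fun _ => Classical.propDecidable _) _ (fun S hS => by simp [hnSf S hS, hfe]
        : ∀ S ∈ C.powerset, ¬ f ∈ insert e S)]
    rw [@Finset.filter_true_of_mem _ _ (fun _ => Classical.propDecidable _) _ (fun S hS => by simp
        : ∀ S ∈ C.powerset, f ∈ insert f S)]
    rw [@Finset.filter_true_of_mem _ _ (fun _ => Classical.propDecidable _) _ (fun S hS => by simp
        : ∀ S ∈ C.powerset, f ∈ insert e (insert f S))]
    simp only [Finset.sum_empty, zero_add, add_zero]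
    congr 1
    · exact Finset.sum_congr rfl fun S hS => by rw [hp2 S hS]
    · exact Finset.sum_congr rfl fun S hS => by rw [hp4 S hS]
  have hray := hR u huA e he f hfA hef
  rw [hnef, hne, hnf] at hray
  set Z := lZ A ν u with hZ
  rw [div_mul_div_comm, div_le_div_iff₀ hZpos (by positivity)] at hray
  have h2 : b * Z ≤ (a + b) * (d + b) := by
    nlinarith [hZpos, hray]
  rw [hZval] at h2
  nlinarith [h2]

end Aux3

section Aux4
variable {V : Type*} [DecidableEq V] {A : Finset V} {ν : Finset V → ℝ}

lemma sizeinc_coeff (hν0 : ∀ S ∈ A.powerset, 0 ≤ ν S) (h0 : 0 < ν ∅)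
    (hSI : lSizeInc A ν) {e : V} (he : e ∈ A) (u : V → ℝ) (hu : ∀ k ∈ A, 0 < u k) :
    (∑ S ∈ (A.erase e).powerset, (S.card : ℝ) * ν S * ∏ k ∈ S, u k) *
      (∑ S ∈ (A.erase e).powerset, ν (insert e S) * ∏ k ∈ S, u k)
    < (∑ S ∈ (A.erase e).powerset, ((S.card : ℝ) + 1) * ν (insert e S) * ∏ k ∈ S, u k) *
      (∑ S ∈ (A.erase e).powerset, ν S * ∏ k ∈ S, u k) := by
  classical
  set B := A.erase e with hB
  have heB : e ∉ B := Finset.notMem_erase e A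
  have hAe : A = insert e B := (Finset.insert_erase he).symm
  have hnSe : ∀ S ∈ B.powerset, e ∉ S := fun S hS h => heB (Finset.mem_powerset.1 hS h)
  set M := ∑ S ∈ B.powerset, (S.card : ℝ) * ν S * ∏ k ∈ S, u k with hM
  set N := ∑ S ∈ B.powerset, ν (insert e S) * ∏ k ∈ S, u k with hN
  set N' := ∑ S ∈ B.powerset, ((S.card : ℝ) + 1) * ν (insert e S) * ∏ k ∈ S, u k with hN'
  set D := ∑ S ∈ B.powerset, ν S * ∏ k ∈ S, u k with hD
  have hprod : ∀ S ∈ B.powerset, ∏ k ∈ insert e S, u k = u e * ∏ k ∈ S, u k :=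
    fun S hS => Finset.prod_insert (hnSe S hS)
  have hcard : ∀ S ∈ B.powerset, ((insert e S).card : ℝ) = (S.card : ℝ) + 1 := by
    intro S hS
    rw [Finset.card_insert_of_notMem (hnSe S hS)]
    push_cast; ring
  have hZval : lZ A ν u = D + u e * N := by
    rw [lZ, hAe, Finset.sum_powerset_insert heB]
    congr 1
    rw [Finset.mul_sum]
    exact Finset.sum_congr rfl fun S hS => by rw [hprod S hS]; ring
  have hZpos : 0 < lZ A ν u := lZ_pos hν0 h0 u fun k hk => (hu k hk).le
  have hue : 0 < u e := hu e he
  have hprob : lProb A ν u (fun S => e ∈ S) = (u e * N) / lZ A ν u := by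
    rw [lProb]
    congr 1
    rw [hAe, sum_powerset_filter_split heB]
    rw [@Finset.filter_false_of_mem _ _ (fun _ => Classical.propDecidable _) _
      (fun S hS => by simp [hnSe S hS] : ∀ S ∈ B.powerset, ¬ e ∈ S)]
    rw [@Finset.filter_true_of_mem _ _ (fun _ => Classical.propDecidable _) _
      (fun S hS => by simp : ∀ S ∈ B.powerset, e ∈ insert e S)]
    simp only [Finset.sum_empty, zero_add]
    rw [Finset.mul_sum]
    exact Finset.sum_congr rfl fun S hS => by rw [hprod S hS]; ring
  have henergy : lEnergy A ν u = (M + u e * N') / lZ A ν u := by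
    rw [lEnergy]
    congr 1
    rw [hAe, Finset.sum_powerset_insert heB]
    congr 1
    rw [Finset.mul_sum]
    refine Finset.sum_congr rfl fun S hS => ?_
    rw [hprod S hS, hcard S hS]; ring
  have henergyin : lEnergyIn A ν e u = (u e * N') / lZ A ν u := by
    rw [lEnergyIn]
    congr 1
    rw [hAe, sum_powerset_filter_split heB]
    rw [Finset.filter_false_of_mem (fun S hS => by simp [hnSe S hS] : ∀ S ∈ B.powerset, ¬ e ∈ S)]
    rw [Finset.filter_true_of_mem (fun S hS => by simp : ∀ S ∈ B.powerset, e ∈ insert e S)]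
    simp only [Finset.sum_empty, zero_add]
    rw [Finset.mul_sum]
    refine Finset.sum_congr rfl fun S hS => ?_
    rw [hprod S hS, hcard S hS]; ring
  have hsi := hSI u hu e he
  rw [hprob, henergy, henergyin] at hsi
  set Z := lZ A ν u with hZ
  rw [div_mul_div_comm, div_lt_div_iff₀ (by positivity) hZpos] at hsi
  -- hsi : (M + u e * N') * (u e * N) * Z < u e * N' * (Z * Z)
  have h2 : (M + u e * N') * (u e * N) < u e * N' * Z := by
    have hne : Z ≠ 0 := ne_of_gt hZpos
    nlinarith [hsi, hZpos]
  rw [hZval] at h2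
  nlinarith [h2, hue]

end Aux4

section Aux5
variable {V : Type*} [DecidableEq V] {A : Finset V} {ν : Finset V → ℝ}

lemma insert_sum_le {C : Finset V} (hCA : C ⊆ A) (hν0 : ∀ S ∈ A.powerset, 0 ≤ ν S)
    {g : V} (hgC : g ∉ C) (hgA : g ∈ A) :
    ∑ S ∈ C.powerset, ν (insert g S) ≤ ∑ S ∈ A.powerset, ν S := by
  have hinj : ∀ S ∈ C.powerset, ∀ T ∈ C.powerset, insert g S = insert g T → S = T := by
    intro S hS T hT hST
    have hS' : g ∉ S := fun h => hgC (Finset.mem_powerset.1 hS h)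
    have hT' : g ∉ T := fun h => hgC (Finset.mem_powerset.1 hT h)
    rw [← Finset.erase_insert hS', ← Finset.erase_insert hT', hST]
  rw [← Finset.sum_image hinj]
  refine Finset.sum_le_sum_of_subset_of_nonneg ?_ (fun S hS _ => hν0 S hS)
  intro T hT
  obtain ⟨S, hS, rfl⟩ := Finset.mem_image.1 hT
  exact Finset.mem_powerset.2 (Finset.insert_subset hgA
    ((Finset.mem_powerset.1 hS).trans hCA))

lemma nu_singleton_pos (hν0 : ∀ S ∈ A.powerset, 0 ≤ ν S) (h0 : 0 < ν ∅)
    (hR : lRayleigh A ν) (hSI : lSizeInc A ν) {e : V} (he : e ∈ A) : 0 < ν {e} := by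
  classical
  by_contra hcon
  have heP : ({e} : Finset V) ∈ A.powerset :=
    Finset.mem_powerset.2 (Finset.singleton_subset_iff.2 he)
  have h0e : ν {e} = 0 := le_antisymm (not_lt.1 hcon) (hν0 _ heP)
  by_cases hex : ∃ S ∈ A.powerset, e ∈ S ∧ 0 < ν S
  · -- minimal positive set containing e
    set T := A.powerset.filter (fun S => e ∈ S ∧ 0 < ν S) with hT
    have hTne : T.Nonempty := by
      obtain ⟨S, hS, h1, h2⟩ := hex
      exact ⟨S, Finset.mem_filter.2 ⟨hS, h1, h2⟩⟩
    obtain ⟨S₀, hS₀T, hS₀min⟩ := Finset.exists_min_image T Finset.card hTne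
    obtain ⟨hS₀P, heS₀, hνS₀⟩ := Finset.mem_filter.1 hS₀T
    have hS₀A : S₀ ⊆ A := Finset.mem_powerset.1 hS₀P
    set m := S₀.card with hm
    have hmmin : ∀ S ∈ A.powerset, e ∈ S → 0 < ν S → m ≤ S.card := by
      intro S hS h1 h2
      exact hS₀min S (Finset.mem_filter.2 ⟨hS, h1, h2⟩)
    -- S₀ ≠ {e}, find f
    have hne : S₀ ≠ {e} := fun h => by rw [h, h0e] at hνS₀; exact lt_irrefl 0 hνS₀
    have hfex : (S₀.erase e).Nonempty := by
      rcases Finset.eq_empty_or_nonempty (S₀.erase e) with h | h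
      · exfalso
        apply hne
        apply Finset.Subset.antisymm
        · intro k hk
          rcases eq_or_ne k e with rfl | hk'
          · exact Finset.mem_singleton_self _
          · exact absurd (Finset.mem_erase.2 ⟨hk', hk⟩) (by simp [h])
        · exact Finset.singleton_subset_iff.2 heS₀
      · exact h
    obtain ⟨f, hf⟩ := hfex
    have hfe : f ≠ e := Finset.ne_of_mem_erase hf
    have hfS₀ : f ∈ S₀ := Finset.mem_of_mem_erase hf
    have hfAe : f ∈ A.erase e := Finset.mem_erase.2 ⟨hfe, hS₀A hfS₀⟩
    set C := (A.erase e).erase f with hC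
    have heC : e ∉ C := by
      intro h
      exact (Finset.mem_erase.1 (Finset.mem_of_mem_erase h)).1 rfl
    have hfC : f ∉ C := Finset.notMem_erase f _
    have hCA : C ⊆ A := (Finset.erase_subset _ _).trans (Finset.erase_subset _ _)
    have hm2 : 2 ≤ m := by
      by_contra hm2
      push_neg at hm2
      interval_cases hmv : m
      · rw [Finset.card_eq_zero] at hmv
        rw [hmv] at heS₀
        exact absurd heS₀ (Finset.notMem_empty e)
      · rw [Finset.card_eq_one] at hmv
        obtain ⟨a, ha⟩ := hmv
        rw [ha] at heS₀
        rw [Finset.mem_singleton] at heS₀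
        rw [ha, ← heS₀] at hne
        exact hne rfl
    set K := ∑ S ∈ A.powerset, ν S with hK
    have hKpos : 0 < K := lZ_pos hν0 h0 (fun _ => 1) (fun _ _ => zero_le_one) |>.trans_le
      (le_of_eq (by rw [lZ]; exact Finset.sum_congr rfl fun S _ => by simp))
    -- choose epsilon
    set ε := min 1 (ν ∅ * ν S₀ / (2 * K ^ 2)) with hε
    have hεpos : 0 < ε := by
      apply lt_min one_pos
      positivity
    have hε1 : ε ≤ 1 := min_le_left _ _
    have hrc := rayleigh_coeff hν0 h0 hR he hfAe (fun _ => ε) (fun k _ => hεpos)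
    set a := ∑ S ∈ C.powerset, ν (insert e S) * ∏ k ∈ S, (fun _ => ε) k with ha
    set b := ∑ S ∈ C.powerset, ν (insert e (insert f S)) * ∏ k ∈ S, (fun _ => ε) k with hb
    set c := ∑ S ∈ C.powerset, ν S * ∏ k ∈ S, (fun _ => ε) k with hc
    set d := ∑ S ∈ C.powerset, ν (insert f S) * ∏ k ∈ S, (fun _ => ε) k with hd
    -- lower bound for b * c
    have hS₀' : (S₀.erase e).erase f ∈ C.powerset := by
      refine Finset.mem_powerset.2 ?_
      intro k hk
      have h1 := Finset.mem_erase.1 hk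
      have h2 := Finset.mem_erase.1 h1.2
      exact Finset.mem_erase.2 ⟨h1.1, Finset.mem_erase.2 ⟨h2.1, hS₀A h2.2⟩⟩
    have hS₀eq : insert e (insert f ((S₀.erase e).erase f)) = S₀ := by
      rw [Finset.insert_erase (Finset.mem_erase.2 ⟨hfe, hfS₀⟩), Finset.insert_erase heS₀]
    have hcard' : ((S₀.erase e).erase f).card = m - 2 := by
      rw [Finset.card_erase_of_mem hf, Finset.card_erase_of_mem heS₀]
      omega
    have hblow : ν S₀ * ε ^ (m - 2) ≤ b := by
      have := Finset.single_le_sum (f := fun S => ν (insert e (insert f S)) * ∏ k ∈ S, (fun _ => ε) k)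
        (fun S hS => by
          refine mul_nonneg (hν0 _ (Finset.mem_powerset.2 ?_)) (by positivity)
          refine Finset.insert_subset he (Finset.insert_subset (hS₀A hfS₀) ?_)
          exact (Finset.mem_powerset.1 hS).trans hCA) hS₀'
      calc ν S₀ * ε ^ (m - 2)
          = ν (insert e (insert f ((S₀.erase e).erase f))) *
              ∏ k ∈ (S₀.erase e).erase f, (fun _ => ε) k := by
            rw [hS₀eq, Finset.prod_const, hcard']
        _ ≤ b := this
    have hclow : ν ∅ ≤ c := by
      have := Finset.single_le_sum (f := fun S => ν S * ∏ k ∈ S, (fun _ => ε) k)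
        (fun S hS => mul_nonneg (hν0 _ (Finset.mem_powerset.2
          ((Finset.mem_powerset.1 hS).trans hCA))) (by positivity))
        (Finset.mem_powerset.2 (Finset.empty_subset C))
      calc ν ∅ = ν ∅ * ∏ k ∈ (∅ : Finset V), (fun _ => ε) k := by simp
        _ ≤ c := this
    -- upper bounds
    have haup : a ≤ ε ^ (m - 1) * K := by
      have h1 : a ≤ ∑ S ∈ C.powerset, ν (insert e S) * ε ^ (m - 1) := by
        refine Finset.sum_le_sum fun S hS => ?_
        have hins : insert e S ∈ A.powerset := Finset.mem_powerset.2
          (Finset.insert_subset he ((Finset.mem_powerset.1 hS).trans hCA))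
        rcases lt_or_eq_of_le (hν0 _ hins) with hpos | hzero
        · have hcm : m ≤ (insert e S).card := hmmin _ hins (Finset.mem_insert_self e S) hpos
          have heS : e ∉ S := fun h => heC (Finset.mem_powerset.1 hS h)
          rw [Finset.card_insert_of_notMem heS] at hcm
          have hSm : m - 1 ≤ S.card := by omega
          rw [Finset.prod_const]
          exact mul_le_mul_of_nonneg_left (pow_le_pow_of_le_one hεpos.le hε1 hSm) (hν0 _ hins)
        · rw [← hzero]; simp
      calc a ≤ ∑ S ∈ C.powerset, ν (insert e S) * ε ^ (m - 1) := h1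
        _ = ε ^ (m - 1) * ∑ S ∈ C.powerset, ν (insert e S) := by
            rw [Finset.mul_sum]; exact Finset.sum_congr rfl fun S _ => by ring
        _ ≤ ε ^ (m - 1) * K := by
            refine mul_le_mul_of_nonneg_left ?_ (by positivity)
            exact insert_sum_le hCA hν0 heC he
    have hdup : d ≤ K := by
      have h1 : d ≤ ∑ S ∈ C.powerset, ν (insert f S) := by
        refine Finset.sum_le_sum fun S hS => ?_
        have hins : insert f S ∈ A.powerset := Finset.mem_powerset.2
          (Finset.insert_subset (hS₀A hfS₀) ((Finset.mem_powerset.1 hS).trans hCA))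
        rw [Finset.prod_const]
        calc ν (insert f S) * ε ^ S.card ≤ ν (insert f S) * 1 :=
              mul_le_mul_of_nonneg_left (pow_le_one₀ hεpos.le hε1) (hν0 _ hins)
          _ = ν (insert f S) := mul_one _
      exact h1.trans (insert_sum_le hCA hν0 hfC (hS₀A hfS₀))
    -- combine
    have hbnn : 0 ≤ b := le_trans (mul_nonneg hνS₀.le (by positivity)) hblow
    have hdnn : 0 ≤ d := Finset.sum_nonneg fun S hS => mul_nonneg
      (hν0 _ (Finset.mem_powerset.2 (Finset.insert_subset (hS₀A hfS₀)
        ((Finset.mem_powerset.1 hS).trans hCA)))) (by positivity)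
    have hmain : ν ∅ * ν S₀ * ε ^ (m - 2) ≤ ε ^ (m - 1) * K * K := by
      calc ν ∅ * ν S₀ * ε ^ (m - 2) = (ν S₀ * ε ^ (m - 2)) * ν ∅ := by ring
        _ ≤ b * c := mul_le_mul hblow hclow h0.le hbnn
        _ ≤ a * d := hrc
        _ ≤ ε ^ (m - 1) * K * d := mul_le_mul_of_nonneg_right haup hdnn
        _ ≤ ε ^ (m - 1) * K * K := mul_le_mul_of_nonneg_left hdup (by positivity)
    have hpow : ε ^ (m - 1) = ε * ε ^ (m - 2) := by
      have : m - 1 = (m - 2) + 1 := by omega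
      rw [this, pow_succ]; ring
    rw [hpow] at hmain
    have hfin : ν ∅ * ν S₀ ≤ ε * K * K := by
      have hεp : 0 < ε ^ (m - 2) := by positivity
      refine le_of_mul_le_mul_right ?_ hεp
      calc ν ∅ * ν S₀ * ε ^ (m - 2) ≤ ε * ε ^ (m - 2) * K * K := hmain
        _ = ε * K * K * ε ^ (m - 2) := by ring
    have hεle : ε ≤ ν ∅ * ν S₀ / (2 * K ^ 2) := min_le_right _ _
    have : ε * K * K ≤ ν ∅ * ν S₀ / 2 := by
      have h2 : ε * K ^ 2 ≤ (ν ∅ * ν S₀ / (2 * K ^ 2)) * K ^ 2 :=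
        mul_le_mul_of_nonneg_right hεle (by positivity)
      have h3 : (ν ∅ * ν S₀ / (2 * K ^ 2)) * K ^ 2 = ν ∅ * ν S₀ / 2 := by
        field_simp
      nlinarith [h2, h3]
    nlinarith [hfin, this, mul_pos h0 hνS₀]
  · -- no positive set contains e : contradict sizeinc_coeff
    push_neg at hex
    have hzero : ∀ S ∈ (A.erase e).powerset, ν (insert e S) = 0 := by
      intro S hS
      have hins : insert e S ∈ A.powerset := Finset.mem_powerset.2
        (Finset.insert_subset he ((Finset.mem_powerset.1 hS).trans (Finset.erase_subset _ _)))
      exact le_antisymm (hex _ hins (Finset.mem_insert_self e S)) (hν0 _ hins)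
    have hsc := sizeinc_coeff hν0 h0 hSI he (fun _ => 1) (fun _ _ => one_pos)
    have hN : (∑ S ∈ (A.erase e).powerset, ν (insert e S) * ∏ k ∈ S, (fun _ => (1:ℝ)) k) = 0 :=
      Finset.sum_eq_zero fun S hS => by rw [hzero S hS]; ring
    have hN' : (∑ S ∈ (A.erase e).powerset, ((S.card : ℝ) + 1) * ν (insert e S) *
        ∏ k ∈ S, (fun _ => (1:ℝ)) k) = 0 :=
      Finset.sum_eq_zero fun S hS => by rw [hzero S hS]; ring
    rw [hN, hN'] at hsc
    simp at hsc

end Aux5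

section Aux6
variable {V : Type*} [DecidableEq V] {A : Finset V} {ν : Finset V → ℝ}

lemma lGamma_congr {e : V} {w w' : V → ℝ} (h : ∀ k ∈ A.erase e, w k = w' k) :
    lGamma A ν e w = lGamma A ν e w' := by
  rw [lGamma, lGamma]
  congr 1 <;>
  · refine Finset.sum_congr rfl fun S hS => ?_
    rw [Finset.prod_congr rfl fun k hk => h k (Finset.mem_powerset.1 hS hk)]

lemma lGamma_den_pos (hν0 : ∀ S ∈ A.powerset, 0 ≤ ν S) (h0 : 0 < ν ∅) {e : V}
    (w : V → ℝ) (hw : ∀ k ∈ A.erase e, 0 ≤ w k) :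
    0 < ∑ S ∈ (A.erase e).powerset, ν S * ∏ k ∈ S, w k := by
  refine sum_powerset_pos (fun S hS => ?_) (by simpa using h0)
  have hSA : S ⊆ A := (Finset.mem_powerset.1 hS).trans (Finset.erase_subset _ _)
  exact mul_nonneg (hν0 S (Finset.mem_powerset.2 hSA))
    (Finset.prod_nonneg fun k hk => hw k (Finset.mem_powerset.1 hS hk))

lemma lGamma_num_pos (hν0 : ∀ S ∈ A.powerset, 0 ≤ ν S) {e : V} (he : e ∈ A)
    (hsingle : 0 < ν {e}) (w : V → ℝ) (hw : ∀ k ∈ A.erase e, 0 ≤ w k) :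
    0 < ∑ S ∈ (A.erase e).powerset, ν (insert e S) * ∏ k ∈ S, w k := by
  refine sum_powerset_pos (fun S hS => ?_) (by simpa using hsingle)
  have hSA : insert e S ⊆ A := Finset.insert_subset he
    ((Finset.mem_powerset.1 hS).trans (Finset.erase_subset _ _))
  exact mul_nonneg (hν0 _ (Finset.mem_powerset.2 hSA))
    (Finset.prod_nonneg fun k hk => hw k (Finset.mem_powerset.1 hS hk))

lemma lGamma_pos (hν0 : ∀ S ∈ A.powerset, 0 ≤ ν S) (h0 : 0 < ν ∅) {e : V} (he : e ∈ A)
    (hsingle : 0 < ν {e}) (w : V → ℝ) (hw : ∀ k ∈ A.erase e, 0 ≤ w k) :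
    0 < lGamma A ν e w :=
  div_pos (lGamma_num_pos hν0 he hsingle w hw) (lGamma_den_pos hν0 h0 w hw)

lemma lGamma_update_le (hν0 : ∀ S ∈ A.powerset, 0 ≤ ν S) (h0 : 0 < ν ∅)
    (hR : lRayleigh A ν) {e f : V} (he : e ∈ A) (hf : f ∈ A.erase e)
    (w : V → ℝ) (hw : ∀ k ∈ A.erase e, 0 < w k) {c' : ℝ} (hc : w f ≤ c') :
    lGamma A ν e (Function.update w f c') ≤ lGamma A ν e w := by
  classical
  set C := (A.erase e).erase f with hC
  have hfC : f ∉ C := Finset.notMem_erase f _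
  have heC : e ∉ C := fun h =>
    (Finset.mem_erase.1 (Finset.mem_of_mem_erase h)).1 rfl
  have hBe : A.erase e = insert f C := (Finset.insert_erase hf).symm
  have hnSf : ∀ S ∈ C.powerset, f ∉ S := fun S hS h => hfC (Finset.mem_powerset.1 hS h)
  set a := ∑ S ∈ C.powerset, ν (insert e S) * ∏ k ∈ S, w k with ha
  set b := ∑ S ∈ C.powerset, ν (insert e (insert f S)) * ∏ k ∈ S, w k with hb
  set cc := ∑ S ∈ C.powerset, ν S * ∏ k ∈ S, w k with hcc
  set d := ∑ S ∈ C.powerset, ν (insert f S) * ∏ k ∈ S, w k with hd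
  have hprodw : ∀ S ∈ C.powerset, ∏ k ∈ S, Function.update w f c' k = ∏ k ∈ S, w k := by
    intro S hS
    refine Finset.prod_congr rfl fun k hk => ?_
    have hkf : k ≠ f := by
      intro h
      exact hnSf S hS (h ▸ hk)
    exact Function.update_of_ne hkf _ _
  have hnum : ∀ (v : V → ℝ), (∀ S ∈ C.powerset, ∏ k ∈ S, v k = ∏ k ∈ S, w k) →
      ∀ g : Finset V → ℝ,
      ∑ S ∈ (A.erase e).powerset, g S * ∏ k ∈ S, v k
        = (∑ S ∈ C.powerset, g S * ∏ k ∈ S, w k)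
          + v f * ∑ S ∈ C.powerset, g (insert f S) * ∏ k ∈ S, w k := by
    intro v hv g
    rw [hBe, Finset.sum_powerset_insert hfC]
    congr 1
    · exact Finset.sum_congr rfl fun S hS => by rw [hv S hS]
    · rw [Finset.mul_sum]
      refine Finset.sum_congr rfl fun S hS => ?_
      rw [Finset.prod_insert (hnSf S hS), hv S hS]
      ring
  have hwf : 0 < w f := hw f hf
  have hc'pos : 0 < c' := lt_of_lt_of_le hwf hc
  have hvf : Function.update w f c' f = c' := Function.update_self f c' w
  have hupd := fun g => hnum (Function.update w f c') hprodw g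
  have horig := fun g => hnum w (fun S hS => rfl) g
  have hbnn : 0 ≤ b := Finset.sum_nonneg fun S hS => mul_nonneg
    (hν0 _ (Finset.mem_powerset.2 (Finset.insert_subset he (Finset.insert_subset
      (Finset.mem_of_mem_erase hf)
      (((Finset.mem_powerset.1 hS).trans (Finset.erase_subset _ _)).trans
        (Finset.erase_subset _ _))))))
    (Finset.prod_nonneg fun k hk => (hw k (((Finset.mem_powerset.1 hS).trans
      (Finset.erase_subset _ _)) hk)).le)
  have hdnn : 0 ≤ d := Finset.sum_nonneg fun S hS => mul_nonneg
    (hν0 _ (Finset.mem_powerset.2 (Finset.insert_subset (Finset.mem_of_mem_erase hf)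
      (((Finset.mem_powerset.1 hS).trans (Finset.erase_subset _ _)).trans
        (Finset.erase_subset _ _)))))
    (Finset.prod_nonneg fun k hk => (hw k (((Finset.mem_powerset.1 hS).trans
      (Finset.erase_subset _ _)) hk)).le)
  have hccpos : 0 < cc := by
    refine sum_powerset_pos (fun S hS => ?_) (by simpa using h0)
    have hSA : S ⊆ A := ((Finset.mem_powerset.1 hS).trans (Finset.erase_subset _ _)).trans
      (Finset.erase_subset _ _)
    exact mul_nonneg (hν0 S (Finset.mem_powerset.2 hSA))
      (Finset.prod_nonneg fun k hk => (hw k (((Finset.mem_powerset.1 hS).trans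
        (Finset.erase_subset _ _)) hk)).le)
  have hbc := rayleigh_coeff hν0 h0 hR he hf w hw
  -- hbc : b * cc ≤ a * d
  rw [lGamma, lGamma, hupd (fun S => ν (insert e S)), hupd ν,
    horig (fun S => ν (insert e S)), horig ν, hvf]
  rw [div_le_div_iff₀ (by nlinarith [mul_nonneg hc'pos.le hdnn]) (by nlinarith [mul_nonneg hwf.le hdnn])]
  nlinarith [mul_nonneg (sub_nonneg.2 hc) (sub_nonneg.2 hbc)]

end Aux6

section Aux7
variable {V : Type*} [DecidableEq V] {A : Finset V} {ν : Finset V → ℝ}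

lemma lGamma_anti (hν0 : ∀ S ∈ A.powerset, 0 ≤ ν S) (h0 : 0 < ν ∅)
    (hR : lRayleigh A ν) {e : V} (he : e ∈ A) {w w' : V → ℝ}
    (hw : ∀ k ∈ A.erase e, 0 < w k) (hw' : ∀ k ∈ A.erase e, 0 < w' k)
    (hle : ∀ k ∈ A.erase e, w k ≤ w' k) :
    lGamma A ν e w' ≤ lGamma A ν e w := by
  classical
  have main : ∀ C : Finset V, C ⊆ A.erase e →
      lGamma A ν e (fun k => if k ∈ C then w' k else w k) ≤ lGamma A ν e w := by
    intro C
    induction C using Finset.induction_on with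
    | empty =>
      intro _
      exact le_of_eq (lGamma_congr fun k _ => by simp)
    | @insert f C hfC ih =>
      intro hsub
      have hfAe : f ∈ A.erase e := hsub (Finset.mem_insert_self f C)
      have hCsub : C ⊆ A.erase e := (Finset.subset_insert f C).trans hsub
      set v : V → ℝ := fun k => if k ∈ C then w' k else w k with hv
      have hvpos : ∀ k ∈ A.erase e, 0 < v k := by
        intro k hk
        by_cases h : k ∈ C <;> simp [hv, h, hw k hk, hw' k hk]
      have heq : (fun k => if k ∈ insert f C then w' k else w k)
          = Function.update v f (w' f) := by
        funext k
        by_cases hkf : k = f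
        · subst hkf
          simp [hv, Function.update_self, hfC]
        · by_cases hkC : k ∈ C <;>
            simp [hv, Function.update_of_ne hkf, Finset.mem_insert, hkf, hkC]
      have hvf : v f ≤ w' f := by
        have : v f = w f := by simp [hv, hfC]
        rw [this]
        exact hle f hfAe
      calc lGamma A ν e (fun k => if k ∈ insert f C then w' k else w k)
          = lGamma A ν e (Function.update v f (w' f)) := by rw [heq]
        _ ≤ lGamma A ν e v := lGamma_update_le hν0 h0 hR he hfAe v hvpos hvf
        _ ≤ lGamma A ν e w := ih hCsub
  calc lGamma A ν e w'
      = lGamma A ν e (fun k => if k ∈ A.erase e then w' k else w k) :=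
        lGamma_congr fun k hk => by simp [hk]
    _ ≤ lGamma A ν e w := main (A.erase e) (le_refl _)

lemma lGamma_scale_strictMono (hν0 : ∀ S ∈ A.powerset, 0 ≤ ν S) (h0 : 0 < ν ∅)
    (hSI : lSizeInc A ν) {e : V} (he : e ∈ A) (hsingle : 0 < ν {e})
    (w : V → ℝ) (hw : ∀ k ∈ A.erase e, 0 < w k) :
    StrictMonoOn (fun r : ℝ => r * lGamma A ν e (fun k => r * w k)) (Set.Ioi 0) := by
  classical
  set B := A.erase e with hB
  have heB : e ∉ B := Finset.notMem_erase e A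
  set aS : Finset V → ℝ := fun S => ν (insert e S) * ∏ k ∈ S, w k with haS
  set bS : Finset V → ℝ := fun S => ν S * ∏ k ∈ S, w k with hbS
  have haSnn : ∀ S ∈ B.powerset, 0 ≤ aS S := by
    intro S hS
    have hSB : S ⊆ B := Finset.mem_powerset.1 hS
    exact mul_nonneg (hν0 _ (Finset.mem_powerset.2 (Finset.insert_subset he
        (hSB.trans (Finset.erase_subset _ _)))))
      (Finset.prod_nonneg fun k hk => (hw k (hSB hk)).le)
  have hbSnn : ∀ S ∈ B.powerset, 0 ≤ bS S := by
    intro S hS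
    have hSB : S ⊆ B := Finset.mem_powerset.1 hS
    exact mul_nonneg (hν0 _ (Finset.mem_powerset.2 (hSB.trans (Finset.erase_subset _ _))))
      (Finset.prod_nonneg fun k hk => (hw k (hSB hk)).le)
  set F : ℝ → ℝ := fun r => ∑ S ∈ B.powerset, aS S * r ^ S.card with hF
  set Gd : ℝ → ℝ := fun r => ∑ S ∈ B.powerset, bS S * r ^ S.card with hGd
  -- the function equals r * F r / Gd r
  have hfun : ∀ r : ℝ, r * lGamma A ν e (fun k => r * w k) = r * F r / Gd r := by
    intro r
    rw [lGamma, hF, hGd]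
    have h1 : ∀ S ∈ B.powerset, ∏ k ∈ S, (r * w k) = r ^ S.card * ∏ k ∈ S, w k := by
      intro S hS
      rw [Finset.prod_mul_distrib, Finset.prod_const]
    have hnum : ∑ S ∈ (A.erase e).powerset, ν (insert e S) * ∏ k ∈ S, (fun k => r * w k) k
        = ∑ S ∈ B.powerset, aS S * r ^ S.card := by
      refine Finset.sum_congr rfl fun S hS => ?_
      rw [h1 S hS, haS]; ring
    have hden : ∑ S ∈ (A.erase e).powerset, ν S * ∏ k ∈ S, (fun k => r * w k) k
        = ∑ S ∈ B.powerset, bS S * r ^ S.card := by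
      refine Finset.sum_congr rfl fun S hS => ?_
      rw [h1 S hS, hbS]; ring
    rw [hnum, hden, mul_div_assoc]
  have hFpos : ∀ r : ℝ, 0 < r → 0 < F r := by
    intro r hr
    refine sum_powerset_pos (fun S hS => mul_nonneg (haSnn S hS) (by positivity)) ?_
    simp [haS, hsingle]
  have hGpos : ∀ r : ℝ, 0 < r → 0 < Gd r := by
    intro r hr
    refine sum_powerset_pos (fun S hS => mul_nonneg (hbSnn S hS) (by positivity)) ?_
    simp [hbS, h0]
  have hFder : ∀ r : ℝ, HasDerivAt F (∑ S ∈ B.powerset, aS S * (S.card * r ^ (S.card - 1))) r :=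
    fun r => HasDerivAt.fun_sum fun S _ => (hasDerivAt_pow S.card r).const_mul (aS S)
  have hGder : ∀ r : ℝ, HasDerivAt Gd (∑ S ∈ B.powerset, bS S * (S.card * r ^ (S.card - 1))) r :=
    fun r => HasDerivAt.fun_sum fun S _ => (hasDerivAt_pow S.card r).const_mul (bS S)
  set g : ℝ → ℝ := fun r => r * F r / Gd r with hg
  have hmono : StrictMonoOn g (Set.Ioi 0) := by
    have hgder : ∀ r : ℝ, 0 < r → HasDerivAt g
        (((1 * F r + r * (∑ S ∈ B.powerset, aS S * (S.card * r ^ (S.card - 1)))) * Gd r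
          - (r * F r) * (∑ S ∈ B.powerset, bS S * (S.card * r ^ (S.card - 1)))) / Gd r ^ 2) r := by
      intro r hr
      exact ((hasDerivAt_id r).mul (hFder r)).div (hGder r) (ne_of_gt (hGpos r hr))
    refine strictMonoOn_of_deriv_pos (convex_Ioi 0) ?_ ?_
    · intro r hr
      exact ((hgder r hr).differentiableAt).continuousAt.continuousWithinAt
    · intro r hr
      rw [interior_Ioi] at hr
      rw [(hgder r hr).deriv]
      have hpowid : ∀ (c : ℕ) (z : ℝ), r * (z * (c * r ^ (c - 1))) = z * c * r ^ c := by
        intro c z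
        cases c with
        | zero => simp
        | succ n =>
          have : (n + 1 : ℕ) - 1 = n := rfl
          rw [this, pow_succ]
          push_cast
          ring
      have hrF : r * (∑ S ∈ B.powerset, aS S * (S.card * r ^ (S.card - 1)))
          = ∑ S ∈ B.powerset, aS S * S.card * r ^ S.card := by
        rw [Finset.mul_sum]
        exact Finset.sum_congr rfl fun S _ => hpowid S.card (aS S)
      have hrG : r * (∑ S ∈ B.powerset, bS S * (S.card * r ^ (S.card - 1)))
          = ∑ S ∈ B.powerset, bS S * S.card * r ^ S.card := by
        rw [Finset.mul_sum]
        exact Finset.sum_congr rfl fun S _ => hpowid S.card (bS S)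
      -- main inequality from sizeinc_coeff
      set u : V → ℝ := fun k => if k = e then 1 else r * w k with hu
      have hupos : ∀ k ∈ A, 0 < u k := by
        intro k hk
        by_cases hke : k = e
        · simp [hu, hke]
        · have : k ∈ A.erase e := Finset.mem_erase.2 ⟨hke, hk⟩
          simp only [hu, if_neg hke]
          exact mul_pos hr (hw k this)
      have hscu := sizeinc_coeff hν0 h0 hSI he u hupos
      have hprodu : ∀ S ∈ B.powerset, ∏ k ∈ S, u k = r ^ S.card * ∏ k ∈ S, w k := by
        intro S hS
        have : ∀ k ∈ S, u k = r * w k := by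
          intro k hk
          have hkB : k ∈ B := Finset.mem_powerset.1 hS hk
          have : k ≠ e := Finset.ne_of_mem_erase hkB
          simp [hu, this]
        rw [Finset.prod_congr rfl this, Finset.prod_mul_distrib, Finset.prod_const]
      have hMeq : (∑ S ∈ (A.erase e).powerset, (S.card : ℝ) * ν S * ∏ k ∈ S, u k)
          = ∑ S ∈ B.powerset, bS S * S.card * r ^ S.card := by
        refine Finset.sum_congr rfl fun S hS => ?_
        rw [hprodu S hS, hbS]; ring
      have hNeq : (∑ S ∈ (A.erase e).powerset, ν (insert e S) * ∏ k ∈ S, u k) = F r := by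
        refine Finset.sum_congr rfl fun S hS => ?_
        rw [hprodu S hS, haS]; ring
      have hN'eq : (∑ S ∈ (A.erase e).powerset, ((S.card : ℝ) + 1) * ν (insert e S) * ∏ k ∈ S, u k)
          = (∑ S ∈ B.powerset, aS S * S.card * r ^ S.card) + F r := by
        rw [← Finset.sum_add_distrib]
        refine Finset.sum_congr rfl fun S hS => ?_
        rw [hprodu S hS, haS]; ring
      have hDeq : (∑ S ∈ (A.erase e).powerset, ν S * ∏ k ∈ S, u k) = Gd r := by
        refine Finset.sum_congr rfl fun S hS => ?_
        rw [hprodu S hS, hbS]; ring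
      rw [hMeq, hNeq, hN'eq, hDeq] at hscu
      have hnumpos : 0 < (1 * F r + r * (∑ S ∈ B.powerset, aS S * (S.card * r ^ (S.card - 1)))) * Gd r
          - (r * F r) * (∑ S ∈ B.powerset, bS S * (S.card * r ^ (S.card - 1))) := by
        have h1 : (r * F r) * (∑ S ∈ B.powerset, bS S * (S.card * r ^ (S.card - 1)))
            = F r * (∑ S ∈ B.powerset, bS S * S.card * r ^ S.card) := by
          rw [mul_comm r (F r), mul_assoc, hrG]
        rw [hrF, h1, one_mul]
        nlinarith [hscu]
      exact div_pos hnumpos (pow_pos (hGpos r hr) 2)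
  intro s hs t ht hst
  show s * lGamma A ν e (fun k => s * w k) < t * lGamma A ν e (fun k => t * w k)
  rw [hfun s, hfun t]
  exact hmono hs ht hst

lemma lGamma_scale_le (hν0 : ∀ S ∈ A.powerset, 0 ≤ ν S) (h0 : 0 < ν ∅)
    (hSI : lSizeInc A ν) {e : V} (he : e ∈ A) (hsingle : 0 < ν {e})
    (w : V → ℝ) (hw : ∀ k ∈ A.erase e, 0 < w k) {l : ℝ} (hl0 : 0 < l) (hl1 : l ≤ 1) :
    l * lGamma A ν e (fun k => l * w k) ≤ lGamma A ν e w := by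
  rcases eq_or_lt_of_le hl1 with rfl | hlt
  · rw [one_mul]
    exact le_of_eq (lGamma_congr fun k _ => one_mul _)
  · have := lGamma_scale_strictMono hν0 h0 hSI he hsingle w hw
      (Set.mem_Ioi.2 hl0) (Set.mem_Ioi.2 one_pos) hlt
    calc l * lGamma A ν e (fun k => l * w k)
        ≤ 1 * lGamma A ν e (fun k => 1 * w k) := this.le
      _ = lGamma A ν e w := by
          rw [one_mul]
          exact lGamma_congr fun k _ => one_mul _

lemma lGamma_scale_lt (hν0 : ∀ S ∈ A.powerset, 0 ≤ ν S) (h0 : 0 < ν ∅)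
    (hSI : lSizeInc A ν) {e : V} (he : e ∈ A) (hsingle : 0 < ν {e})
    (w : V → ℝ) (hw : ∀ k ∈ A.erase e, 0 < w k) {l : ℝ} (hl0 : 0 < l) (hl1 : l < 1) :
    l * lGamma A ν e (fun k => l * w k) < lGamma A ν e w := by
  have := lGamma_scale_strictMono hν0 h0 hSI he hsingle w hw
    (Set.mem_Ioi.2 hl0) (Set.mem_Ioi.2 one_pos) hl1
  calc l * lGamma A ν e (fun k => l * w k)
      < 1 * lGamma A ν e (fun k => 1 * w k) := this
    _ = lGamma A ν e w := by
        rw [one_mul]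
        exact lGamma_congr fun k _ => one_mul _

end Aux7

/-- on a finite cavity-monotone network, the solution `x(t)` of the cavity
equation is coordinatewise nondecreasing in `t`, `x(t)/t` is nonincreasing, whence
`(s/t)x(t) ≤ x(s) ≤ x(t)` for `0 < s ≤ t` and `t ↦ x(t)` is continuous on `(0,∞)`. -/
theorem stmt17 {V : Type*} [Fintype V] [DecidableEq V] (G : SimpleGraph V)
    [DecidableRel G.Adj] (μ : V → Finset V → ℝ)
    (hcm : ∀ i : V, lCavityMonotone (G.neighborFinset i) (μ i))
    (x : ℝ → V → V → ℝ)
    (hxnn : ∀ t : ℝ, 0 < t → ∀ i j, 0 ≤ x t i j)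
    (hxfix : ∀ t : ℝ, 0 < t → ∀ i j, G.Adj i j → x t i j = t * cavOp G μ (x t) i j)
    (hxuniq : ∀ t : ℝ, 0 < t → ∀ y : V → V → ℝ, (∀ i j, 0 ≤ y i j) →
      (∀ i j, G.Adj i j → y i j = t * cavOp G μ y i j) →
      ∀ i j, G.Adj i j → y i j = x t i j) :
    (∀ i j, G.Adj i j → MonotoneOn (fun t : ℝ => x t i j) (Set.Ioi 0)) ∧
    (∀ i j, G.Adj i j → AntitoneOn (fun t : ℝ => x t i j / t) (Set.Ioi 0)) ∧
    (∀ s t : ℝ, 0 < s → s ≤ t → ∀ i j, G.Adj i j →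
      s / t * x t i j ≤ x s i j ∧ x s i j ≤ x t i j) ∧
    (∀ i j, G.Adj i j → ContinuousOn (fun t : ℝ => x t i j) (Set.Ioi 0)) := by
  classical
  have hν0 : ∀ i : V, ∀ S ∈ (G.neighborFinset i).powerset, 0 ≤ μ i S := fun i => (hcm i).1
  have h00 : ∀ i : V, 0 < μ i ∅ := fun i => (hcm i).2.1
  have hRy : ∀ i : V, lRayleigh (G.neighborFinset i) (μ i) := fun i => (hcm i).2.2.1
  have hSIn : ∀ i : V, lSizeInc (G.neighborFinset i) (μ i) := fun i => (hcm i).2.2.2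
  have hmemN : ∀ i j : V, j ∈ G.neighborFinset i ↔ G.Adj i j := fun i j =>
    SimpleGraph.mem_neighborFinset G i j
  have hsing : ∀ i j : V, G.Adj i j → 0 < μ i {j} := fun i j h =>
    nu_singleton_pos (hν0 i) (h00 i) (hRy i) (hSIn i) ((hmemN i j).2 h)
  have hcav : ∀ (y : V → V → ℝ) (i j : V),
      cavOp G μ y i j = lGamma (G.neighborFinset i) (μ i) j (fun k => y k i) := fun _ _ _ => rfl
  have hadj_of_er : ∀ i j k : V, k ∈ (G.neighborFinset i).erase j → G.Adj k i := by
    intro i j k hk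
    exact ((hmemN i k).1 (Finset.mem_of_mem_erase hk)).symm
  have hxpos : ∀ t : ℝ, 0 < t → ∀ i j, G.Adj i j → 0 < x t i j := by
    intro t ht i j hij
    rw [hxfix t ht i j hij, hcav]
    exact mul_pos ht (lGamma_pos (hν0 i) (h00 i) ((hmemN i j).2 hij) (hsing i j hij) _
      (fun k _ => hxnn t ht k i))
  have hgammaeq : ∀ t : ℝ, 0 < t → ∀ i j, G.Adj i j →
      lGamma (G.neighborFinset i) (μ i) j (fun k => x t k i) = x t i j / t := by
    intro t ht i j hij
    rw [eq_div_iff (ne_of_gt ht), ← hcav, mul_comm, ← hxfix t ht i j hij]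
  -- KEY UPPER BOUND
  have hkey : ∀ s t : ℝ, 0 < s → s ≤ t → ∀ i j, G.Adj i j → x s i j ≤ x t i j := by
    intro s t hs hst i0 j0 hij0
    by_contra hcon
    push_neg at hcon
    have ht : 0 < t := lt_of_lt_of_le hs hst
    set P : Finset (V × V) := Finset.univ.filter (fun p => G.Adj p.1 p.2) with hP
    have hPmem : ∀ p : V × V, p ∈ P ↔ G.Adj p.1 p.2 := by
      intro p; simp [hP]
    have hPne : P.Nonempty := ⟨(i0, j0), (hPmem _).2 hij0⟩
    obtain ⟨pM, hpM, hpMmax⟩ :=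
      Finset.exists_max_image P (fun p => x s p.1 p.2 / x t p.1 p.2) hPne
    obtain ⟨pm, hpm, hpmmin⟩ :=
      Finset.exists_min_image P (fun p => x s p.1 p.2 / x t p.1 p.2) hPne
    obtain ⟨iM, jM⟩ := pM
    obtain ⟨im, jm⟩ := pm
    have hadjM : G.Adj iM jM := (hPmem _).1 hpM
    have hadjm : G.Adj im jm := (hPmem _).1 hpm
    set ρ := x s iM jM / x t iM jM with hρdef
    set σ := x s im jm / x t im jm with hσdef
    have hxtM : 0 < x t iM jM := hxpos t ht iM jM hadjM
    have hxtm : 0 < x t im jm := hxpos t ht im jm hadjm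
    have hρ1 : 1 < ρ := by
      have h1 : x s i0 j0 / x t i0 j0 ≤ ρ := hpMmax (i0, j0) ((hPmem _).2 hij0)
      have h2 : 1 < x s i0 j0 / x t i0 j0 :=
        (one_lt_div (hxpos t ht i0 j0 hij0)).2 hcon
      linarith
    have hρ0 : 0 < ρ := lt_trans one_pos hρ1
    have hσpos : 0 < σ := div_pos (hxpos s hs im jm hadjm) hxtm
    have hub : ∀ k i : V, G.Adj k i → x s k i ≤ ρ * x t k i := by
      intro k i h
      have := hpMmax (k, i) ((hPmem _).2 h)
      exact (div_le_iff₀ (hxpos t ht k i h)).1 this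
    have hlb : ∀ k i : V, G.Adj k i → σ * x t k i ≤ x s k i := by
      intro k i h
      have := hpmmin (k, i) ((hPmem _).2 h)
      exact (le_div_iff₀ (hxpos t ht k i h)).1 this
    have hxsMeq : x s iM jM = ρ * x t iM jM := by
      rw [hρdef, div_mul_cancel₀ _ (ne_of_gt hxtM)]
    have hxsmeq : x s im jm = σ * x t im jm := by
      rw [hσdef, div_mul_cancel₀ _ (ne_of_gt hxtm)]
    have hadjM' : jM ∈ G.neighborFinset iM := (hmemN iM jM).2 hadjM
    have hadjm' : jm ∈ G.neighborFinset im := (hmemN im jm).2 hadjm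
    have hxtposM : ∀ k ∈ (G.neighborFinset iM).erase jM, 0 < x t k iM :=
      fun k hk => hxpos t ht k iM (hadj_of_er iM jM k hk)
    have hxsposM : ∀ k ∈ (G.neighborFinset iM).erase jM, 0 < x s k iM :=
      fun k hk => hxpos s hs k iM (hadj_of_er iM jM k hk)
    have hxtposm : ∀ k ∈ (G.neighborFinset im).erase jm, 0 < x t k im :=
      fun k hk => hxpos t ht k im (hadj_of_er im jm k hk)
    have hxsposm : ∀ k ∈ (G.neighborFinset im).erase jm, 0 < x s k im :=
      fun k hk => hxpos s hs k im (hadj_of_er im jm k hk)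
    have hgM : lGamma (G.neighborFinset iM) (μ iM) jM (fun k => x t k iM) = x t iM jM / t :=
      hgammaeq t ht iM jM hadjM
    have hgm : lGamma (G.neighborFinset im) (μ im) jm (fun k => x t k im) = x t im jm / t :=
      hgammaeq t ht im jm hadjm
    by_cases hσ1 : 1 ≤ σ
    · -- then x t ≤ x s everywhere, and Γ antitone gives contradiction at max pair
      have hxtle : ∀ k ∈ (G.neighborFinset iM).erase jM, x t k iM ≤ x s k iM := by
        intro k hk
        have h := hlb k iM (hadj_of_er iM jM k hk)
        nlinarith [hxtposM k hk]
      have h1 : x s iM jM ≤ s * (x t iM jM / t) := by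
        rw [hxfix s hs iM jM hadjM, hcav, ← hgM]
        refine mul_le_mul_of_nonneg_left ?_ hs.le
        exact lGamma_anti (hν0 iM) (h00 iM) (hRy iM) hadjM' hxtposM hxsposM hxtle
      have h2 : s * (x t iM jM / t) ≤ x t iM jM := by
        rw [mul_div_assoc']
        rw [div_le_iff₀ ht]
        nlinarith [hxtM.le]
      have h3 : x t iM jM < x s iM jM := by
        nlinarith [hxsMeq, hρ1, hxtM]
      linarith
    · push_neg at hσ1
      -- max pair estimate : ρ * σ * t < s
      have hσxtpos : ∀ k ∈ (G.neighborFinset iM).erase jM, 0 < σ * x t k iM :=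
        fun k hk => mul_pos hσpos (hxtposM k hk)
      have hσle : ∀ k ∈ (G.neighborFinset iM).erase jM, σ * x t k iM ≤ x s k iM :=
        fun k hk => hlb k iM (hadj_of_er iM jM k hk)
      have h1 : x s iM jM ≤ s * lGamma (G.neighborFinset iM) (μ iM) jM
          (fun k => σ * x t k iM) := by
        rw [hxfix s hs iM jM hadjM, hcav]
        refine mul_le_mul_of_nonneg_left ?_ hs.le
        exact lGamma_anti (hν0 iM) (h00 iM) (hRy iM) hadjM' hσxtpos hxsposM hσle
      have h2 : σ * lGamma (G.neighborFinset iM) (μ iM) jM (fun k => σ * x t k iM)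
          < x t iM jM / t := by
        rw [← hgM]
        exact lGamma_scale_lt (hν0 iM) (h00 iM) (hSIn iM) hadjM' (hsing iM jM hadjM)
          (fun k => x t k iM) hxtposM hσpos hσ1
      have hmax : ρ * σ * t < s := by
        have h3 : σ * x s iM jM < s * (x t iM jM / t) := by
          calc σ * x s iM jM ≤ σ * (s * lGamma (G.neighborFinset iM) (μ iM) jM
              (fun k => σ * x t k iM)) := mul_le_mul_of_nonneg_left h1 hσpos.le
            _ = s * (σ * lGamma (G.neighborFinset iM) (μ iM) jM (fun k => σ * x t k iM)) := by
                ring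
            _ < s * (x t iM jM / t) := by
                exact mul_lt_mul_of_pos_left h2 hs
        rw [hxsMeq] at h3
        have h9 := mul_lt_mul_of_pos_right h3 ht
        have h10 : s * (x t iM jM / t) * t = s * x t iM jM := by
          field_simp
        rw [h10] at h9
        nlinarith [hxtM, h9]
      -- min pair estimate : s ≤ ρ * σ * t
      have hρxtpos : ∀ k ∈ (G.neighborFinset im).erase jm, 0 < ρ * x t k im :=
        fun k hk => mul_pos hρ0 (hxtposm k hk)
      have hρge : ∀ k ∈ (G.neighborFinset im).erase jm, x s k im ≤ ρ * x t k im :=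
        fun k hk => hub k im (hadj_of_er im jm k hk)
      have h4 : s * lGamma (G.neighborFinset im) (μ im) jm (fun k => ρ * x t k im)
          ≤ x s im jm := by
        rw [hxfix s hs im jm hadjm, hcav]
        refine mul_le_mul_of_nonneg_left ?_ hs.le
        exact lGamma_anti (hν0 im) (h00 im) (hRy im) hadjm' hxsposm hρxtpos hρge
      have h5 : (1 / ρ) * lGamma (G.neighborFinset im) (μ im) jm (fun k => x t k im)
          ≤ lGamma (G.neighborFinset im) (μ im) jm (fun k => ρ * x t k im) := by
        have hscale := lGamma_scale_le (hν0 im) (h00 im) (hSIn im) hadjm'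
          (hsing im jm hadjm) (fun k => ρ * x t k im) hρxtpos
          (l := 1 / ρ) (by positivity) (by rw [div_le_one hρ0]; exact hρ1.le)
        have hcongr : lGamma (G.neighborFinset im) (μ im) jm
            (fun k => (1 / ρ) * (ρ * x t k im))
            = lGamma (G.neighborFinset im) (μ im) jm (fun k => x t k im) := by
          refine lGamma_congr fun k _ => ?_
          field_simp
        rw [hcongr] at hscale
        exact hscale
      have hmin : s ≤ ρ * σ * t := by
        have h6 : s * ((1 / ρ) * (x t im jm / t)) ≤ σ * x t im jm := by
          calc s * ((1 / ρ) * (x t im jm / t))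
              = s * ((1 / ρ) * lGamma (G.neighborFinset im) (μ im) jm (fun k => x t k im)) := by
                rw [hgm]
            _ ≤ s * lGamma (G.neighborFinset im) (μ im) jm (fun k => ρ * x t k im) :=
                mul_le_mul_of_nonneg_left h5 hs.le
            _ ≤ x s im jm := h4
            _ = σ * x t im jm := hxsmeq
        have h6' := mul_le_mul_of_nonneg_left h6 hρ0.le
        have e1 : ρ * (s * ((1 / ρ) * (x t im jm / t))) = s * (x t im jm / t) := by
          field_simp
        rw [e1] at h6'
        have h6'' := mul_le_mul_of_nonneg_right h6' ht.le
        have e2 : s * (x t im jm / t) * t = s * x t im jm := by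
          field_simp
        rw [e2] at h6''
        nlinarith [hxtm, h6'']
      linarith
  -- LOWER BOUND
  have hlow : ∀ s t : ℝ, 0 < s → s ≤ t → ∀ i j, G.Adj i j →
      s / t * x t i j ≤ x s i j := by
    intro s t hs hst i j hij
    have ht : 0 < t := lt_of_lt_of_le hs hst
    have hxtposi : ∀ k ∈ (G.neighborFinset i).erase j, 0 < x t k i :=
      fun k hk => hxpos t ht k i (hadj_of_er i j k hk)
    have hxsposi : ∀ k ∈ (G.neighborFinset i).erase j, 0 < x s k i :=
      fun k hk => hxpos s hs k i (hadj_of_er i j k hk)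
    have hle : ∀ k ∈ (G.neighborFinset i).erase j, x s k i ≤ x t k i :=
      fun k hk => hkey s t hs hst k i (hadj_of_er i j k hk)
    have h1 : lGamma (G.neighborFinset i) (μ i) j (fun k => x t k i)
        ≤ lGamma (G.neighborFinset i) (μ i) j (fun k => x s k i) :=
      lGamma_anti (hν0 i) (h00 i) (hRy i) ((hmemN i j).2 hij) hxsposi hxtposi hle
    rw [hgammaeq t ht i j hij] at h1
    calc s / t * x t i j = s * (x t i j / t) := by ring
      _ ≤ s * lGamma (G.neighborFinset i) (μ i) j (fun k => x s k i) :=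
          mul_le_mul_of_nonneg_left h1 hs.le
      _ = x s i j := by rw [← hcav, ← hxfix s hs i j hij]
  refine ⟨?_, ?_, ?_, ?_⟩
  · intro i j hij a ha b hb hab
    exact hkey a b (Set.mem_Ioi.1 ha) hab i j hij
  · intro i j hij a ha b hb hab
    have ha0 : 0 < a := Set.mem_Ioi.1 ha
    have hb0 : 0 < b := Set.mem_Ioi.1 hb
    have h := hlow a b ha0 hab i j hij
    rw [div_le_div_iff₀ hb0 ha0]
    have h2 := mul_le_mul_of_nonneg_right h hb0.le
    have e : a / b * x b i j * b = x b i j * a := by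
      field_simp
    rw [e] at h2
    exact h2
  · intro s t hs hst i j hij
    exact ⟨hlow s t hs hst i j hij, hkey s t hs hst i j hij⟩
  · intro i j hij
    intro t0 ht0'
    have ht0 : 0 < t0 := Set.mem_Ioi.1 ht0'
    have hxnn0 : 0 ≤ x t0 i j := hxnn t0 ht0 i j
    set lo : ℝ → ℝ := fun u => (min u t0 / max u t0) * x t0 i j with hlo
    set hi : ℝ → ℝ := fun u => (max u t0 / min u t0) * x t0 i j with hhi
    have hlot : Filter.Tendsto lo (nhdsWithin t0 (Set.Ioi 0)) (nhds (x t0 i j)) := by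
      have hcont : ContinuousAt lo t0 := by
        refine ContinuousAt.mul ?_ continuousAt_const
        refine ContinuousAt.div ?_ ?_ ?_
        · exact continuousAt_id.min continuousAt_const
        · exact continuousAt_id.max continuousAt_const
        · simp [ht0.ne']
      have hval : lo t0 = x t0 i j := by
        simp [hlo, ht0.ne']
      rw [← hval]
      exact hcont.continuousWithinAt
    have hhit : Filter.Tendsto hi (nhdsWithin t0 (Set.Ioi 0)) (nhds (x t0 i j)) := by
      have hcont : ContinuousAt hi t0 := by
        refine ContinuousAt.mul ?_ continuousAt_const
        refine ContinuousAt.div ?_ ?_ ?_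
        · exact continuousAt_id.max continuousAt_const
        · exact continuousAt_id.min continuousAt_const
        · simp [ht0.ne']
      have hval : hi t0 = x t0 i j := by
        simp [hhi, ht0.ne']
      rw [← hval]
      exact hcont.continuousWithinAt
    have hbound : ∀ u ∈ Set.Ioi (0:ℝ), lo u ≤ x u i j ∧ x u i j ≤ hi u := by
      intro u hu'
      have hu : 0 < u := Set.mem_Ioi.1 hu'
      rcases le_total u t0 with hcase | hcase
      · have hminu : min u t0 = u := min_eq_left hcase
        have hmaxu : max u t0 = t0 := max_eq_right hcase
        constructor
        · rw [hlo]
          simp only [hminu, hmaxu]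
          exact hlow u t0 hu hcase i j hij
        · rw [hhi]
          simp only [hminu, hmaxu]
          have h1 : x u i j ≤ x t0 i j := hkey u t0 hu hcase i j hij
          have h2 : (1:ℝ) ≤ t0 / u := (one_le_div hu).2 hcase
          nlinarith [hxnn0]
      · have hminu : min u t0 = t0 := min_eq_right hcase
        have hmaxu : max u t0 = u := max_eq_left hcase
        constructor
        · rw [hlo]
          simp only [hminu, hmaxu]
          have h1 : x t0 i j ≤ x u i j := hkey t0 u ht0 hcase i j hij
          have h2 : t0 / u ≤ 1 := (div_le_one hu).2 hcase
          nlinarith [hxnn0]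
        · rw [hhi]
          simp only [hminu, hmaxu]
          have h1 : t0 / u * x u i j ≤ x t0 i j := hlow t0 u ht0 hcase i j hij
          have h3 : 0 < t0 / u := div_pos ht0 hu
          have h4 : x u i j = (u / t0) * (t0 / u * x u i j) := by
            field_simp
          rw [h4]
          refine mul_le_mul_of_nonneg_left h1 ?_
          positivity
    refine tendsto_of_tendsto_of_tendsto_of_le_of_le' hlot hhit ?_ ?_
    · filter_upwards [self_mem_nhdsWithin] with u hu
      exact (hbound u hu).1
    · filter_upwards [self_mem_nhdsWithin] with u hu
      exact (hbound u hu).2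
end

section
/- Fix an integer b ≥ 1 and n ∈ ℕ. For every x = (x₁,…,xₙ) ∈ [0,1]^n, the limit Γ̄(x₁,…,xₙ) := lim_{t→∞} t·Γ(tx₁,…,txₙ) exists in [0,∞]; it equals ∞ if and only if #{i : x_i > 0} < b, and if #{i : x_i > 0} ≥ b then Γ̄(x₁,…,xₙ) = (Σ_{I⊆[n], |I|=b−1} ∏_{i∈I} x_i) / (Σ_{I⊆[n], |I|=b} ∏_{i∈I} x_i). -/
open Finset Filter
open scoped Classical ENNReal

/-- The `b`-matching cavity ratio
`Γ(x) = (Σ_{|I| ≤ b−1} ∏_{i∈I} x_i) / (Σ_{|I| ≤ b} ∏_{i∈I} x_i)`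
(the term for `I = ∅` equals `1`, so the denominator is positive for nonnegative `x`). -/

noncomputable def eSym {n : ℕ} (x : Fin n → ℝ) (k : ℕ) : ℝ :=
  ∑ I ∈ Finset.univ.filter (fun I : Finset (Fin n) => I.card = k), ∏ i ∈ I, x i

lemma eSym_zero {n : ℕ} (x : Fin n → ℝ) : eSym x 0 = 1 := by
  unfold eSym
  rw [show (Finset.univ.filter fun I : Finset (Fin n) => I.card = 0) = {∅} by
    ext I; simp [Finset.card_eq_zero]]
  simp

lemma eSym_nonneg {n : ℕ} {x : Fin n → ℝ} (hx : ∀ i, 0 ≤ x i) (k : ℕ) : 0 ≤ eSym x k :=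
  Finset.sum_nonneg fun I _ => Finset.prod_nonneg fun i _ => hx i

lemma eSym_pos {n : ℕ} {x : Fin n → ℝ} (hx : ∀ i, 0 ≤ x i) {k : ℕ}
    (hk : k ≤ (Finset.univ.filter (fun i => 0 < x i)).card) : 0 < eSym x k := by
  obtain ⟨J, hJsub, hJcard⟩ := Finset.exists_subset_card_eq hk
  refine Finset.sum_pos' (fun I _ => Finset.prod_nonneg fun i _ => hx i) ⟨J, ?_, ?_⟩
  · simp [hJcard]
  · exact Finset.prod_pos fun i hi => (Finset.mem_filter.mp (hJsub hi)).2

lemma eSym_eq_zero {n : ℕ} {x : Fin n → ℝ} (hx : ∀ i, 0 ≤ x i) {k : ℕ}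
    (hk : (Finset.univ.filter (fun i => 0 < x i)).card < k) : eSym x k = 0 := by
  refine Finset.sum_eq_zero fun I hI => ?_
  simp only [Finset.mem_filter] at hI
  have h1 : ¬ I ⊆ Finset.univ.filter (fun i => 0 < x i) := by
    intro h; have := Finset.card_le_card h; omega
  obtain ⟨i, hiI, hi⟩ := Finset.not_subset.mp h1
  refine Finset.prod_eq_zero hiI ?_
  simp only [Finset.mem_filter, Finset.mem_univ, true_and] at hi
  linarith [hx i, not_lt.mp hi]


lemma aux_sum_products {n : ℕ} (x : Fin n → ℝ) (c : ℕ) (t : ℝ) :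
    ∑ I ∈ Finset.univ.filter (fun I : Finset (Fin n) => I.card ≤ c), ∏ i ∈ I, (t * x i)
      = ∑ k ∈ Finset.range (c+1), t^k *
          ∑ I ∈ Finset.univ.filter (fun I : Finset (Fin n) => I.card = k), ∏ i ∈ I, x i := by
  rw [← Finset.sum_fiberwise_of_maps_to (t := Finset.range (c+1)) (g := Finset.card)
      (fun I hI => by simp only [Finset.mem_filter, Finset.mem_range] at hI ⊢; omega)
      (fun I => ∏ i ∈ I, (t * x i))]
  refine Finset.sum_congr rfl fun k hk => ?_
  simp only [Finset.mem_range] at hk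
  rw [Finset.filter_filter, Finset.mul_sum]
  rw [show (Finset.univ.filter fun I : Finset (Fin n) => I.card ≤ c ∧ I.card = k)
      = Finset.univ.filter fun I : Finset (Fin n) => I.card = k by
    apply Finset.filter_congr; intro I _; constructor <;> intro h
    · exact h.2
    · exact ⟨by omega, h⟩]
  refine Finset.sum_congr rfl fun I hI => ?_
  simp only [Finset.mem_filter] at hI
  rw [Finset.prod_mul_distrib, Finset.prod_const, hI.2]

noncomputable def bGamma (b : ℕ) {ι : Type*} [Fintype ι] [DecidableEq ι] (x : ι → ℝ) : ℝ :=
  (∑ I ∈ Finset.univ.filter (fun I : Finset ι => I.card ≤ b - 1), ∏ i ∈ I, x i) /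
  (∑ I ∈ Finset.univ.filter (fun I : Finset ι => I.card ≤ b), ∏ i ∈ I, x i)

/-- for `x ∈ [0,1]^n`, the limit `Γ̄(x) = lim_{t→∞} t Γ(tx)` exists in
`[0,∞]`; it is infinite iff `#{i : x_i > 0} < b`, and otherwise equals
`(Σ_{|I| = b−1} ∏_{i∈I} x_i) / (Σ_{|I| = b} ∏_{i∈I} x_i)`. -/
theorem stmt18 (b : ℕ) (hb : 1 ≤ b) (n : ℕ) (x : Fin n → ℝ)
    (hx : ∀ i, x i ∈ Set.Icc (0 : ℝ) 1) :
    ∃ L : ℝ≥0∞,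
      Tendsto (fun t : ℝ => ENNReal.ofReal (t * bGamma b (fun i => t * x i))) atTop
        (nhds L) ∧
      (L = ⊤ ↔ (Finset.univ.filter (fun i => 0 < x i)).card < b) ∧
      (b ≤ (Finset.univ.filter (fun i => 0 < x i)).card →
        L = ENNReal.ofReal
          ((∑ I ∈ Finset.univ.filter (fun I : Finset (Fin n) => I.card = b - 1),
              ∏ i ∈ I, x i) /
            (∑ I ∈ Finset.univ.filter (fun I : Finset (Fin n) => I.card = b),
              ∏ i ∈ I, x i))) := by
  classical
  have hx0 : ∀ i, 0 ≤ x i := fun i => (hx i).1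
  have aux_sum_products : ∀ (c : ℕ) (t : ℝ),
      ∑ I ∈ Finset.univ.filter (fun I : Finset (Fin n) => I.card ≤ c), ∏ i ∈ I, (t * x i)
        = ∑ k ∈ Finset.range (c+1), t^k * eSym x k := fun c t => aux_sum_products x c t
  have eSym_zero := eSym_zero x
  have eSym_nonneg : ∀ k, 0 ≤ eSym x k := eSym_nonneg hx0
  have eSym_pos : ∀ {k}, k ≤ (Finset.univ.filter (fun i => 0 < x i)).card → 0 < eSym x k :=
    fun h => eSym_pos hx0 h
  have eSym_eq_zero : ∀ {k}, (Finset.univ.filter (fun i => 0 < x i)).card < k → eSym x k = 0 :=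
    fun h => eSym_eq_zero hx0 h
  set m := (Finset.univ.filter (fun i => 0 < x i)).card with hm
  set N : ℝ → ℝ := fun t => ∑ k ∈ Finset.range b, t^k * eSym x k with hNdef
  set D : ℝ → ℝ := fun t => N t + t^b * eSym x b with hDdef
  have hNpos : ∀ t : ℝ, 0 ≤ t → 0 < N t := by
    intro t ht
    refine Finset.sum_pos' (fun k _ => mul_nonneg (pow_nonneg ht k) (eSym_nonneg k)) ⟨0, ?_, ?_⟩
    · simp [Finset.mem_range]; omega
    · simp [eSym_zero]
  have hDpos : ∀ t : ℝ, 0 ≤ t → 0 < D t := by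
    intro t ht
    have := hNpos t ht
    have : 0 ≤ t^b * eSym x b := mul_nonneg (pow_nonneg ht b) (eSym_nonneg b)
    simp only [hDdef]
    nlinarith [hNpos t ht]
  have hbG : ∀ t : ℝ, bGamma b (fun i => t * x i) = N t / D t := by
    intro t
    unfold bGamma
    have h1 : ∑ I ∈ Finset.univ.filter (fun I : Finset (Fin n) => I.card ≤ b - 1),
        ∏ i ∈ I, ((fun i => t * x i) i) = N t := by
      rw [show (∑ I ∈ Finset.univ.filter (fun I : Finset (Fin n) => I.card ≤ b - 1),
          ∏ i ∈ I, ((fun i => t * x i) i)) = ∑ I ∈ Finset.univ.filter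
          (fun I : Finset (Fin n) => I.card ≤ b - 1), ∏ i ∈ I, (t * x i) from rfl,
        aux_sum_products (b-1) t, show b - 1 + 1 = b by omega]
    have h2 : ∑ I ∈ Finset.univ.filter (fun I : Finset (Fin n) => I.card ≤ b),
        ∏ i ∈ I, ((fun i => t * x i) i) = D t := by
      rw [show (∑ I ∈ Finset.univ.filter (fun I : Finset (Fin n) => I.card ≤ b),
          ∏ i ∈ I, ((fun i => t * x i) i)) = ∑ I ∈ Finset.univ.filter
          (fun I : Finset (Fin n) => I.card ≤ b), ∏ i ∈ I, (t * x i) from rfl,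
        aux_sum_products b t, Finset.sum_range_succ]
    rw [h1, h2]
  by_cases hcase : m < b
  · -- infinite case
    refine ⟨⊤, ?_, by simp [hcase], fun h => absurd h (by omega)⟩
    have heb : eSym x b = 0 := eSym_eq_zero hcase
    have heq : (fun t : ℝ => ENNReal.ofReal (t * bGamma b (fun i => t * x i)))
        =ᶠ[atTop] fun t => ENNReal.ofReal t := by
      filter_upwards [eventually_ge_atTop (0:ℝ)] with t ht
      rw [hbG t]
      have hD : D t = N t := by simp [hDdef, heb]
      rw [hD, div_self (hNpos t ht).ne', mul_one]
    exact Tendsto.congr' heq.symm ENNReal.tendsto_ofReal_atTop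
  · -- finite case
    push_neg at hcase
    have heb1 : 0 < eSym x (b-1) := eSym_pos (by omega)
    have heb : 0 < eSym x b := eSym_pos hcase
    set A : ℝ → ℝ := fun t =>
      (∑ k ∈ Finset.range (b-1), eSym x k * (t^(k+1) / t^b)) + eSym x (b-1) with hAdef
    set B : ℝ → ℝ := fun t =>
      (∑ k ∈ Finset.range b, eSym x k * (t^k / t^b)) + eSym x b with hBdef
    have hA : Tendsto A atTop (nhds (eSym x (b-1))) := by
      have : Tendsto (fun t : ℝ => ∑ k ∈ Finset.range (b-1), eSym x k * (t^(k+1) / t^b))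
          atTop (nhds 0) := by
        rw [show (0:ℝ) = ∑ k ∈ Finset.range (b-1), 0 by simp]
        refine tendsto_finset_sum _ fun k hk => ?_
        simp only [Finset.mem_range] at hk
        rw [show (0:ℝ) = eSym x k * 0 by simp]
        exact (tendsto_pow_div_pow_atTop_zero (by omega)).const_mul _
      simpa using this.add tendsto_const_nhds
    have hB : Tendsto B atTop (nhds (eSym x b)) := by
      have : Tendsto (fun t : ℝ => ∑ k ∈ Finset.range b, eSym x k * (t^k / t^b))
          atTop (nhds 0) := by
        rw [show (0:ℝ) = ∑ k ∈ Finset.range b, 0 by simp]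
        refine tendsto_finset_sum _ fun k hk => ?_
        simp only [Finset.mem_range] at hk
        rw [show (0:ℝ) = eSym x k * 0 by simp]
        exact (tendsto_pow_div_pow_atTop_zero hk).const_mul _
      simpa using this.add tendsto_const_nhds
    have hreal : Tendsto (fun t : ℝ => t * bGamma b (fun i => t * x i)) atTop
        (nhds (eSym x (b-1) / eSym x b)) := by
      refine Tendsto.congr' ?_ (hA.div hB heb.ne')
      filter_upwards [eventually_gt_atTop (0:ℝ)] with t ht
      simp only [Pi.div_apply]
      have htb : (t:ℝ)^b ≠ 0 := pow_ne_zero _ ht.ne'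
      have hAt : A t = (t * N t) / t^b := by
        have : t * N t = ∑ k ∈ Finset.range b, eSym x k * t^(k+1) := by
          rw [hNdef, Finset.mul_sum]
          exact Finset.sum_congr rfl fun k _ => by ring
        rw [this, Finset.sum_div]
        rw [show b = (b-1)+1 by omega, Finset.sum_range_succ, hAdef]
        simp only [show (b-1)+1 = b by omega]
        congr 1
        · exact Finset.sum_congr rfl fun k _ => by rw [mul_div_assoc]
        · rw [mul_div_assoc, div_self htb, mul_one]
      have hBt : B t = D t / t^b := by
        simp only [hBdef, hDdef, hNdef, add_div, Finset.sum_div]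
        congr 1
        · exact Finset.sum_congr rfl fun k _ => by ring
        · rw [mul_comm, mul_div_assoc, div_self htb, mul_one]
      have hD0 : D t ≠ 0 := (hDpos t ht.le).ne'
      rw [hbG t, hAt, hBt]
      field_simp
    refine ⟨ENNReal.ofReal (eSym x (b-1) / eSym x b),
      (ENNReal.continuous_ofReal.tendsto _).comp hreal, by simp [ENNReal.ofReal_ne_top, hcase],
      fun _ => rfl⟩
end

section
/- Fix an integer b ≥ 1 and n ∈ ℕ. Let x = (x₁,…,xₙ) ∈ [0,1]^n and for each i ∈ [n] let y_i := lim_{t→∞} t·Γ(t x_k : k ∈ [n]∖{i}) ∈ (0,∞] (this limit exists). Then Σ_{i : y_i < ∞} x_i y_i / (1 + x_i y_i) = b if #{i : x_i > 0} > b, and this sum equals 0 if #{i : x_i > 0} ≤ b. -/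
open Finset Filter
open scoped Classical ENNReal

namespace Stmt19Aux

variable {ι : Type*} [DecidableEq ι]

/-- elementary symmetric sum of degree `j` over subsets of `s`. -/
noncomputable def E (s : Finset ι) (j : ℕ) (x : ι → ℝ) : ℝ :=
  ∑ I ∈ s.powersetCard j, ∏ k ∈ I, x k

lemma E_nonneg {s : Finset ι} {x : ι → ℝ} (hx : ∀ k, 0 ≤ x k) (j : ℕ) : 0 ≤ E s j x :=
  Finset.sum_nonneg fun _ _ => Finset.prod_nonneg fun k _ => hx k

lemma E_pos {s : Finset ι} {x : ι → ℝ} (hx : ∀ k, 0 ≤ x k) {j : ℕ}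
    (h : j ≤ (s.filter (fun k => 0 < x k)).card) : 0 < E s j x := by
  obtain ⟨I, hIsub, hIcard⟩ := Finset.exists_subset_card_eq h
  refine Finset.sum_pos' (fun I _ => Finset.prod_nonneg fun k _ => hx k) ⟨I, ?_, ?_⟩
  · rw [Finset.mem_powersetCard]
    exact ⟨hIsub.trans (Finset.filter_subset _ _), hIcard⟩
  · exact Finset.prod_pos fun k hk => (Finset.mem_filter.mp (hIsub hk)).2

lemma E_eq_zero {s : Finset ι} {x : ι → ℝ} (hx : ∀ k, 0 ≤ x k) {j : ℕ}
    (h : (s.filter (fun k => 0 < x k)).card < j) : E s j x = 0 := by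
  refine Finset.sum_eq_zero fun I hI => ?_
  rw [Finset.mem_powersetCard] at hI
  have hns : ¬ I ⊆ s.filter (fun k => 0 < x k) := by
    intro hsub
    have := Finset.card_le_card hsub
    omega
  obtain ⟨k, hkI, hk⟩ := Finset.not_subset.mp hns
  have hxk : x k = 0 := by
    by_contra h'
    exact hk (Finset.mem_filter.mpr ⟨hI.1 hkI, lt_of_le_of_ne (hx k) (Ne.symm h')⟩)
  exact Finset.prod_eq_zero hkI hxk

lemma E_insert {s : Finset ι} {i : ι} (hi : i ∉ s) (x : ι → ℝ) (j : ℕ) :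
    E (insert i s) (j + 1) x = E s (j + 1) x + x i * E s j x := by
  rw [E, Finset.powersetCard_succ_insert hi, Finset.sum_union, Finset.sum_image]
  · rw [E, E, Finset.mul_sum]
    congr 1
    refine Finset.sum_congr rfl fun I hI => ?_
    have hiI : i ∉ I := fun h => hi ((Finset.mem_powersetCard.mp hI).1 h)
    rw [Finset.prod_insert hiI]
  · intro I hI J hJ hIJ
    have hiI : i ∉ I := fun h => hi ((Finset.mem_powersetCard.mp hI).1 h)
    have hiJ : i ∉ J := fun h => hi ((Finset.mem_powersetCard.mp hJ).1 h)
    rw [← Finset.erase_insert hiI, ← Finset.erase_insert hiJ, hIJ]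
  · rw [Finset.disjoint_right]
    intro J hJ hJ'
    obtain ⟨I, hI, rfl⟩ := Finset.mem_image.mp hJ
    have hiI : i ∉ I := fun h => hi ((Finset.mem_powersetCard.mp hI).1 h)
    exact hi ((Finset.mem_powersetCard.mp hJ').1 (Finset.mem_insert_self i I))

lemma mul_E_erase [Fintype ι] (x : ι → ℝ) (j : ℕ) (i : ι) :
    x i * E (Finset.univ.erase i) j x =
      ∑ J ∈ (Finset.univ.powersetCard (j + 1)).filter (fun J => i ∈ J), ∏ k ∈ J, x k := by
  rw [E, Finset.mul_sum]
  refine Finset.sum_nbij' (fun I => insert i I) (fun J => J.erase i) ?_ ?_ ?_ ?_ ?_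
  · intro I hI
    rw [Finset.mem_powersetCard] at hI
    have hiI : i ∉ I := fun h => (Finset.mem_erase.mp (hI.1 h)).1 rfl
    rw [Finset.mem_filter, Finset.mem_powersetCard]
    exact ⟨⟨Finset.subset_univ _, by rw [Finset.card_insert_of_notMem hiI, hI.2]⟩,
      Finset.mem_insert_self i I⟩
  · intro J hJ
    rw [Finset.mem_filter, Finset.mem_powersetCard] at hJ
    rw [Finset.mem_powersetCard]
    constructor
    · exact Finset.erase_subset_erase i (Finset.subset_univ J)
    · rw [Finset.card_erase_of_mem hJ.2, hJ.1.2]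
      omega
  · intro I hI
    rw [Finset.mem_powersetCard] at hI
    have hiI : i ∉ I := fun h => (Finset.mem_erase.mp (hI.1 h)).1 rfl
    exact Finset.erase_insert hiI
  · intro J hJ
    rw [Finset.mem_filter] at hJ
    exact Finset.insert_erase hJ.2
  · intro I hI
    rw [Finset.mem_powersetCard] at hI
    have hiI : i ∉ I := fun h => (Finset.mem_erase.mp (hI.1 h)).1 rfl
    rw [Finset.prod_insert hiI]

lemma sum_mul_E [Fintype ι] (x : ι → ℝ) (j : ℕ) :
    ∑ i, x i * E (Finset.univ.erase i) j x = (j + 1 : ℝ) * E Finset.univ (j + 1) x := by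
  have h1 : ∀ i : ι, x i * E (Finset.univ.erase i) j x =
      ∑ J ∈ Finset.univ.powersetCard (j + 1), if i ∈ J then ∏ k ∈ J, x k else 0 := by
    intro i
    rw [mul_E_erase, Finset.sum_filter]
  simp_rw [h1]
  rw [Finset.sum_comm]
  rw [E, Finset.mul_sum]
  refine Finset.sum_congr rfl fun J hJ => ?_
  rw [Finset.sum_ite_mem, Finset.univ_inter, Finset.sum_const,
    (Finset.mem_powersetCard.mp hJ).2, nsmul_eq_mul]
  push_cast
  ring

lemma sum_subtype_card_le [Fintype ι] (p : ι → Prop) [DecidablePred p] (f : ι → ℝ) (c : ℕ) :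
    ∑ I ∈ (Finset.univ : Finset (Finset {k // p k})).filter (fun I => I.card ≤ c), ∏ k ∈ I, f k.1
      = ∑ J ∈ ((Finset.univ.filter p).powerset).filter (fun J => J.card ≤ c), ∏ k ∈ J, f k := by
  refine Finset.sum_nbij' (fun I => I.map (Function.Embedding.subtype p))
    (fun J => J.subtype p) ?_ ?_ ?_ ?_ ?_
  · intro I hI
    rw [Finset.mem_filter] at hI ⊢
    refine ⟨Finset.mem_powerset.mpr ?_, by rw [Finset.card_map]; exact hI.2⟩
    intro a ha
    obtain ⟨b, _, rfl⟩ := Finset.mem_map.mp ha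
    exact Finset.mem_filter.mpr ⟨Finset.mem_univ _, b.2⟩
  · intro J hJ
    rw [Finset.mem_filter, Finset.mem_powerset] at hJ
    rw [Finset.mem_filter]
    have hmem : ∀ a ∈ J, p a := fun a ha => (Finset.mem_filter.mp (hJ.1 ha)).2
    have hms : (J.subtype p).map (Function.Embedding.subtype p) = J :=
      Finset.subtype_map_of_mem hmem
    refine ⟨Finset.mem_univ _, ?_⟩
    calc (J.subtype p).card = ((J.subtype p).map (Function.Embedding.subtype p)).card :=
          (Finset.card_map _).symm
      _ = J.card := by rw [hms]
      _ ≤ c := hJ.2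
  · intro I _
    ext a
    simp only [Finset.mem_subtype, Finset.mem_map, Function.Embedding.coe_subtype]
    constructor
    · rintro ⟨b, hb, hba⟩
      rwa [show b = a from Subtype.ext hba] at hb
    · intro ha
      exact ⟨a, ha, rfl⟩
  · intro J hJ
    rw [Finset.mem_filter, Finset.mem_powerset] at hJ
    exact Finset.subtype_map_of_mem fun a ha => (Finset.mem_filter.mp (hJ.1 ha)).2
  · intro I _
    rw [Finset.prod_map]
    rfl

lemma sum_powerset_filter_card (s : Finset ι) (f : Finset ι → ℝ) (c : ℕ) :
    ∑ J ∈ s.powerset.filter (fun J => J.card ≤ c), f J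
      = ∑ j ∈ Finset.range (c + 1), ∑ J ∈ s.powersetCard j, f J := by
  simp_rw [Finset.powersetCard_eq_filter, Finset.sum_filter]
  rw [Finset.sum_comm]
  refine Finset.sum_congr rfl fun J _ => ?_
  rw [Finset.sum_ite_eq (Finset.range (c + 1)) J.card (fun _ => f J)]
  simp [Nat.lt_succ_iff]

lemma esum_scaled (s : Finset ι) (x : ι → ℝ) (t : ℝ) (j : ℕ) :
    ∑ J ∈ s.powersetCard j, ∏ k ∈ J, (t * x k) = E s j x * t ^ j := by
  rw [E, Finset.sum_mul]
  refine Finset.sum_congr rfl fun J hJ => ?_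
  rw [Finset.prod_mul_distrib, Finset.prod_const, (Finset.mem_powersetCard.mp hJ).2, mul_comm]

lemma bGamma_scaled_eq [Fintype ι] {b : ℕ} (hb : 1 ≤ b) (i : ι) (x : ι → ℝ) (t : ℝ) :
    t * bGamma b (fun k : {k : ι // k ≠ i} => t * x k.1)
      = (∑ j ∈ Finset.range b, E (Finset.univ.erase i) j x * t ^ (j + 1)) /
        (∑ j ∈ Finset.range (b + 1), E (Finset.univ.erase i) j x * t ^ j) := by
  have hfil : Finset.univ.filter (fun k : ι => k ≠ i) = Finset.univ.erase i :=
    Finset.filter_ne' Finset.univ i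
  rw [bGamma, sum_subtype_card_le (fun k : ι => k ≠ i) (fun k => t * x k) (b - 1),
    sum_subtype_card_le (fun k : ι => k ≠ i) (fun k => t * x k) b,
    sum_powerset_filter_card, sum_powerset_filter_card, hfil]
  have hb1 : b - 1 + 1 = b := by omega
  simp_rw [esum_scaled]
  rw [hb1, mul_div_assoc']
  congr 1
  rw [Finset.mul_sum]
  refine Finset.sum_congr rfl fun j _ => by ring

lemma ratio_shift (e : ℕ → ℝ) (b d : ℕ) :
    ∀ᶠ t : ℝ in atTop,
      (∑ j ∈ Finset.range b, e j * t ^ (j + 1)) / (∑ j ∈ Finset.range (b + 1), e j * t ^ j)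
        = (∑ j ∈ Finset.range b, e j * t ^ ((j : ℤ) + 1 - d)) /
          (∑ j ∈ Finset.range (b + 1), e j * t ^ ((j : ℤ) - d)) := by
  filter_upwards [eventually_ne_atTop (0 : ℝ)] with t ht
  have h1 : (∑ j ∈ Finset.range b, e j * t ^ (j + 1))
      = (∑ j ∈ Finset.range b, e j * t ^ ((j : ℤ) + 1 - d)) * t ^ (d : ℤ) := by
    rw [Finset.sum_mul]
    refine Finset.sum_congr rfl fun j _ => ?_
    rw [mul_assoc, ← zpow_add₀ ht,
      show (j : ℤ) + 1 - d + d = ((j + 1 : ℕ) : ℤ) by push_cast; ring, zpow_natCast]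
  have h2 : (∑ j ∈ Finset.range (b + 1), e j * t ^ j)
      = (∑ j ∈ Finset.range (b + 1), e j * t ^ ((j : ℤ) - d)) * t ^ (d : ℤ) := by
    rw [Finset.sum_mul]
    refine Finset.sum_congr rfl fun j _ => ?_
    rw [mul_assoc, ← zpow_add₀ ht,
      show (j : ℤ) - d + d = ((j : ℕ) : ℤ) by push_cast; ring, zpow_natCast]
  rw [h1, h2, mul_div_mul_right _ _ (zpow_ne_zero _ ht)]

lemma tendsto_ratio_finite {e : ℕ → ℝ} {b : ℕ} (hb : 1 ≤ b) (hpos : e b ≠ 0) :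
    Tendsto (fun t : ℝ =>
        (∑ j ∈ Finset.range b, e j * t ^ (j + 1)) / (∑ j ∈ Finset.range (b + 1), e j * t ^ j))
      atTop (nhds (e (b - 1) / e b)) := by
  have hnum : Tendsto (fun t : ℝ => ∑ j ∈ Finset.range b, e j * t ^ ((j : ℤ) + 1 - b)) atTop
      (nhds (e (b - 1))) := by
    have hsum : (∑ j ∈ Finset.range b, if j = b - 1 then e (b - 1) else 0) = e (b - 1) := by
      rw [Finset.sum_ite_eq' (Finset.range b) (b - 1) (fun _ => e (b - 1))]
      simp only [Finset.mem_range]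
      rw [if_pos (by omega)]
    rw [← hsum]
    refine tendsto_finset_sum _ fun j hj => ?_
    rw [Finset.mem_range] at hj
    by_cases h : j = b - 1
    · subst h
      have h0 : ((b - 1 : ℕ) : ℤ) + 1 - b = 0 := by omega
      simpa [h0] using tendsto_const_nhds
    · have hneg : (j : ℤ) + 1 - b < 0 := by omega
      simpa [h] using tendsto_const_mul_zpow_atTop_zero (c := e j) hneg
  have hden : Tendsto (fun t : ℝ => ∑ j ∈ Finset.range (b + 1), e j * t ^ ((j : ℤ) - b)) atTop
      (nhds (e b)) := by
    have hsum : (∑ j ∈ Finset.range (b + 1), if j = b then e b else 0) = e b := by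
      rw [Finset.sum_ite_eq' (Finset.range (b + 1)) b (fun _ => e b)]
      simp only [Finset.mem_range]
      rw [if_pos (by omega)]
    rw [← hsum]
    refine tendsto_finset_sum _ fun j hj => ?_
    rw [Finset.mem_range] at hj
    by_cases h : j = b
    · subst h
      have h0 : (j : ℤ) - j = 0 := by ring
      simpa [h0] using tendsto_const_nhds
    · have hneg : (j : ℤ) - b < 0 := by omega
      simpa [h] using tendsto_const_mul_zpow_atTop_zero (c := e j) hneg
  exact (hnum.div hden hpos).congr' ((ratio_shift e b b).mono fun t h => h.symm)

lemma tendsto_ratio_infinite {e : ℕ → ℝ} {b m : ℕ} (hm : m < b) (hpos : 0 < e m)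
    (hzero : ∀ j, m < j → e j = 0) :
    Tendsto (fun t : ℝ =>
        (∑ j ∈ Finset.range b, e j * t ^ (j + 1)) / (∑ j ∈ Finset.range (b + 1), e j * t ^ j))
      atTop atTop := by
  have hden : Tendsto (fun t : ℝ => ∑ j ∈ Finset.range (b + 1), e j * t ^ ((j : ℤ) - m)) atTop
      (nhds (e m)) := by
    have hsum : (∑ j ∈ Finset.range (b + 1), if j = m then e m else 0) = e m := by
      rw [Finset.sum_ite_eq' (Finset.range (b + 1)) m (fun _ => e m)]
      simp only [Finset.mem_range]
      rw [if_pos (by omega)]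
    rw [← hsum]
    refine tendsto_finset_sum _ fun j hj => ?_
    rw [Finset.mem_range] at hj
    rcases lt_trichotomy j m with h | h | h
    · have hneg : (j : ℤ) - m < 0 := by omega
      simpa [show j ≠ m by omega] using tendsto_const_mul_zpow_atTop_zero (c := e j) hneg
    · subst h
      have h0 : (j : ℤ) - j = 0 := by ring
      simpa [h0] using tendsto_const_nhds
    · simpa [hzero j h, show j ≠ m by omega] using tendsto_const_nhds (x := (0 : ℝ))
  set C : ℝ := ∑ j ∈ (Finset.range b).erase m, if j + 1 = m then e j else 0 with hC
  have hg : Tendsto (fun t : ℝ => ∑ j ∈ (Finset.range b).erase m, e j * t ^ ((j : ℤ) + 1 - m))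
      atTop (nhds C) := by
    refine tendsto_finset_sum _ fun j hj => ?_
    rw [Finset.mem_erase, Finset.mem_range] at hj
    rcases lt_trichotomy j m with h | h | h
    · by_cases h1 : j + 1 = m
      · have h0 : (j : ℤ) + 1 - m = 0 := by omega
        simpa [h0, h1] using tendsto_const_nhds
      · have hneg : (j : ℤ) + 1 - m < 0 := by omega
        simpa [h1] using tendsto_const_mul_zpow_atTop_zero (c := e j) hneg
    · exact absurd h hj.1
    · simpa [hzero j h, show ¬(j + 1 = m) by omega] using tendsto_const_nhds (x := (0 : ℝ))
  have hnum : Tendsto (fun t : ℝ => ∑ j ∈ Finset.range b, e j * t ^ ((j : ℤ) + 1 - m)) atTop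
      atTop := by
    have hsplit : ∀ t : ℝ, (∑ j ∈ Finset.range b, e j * t ^ ((j : ℤ) + 1 - m))
        = (∑ j ∈ (Finset.range b).erase m, e j * t ^ ((j : ℤ) + 1 - m)) + e m * t := by
      intro t
      rw [← Finset.sum_erase_add _ _ (Finset.mem_range.mpr hm)]
      congr 1
      rw [show (m : ℤ) + 1 - m = 1 by ring, zpow_one]
    refine Tendsto.congr (fun t => (hsplit t).symm) ?_
    refine tendsto_atTop_add_left_of_le' atTop (C - 1) ?_ ?_
    · exact hg.eventually_const_le (by linarith)
    · exact Tendsto.const_mul_atTop hpos tendsto_id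
  have hinv : Tendsto (fun t : ℝ =>
      (∑ j ∈ Finset.range (b + 1), e j * t ^ ((j : ℤ) - m))⁻¹) atTop (nhds (e m)⁻¹) :=
    hden.inv₀ (ne_of_gt hpos)
  have hmain := hnum.atTop_mul_pos (inv_pos.mpr hpos) hinv
  refine Tendsto.congr' ?_ hmain
  filter_upwards [ratio_shift e b m] with t ht
  rw [← div_eq_mul_inv, ← ht]

lemma ratio_simp2 {B A xi : ℝ} (hB : 0 < B) (hA : 0 ≤ A) (hxi : 0 ≤ xi) :
    xi * (A / B) / (1 + xi * (A / B)) = xi * A / (B + xi * A) := by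
  have h1 : (0 : ℝ) < 1 + xi * (A / B) := by positivity
  have h2 : (0 : ℝ) < B + xi * A := by
    have : 0 ≤ xi * A := mul_nonneg hxi hA
    linarith
  field_simp

end Stmt19Aux

open Stmt19Aux in
/-- for `x ∈ [0,1]^n`, with `y_i = lim_{t→∞} t Γ(t x_k : k ≠ i) ∈ (0,∞]`
(these limits exist), one has `Σ_{i : y_i < ∞} x_i y_i/(1 + x_i y_i) = b` if
`#{i : x_i > 0} > b`, and `= 0` otherwise. -/
theorem stmt19 (b : ℕ) (hb : 1 ≤ b) (n : ℕ) (x : Fin n → ℝ)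
    (hx : ∀ i, x i ∈ Set.Icc (0 : ℝ) 1) :
    ∃ y : Fin n → ℝ≥0∞,
      (∀ i : Fin n,
        Tendsto (fun t : ℝ =>
            ENNReal.ofReal (t * bGamma b (fun k : {k : Fin n // k ≠ i} => t * x k.1)))
          atTop (nhds (y i))) ∧
      (∀ i, 0 < y i) ∧
      (∑ i ∈ Finset.univ.filter (fun i => y i ≠ ⊤),
          x i * (y i).toReal / (1 + x i * (y i).toReal) =
        if b < (Finset.univ.filter (fun i => 0 < x i)).card then (b : ℝ) else 0) := by
  have hx0 : ∀ i, 0 ≤ x i := fun i => (hx i).1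
  refine ⟨fun i => if b ≤ ((Finset.univ.erase i).filter (fun k => 0 < x k)).card then
      ENNReal.ofReal (E (Finset.univ.erase i) (b - 1) x / E (Finset.univ.erase i) b x)
    else ⊤, ?_, ?_, ?_⟩
  · -- tendsto
    intro i
    beta_reduce
    have hF : ∀ t : ℝ, t * bGamma b (fun k : {k : Fin n // k ≠ i} => t * x k.1)
        = (∑ j ∈ Finset.range b, E (Finset.univ.erase i) j x * t ^ (j + 1)) /
          (∑ j ∈ Finset.range (b + 1), E (Finset.univ.erase i) j x * t ^ j) :=
      fun t => bGamma_scaled_eq hb i x t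
    by_cases hcase : b ≤ ((Finset.univ.erase i).filter (fun k => 0 < x k)).card
    · rw [if_pos hcase]
      have hEb : 0 < E (Finset.univ.erase i) b x := E_pos hx0 hcase
      have hreal := tendsto_ratio_finite (e := fun j => E (Finset.univ.erase i) j x) hb
        (ne_of_gt hEb)
      have hcomp := (ENNReal.continuous_ofReal.tendsto _).comp hreal
      refine Tendsto.congr ?_ hcomp
      intro t
      simp only [Function.comp_apply]
      rw [hF t]
    · rw [if_neg hcase]
      push_neg at hcase
      have hm0 : 0 < E (Finset.univ.erase i)
          (((Finset.univ.erase i).filter (fun k => 0 < x k)).card) x := E_pos hx0 le_rfl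
      have hzero : ∀ j, ((Finset.univ.erase i).filter (fun k => 0 < x k)).card < j →
          E (Finset.univ.erase i) j x = 0 := fun j hj => E_eq_zero hx0 hj
      have hreal := tendsto_ratio_infinite hcase hm0 hzero
      have hcomp := ENNReal.tendsto_ofReal_atTop.comp hreal
      refine Tendsto.congr ?_ hcomp
      intro t
      simp only [Function.comp_apply]
      rw [hF t]
  · -- positivity
    intro i
    beta_reduce
    by_cases hcase : b ≤ ((Finset.univ.erase i).filter (fun k => 0 < x k)).card
    · rw [if_pos hcase]
      refine ENNReal.ofReal_pos.mpr (div_pos (E_pos hx0 ?_) (E_pos hx0 hcase))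
      omega
    · rw [if_neg hcase]
      exact ENNReal.zero_lt_top
  · -- the sum
    beta_reduce
    have hfe : ∀ i : Fin n, (Finset.univ.erase i).filter (fun k => 0 < x k)
        = (Finset.univ.filter (fun k => 0 < x k)).erase i := fun i =>
      Finset.filter_erase _ _ _
    by_cases hNb : b < (Finset.univ.filter (fun i => 0 < x i)).card
    · rw [if_pos hNb]
      have hfin : ∀ i : Fin n, b ≤ ((Finset.univ.erase i).filter (fun k => 0 < x k)).card := by
        intro i
        rw [hfe i]
        by_cases hi : i ∈ Finset.univ.filter (fun k => 0 < x k)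
        · rw [Finset.card_erase_of_mem hi]; omega
        · rw [Finset.erase_eq_of_notMem hi]; omega
      have hfilter : (Finset.univ.filter (fun i : Fin n =>
          (if b ≤ ((Finset.univ.erase i).filter (fun k => 0 < x k)).card then
            ENNReal.ofReal (E (Finset.univ.erase i) (b - 1) x / E (Finset.univ.erase i) b x)
          else ⊤) ≠ ⊤)) = Finset.univ := by
        refine Finset.filter_true_of_mem fun i _ => ?_
        rw [if_pos (hfin i)]
        exact ENNReal.ofReal_ne_top
      rw [hfilter]
      have hEb : 0 < E (Finset.univ : Finset (Fin n)) b x := E_pos hx0 (le_of_lt hNb)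
      have hterm : ∀ i : Fin n,
          x i * ((if b ≤ ((Finset.univ.erase i).filter (fun k => 0 < x k)).card then
            ENNReal.ofReal (E (Finset.univ.erase i) (b - 1) x / E (Finset.univ.erase i) b x)
          else ⊤).toReal) /
          (1 + x i * ((if b ≤ ((Finset.univ.erase i).filter (fun k => 0 < x k)).card then
            ENNReal.ofReal (E (Finset.univ.erase i) (b - 1) x / E (Finset.univ.erase i) b x)
          else ⊤).toReal))
          = x i * E (Finset.univ.erase i) (b - 1) x / E (Finset.univ : Finset (Fin n)) b x := by
        intro i
        have hBi : 0 < E (Finset.univ.erase i) b x := E_pos hx0 (hfin i)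
        have hAi : 0 ≤ E (Finset.univ.erase i) (b - 1) x := E_nonneg hx0 _
        rw [if_pos (hfin i), ENNReal.toReal_ofReal (div_nonneg hAi (le_of_lt hBi))]
        have hsum : E (Finset.univ : Finset (Fin n)) b x
            = E (Finset.univ.erase i) b x + x i * E (Finset.univ.erase i) (b - 1) x := by
          have h := E_insert (Finset.notMem_erase i Finset.univ) x (b - 1)
          rw [show b - 1 + 1 = b from by omega, Finset.insert_erase (Finset.mem_univ i)] at h
          exact h
        rw [ratio_simp2 hBi hAi (hx0 i), ← hsum]
      rw [Finset.sum_congr rfl fun i _ => hterm i, ← Finset.sum_div]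
      have hid := sum_mul_E x (b - 1)
      rw [show b - 1 + 1 = b from by omega] at hid
      have hcast : ((b - 1 : ℕ) : ℝ) + 1 = (b : ℝ) := by
        rw [Nat.cast_sub hb]
        ring
      rw [hcast] at hid
      rw [hid, mul_div_cancel_right₀ _ (ne_of_gt hEb)]
    · rw [if_neg hNb]
      refine Finset.sum_eq_zero fun i hi => ?_
      rw [Finset.mem_filter] at hi
      have hble : b ≤ ((Finset.univ.erase i).filter (fun k => 0 < x k)).card := by
        by_contra h
        exact hi.2 (by rw [if_neg h])
      have hxi : x i = 0 := by
        by_contra h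
        have hxi' : 0 < x i := lt_of_le_of_ne (hx0 i) (Ne.symm h)
        have himem : i ∈ Finset.univ.filter (fun k : Fin n => 0 < x k) :=
          Finset.mem_filter.mpr ⟨Finset.mem_univ _, hxi'⟩
        have hN1 : 1 ≤ (Finset.univ.filter (fun k : Fin n => 0 < x k)).card :=
          Finset.card_pos.mpr ⟨i, himem⟩
        have hcard : ((Finset.univ.erase i).filter (fun k => 0 < x k)).card
            = (Finset.univ.filter (fun k : Fin n => 0 < x k)).card - 1 := by
          rw [hfe i, Finset.card_erase_of_mem himem]
        omega
      simp [hxi]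
end
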